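/- arXiv:1705.03294 — 9 statements merged into one kernel-verified Lean document; each statement's English description precedes it below -/
import Mathlib

section
/- Let n ≥ 2 and let X₁,…,X_n, X′₁,…,X′_n be i.i.d. copies of a centered square-integrable real random variable X, and let I be a random index, uniformly distributed on {1,…,n} and independent of (X₁,…,X_n,X′₁,…,X′_n). Let f : {1,…,n}² → ℝ be symmetric with f(i,i)=0 for all i, set Q = ∑_{1≤i<j≤n} f(i,j)·X_i·X_j, and let Q′ be obtained from Q by replacing X_I by X′_I, i.e. Q′ = ∑_{1≤i<j≤n, i≠I, j≠I} f(i,j)X_iX_j + ∑_{i<I} f(i,I)X_iX′_I + ∑_{j>I} f(I,j)X′_IX_j. Then, almost surely, E[Q − Q′ | σ(X₁,…,X_n)] = (2/n)·Q; consequently E[Q′ | σ(Q)] = (1 − 2/n)·Q almost surely, i.e. (Q,Q′) is a λ-Stein pair with λ = 2/n. -/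
open MeasureTheory ProbabilityTheory Filter
open scoped BigOperators NNReal ENNReal Topology

noncomputable section

lemma aux_int_mul {Ω : Type*} [MeasurableSpace Ω] {P : Measure Ω} {f g : Ω → ℝ}
    (hf : MemLp f 2 P) (hg : MemLp g 2 P) : Integrable (fun ω => f ω * g ω) P := by
  rw [← memLp_one_iff_integrable]
  have h := hg.smul (φ := f) hf (p := 2) (q := 2) (r := 1)
    (hpqr := ⟨by simp [one_div, ENNReal.inv_two_add_inv_two]⟩)
  exact h

lemma aux_pairsum {n : ℕ} (g : Fin n × Fin n → ℝ) :
    ∑ p ∈ Finset.univ.filter (fun p : Fin n × Fin n => p.1 < p.2), g p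
      = ∑ i, ∑ j, if i < j then g (i, j) else 0 := by
  rw [Finset.sum_filter, Fintype.sum_prod_type]

lemma aux_collapse {n : ℕ} (h : Fin n → Fin n → ℝ) (k : Fin n)
    (hz : ∀ i j, i ≠ k → j ≠ k → h i j = 0) (hkk : h k k = 0) :
    ∑ i, ∑ j, h i j = ∑ j, (h k j + h j k) := by
  have hrow : ∀ i, i ≠ k → (∑ j, h i j) = h i k := fun i hi =>
    Finset.sum_eq_single_of_mem k (Finset.mem_univ k) (fun j _ hj => hz i j hi hj)
  calc ∑ i, ∑ j, h i j
      = (∑ j, h k j) + ∑ i ∈ Finset.univ.erase k, ∑ j, h i j :=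
        (Finset.add_sum_erase _ _ (Finset.mem_univ k)).symm
    _ = (∑ j, h k j) + ∑ i ∈ Finset.univ.erase k, h i k := by
        refine congrArg _ (Finset.sum_congr rfl fun i hi => hrow i (Finset.ne_of_mem_erase hi))
    _ = (∑ j, h k j) + ∑ i, h i k := by rw [Finset.sum_erase (f := fun i => h i k) _ hkk]
    _ = ∑ j, (h k j + h j k) := (Finset.sum_add_distrib).symm

lemma aux_key {n : ℕ} (f : Fin n → Fin n → ℝ) (hfsym : ∀ i j, f i j = f j i)
    (hfdiag : ∀ i, f i i = 0) (x x' : Fin n → ℝ) (k : Fin n) :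
    ((∑ p ∈ Finset.univ.filter (fun p : Fin n × Fin n => p.1 < p.2), f p.1 p.2 * x p.1 * x p.2)
      - ∑ p ∈ Finset.univ.filter (fun p : Fin n × Fin n => p.1 < p.2),
          f p.1 p.2 * (if p.1 = k then x' p.1 else x p.1) * (if p.2 = k then x' p.2 else x p.2))
      = (x k - x' k) * ∑ j, f k j * x j := by
  set y : Fin n → ℝ := fun i => if i = k then x' i else x i with hy
  set h : Fin n → Fin n → ℝ :=
    fun i j => if i < j then f i j * (x i * x j - y i * y j) else 0 with hh
  have hstep : ((∑ p ∈ Finset.univ.filter (fun p : Fin n × Fin n => p.1 < p.2),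
        f p.1 p.2 * x p.1 * x p.2)
      - ∑ p ∈ Finset.univ.filter (fun p : Fin n × Fin n => p.1 < p.2),
          f p.1 p.2 * y p.1 * y p.2) = ∑ i, ∑ j, h i j := by
    rw [aux_pairsum, aux_pairsum, ← Finset.sum_sub_distrib]
    refine Finset.sum_congr rfl fun i _ => ?_
    rw [← Finset.sum_sub_distrib]
    refine Finset.sum_congr rfl fun j _ => ?_
    by_cases hij : i < j <;> simp [hh, hij] <;> ring
  have hz : ∀ i j, i ≠ k → j ≠ k → h i j = 0 := by
    intro i j hi hj; simp [hh, hy, hi, hj]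
  have hkk : h k k = 0 := by simp [hh]
  rw [hstep, aux_collapse h k hz hkk]
  have hterm : ∀ j, h k j + h j k = (x k - x' k) * (f k j * x j) := by
    intro j
    rcases lt_trichotomy j k with hlt | heq | hgt
    · have h1 : ¬ k < j := not_lt.mpr hlt.le
      have hne : j ≠ k := ne_of_lt hlt
      simp only [hh, hy, if_pos hlt, if_neg h1, if_neg hne, if_pos (rfl : k = k), if_true]
      rw [hfsym j k]; ring
    · subst heq; simp [hh, hfdiag]
    · have h1 : ¬ j < k := not_lt.mpr hgt.le
      have hne : j ≠ k := (ne_of_lt hgt).symm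
      simp only [hh, hy, if_pos hgt, if_neg h1, if_neg hne, if_pos (rfl : k = k), if_true]
      ring
  rw [Finset.sum_congr rfl fun j _ => hterm j, ← Finset.mul_sum]

lemma aux_double_count {n : ℕ} (f : Fin n → Fin n → ℝ) (hfsym : ∀ i j, f i j = f j i)
    (hfdiag : ∀ i, f i i = 0) (x : Fin n → ℝ) :
    ∑ k, x k * (∑ j, f k j * x j)
      = 2 * ∑ p ∈ Finset.univ.filter (fun p : Fin n × Fin n => p.1 < p.2),
          f p.1 p.2 * x p.1 * x p.2 := by
  rw [aux_pairsum]
  have hsplit : ∀ k, x k * (∑ j, f k j * x j)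
      = ∑ j, ((if k < j then f k j * x k * x j else 0)
          + (if j < k then f k j * x k * x j else 0)) := by
    intro k
    rw [Finset.mul_sum]
    refine Finset.sum_congr rfl fun j _ => ?_
    rcases lt_trichotomy k j with h | h | h
    · rw [if_pos h, if_neg (not_lt.mpr h.le)]; ring
    · subst h; simp [hfdiag]
    · rw [if_neg (not_lt.mpr h.le), if_pos h]; ring
  simp_rw [hsplit, Finset.sum_add_distrib]
  have h2 : (∑ k, ∑ j, (if j < k then f k j * x k * x j else 0))
      = ∑ k, ∑ j, (if k < j then f k j * x k * x j else 0) := by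
    rw [Finset.sum_comm]
    refine Finset.sum_congr rfl fun a _ => Finset.sum_congr rfl fun b _ => ?_
    by_cases hab : a < b
    · rw [if_pos hab, if_pos hab, hfsym b a]; ring
    · rw [if_neg hab, if_neg hab]
  rw [h2]; ring

theorem stmt8 {Ω : Type*} [MeasurableSpace Ω] (P : Measure Ω) [IsProbabilityMeasure P]
    (n : ℕ) (hn : 2 ≤ n)
    (X0 : Ω → ℝ) (hX0meas : Measurable X0) (hX0L2 : MemLp X0 2 P)
    (hX0cent : ∫ ω, X0 ω ∂P = 0)
    (X X' : Fin n → Ω → ℝ)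
    (hXmeas : ∀ i, Measurable (X i)) (hX'meas : ∀ i, Measurable (X' i))
    -- `X₁,…,X_n,X′₁,…,X′_n` are i.i.d. copies of `X0`
    (hiid : iIndepFun (Sum.elim X X' : Fin n ⊕ Fin n → Ω → ℝ) P)
    (hid : ∀ p : Fin n ⊕ Fin n, IdentDistrib (Sum.elim X X' p) X0 P P)
    -- `I` is uniform on `{1,…,n}` and independent of `(X, X')`
    (I : Ω → Fin n) (hImeas : Measurable I)
    (hIunif : ∀ i : Fin n, P (I ⁻¹' {i}) = (n : ℝ≥0∞)⁻¹)
    (hIindep : IndepFun I (fun ω => (fun p : Fin n ⊕ Fin n => Sum.elim X X' p ω)) P)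
    (f : Fin n → Fin n → ℝ) (hfsym : ∀ i j, f i j = f j i) (hfdiag : ∀ i, f i i = 0)
    (Q Q' : Ω → ℝ)
    (hQ : ∀ ω, Q ω = ∑ p ∈ Finset.univ.filter (fun p : Fin n × Fin n => p.1 < p.2),
        f p.1 p.2 * X p.1 ω * X p.2 ω)
    (hQ' : ∀ ω, Q' ω = ∑ p ∈ Finset.univ.filter (fun p : Fin n × Fin n => p.1 < p.2),
        f p.1 p.2 * (if p.1 = I ω then X' p.1 ω else X p.1 ω) *
          (if p.2 = I ω then X' p.2 ω else X p.2 ω)) :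
    (P[(fun ω => Q ω - Q' ω)|MeasurableSpace.comap (fun ω (i : Fin n) => X i ω) inferInstance]
        =ᵐ[P] fun ω => (2 / n : ℝ) * Q ω) ∧
    (P[Q'|MeasurableSpace.comap Q inferInstance]
        =ᵐ[P] fun ω => (1 - 2 / n : ℝ) * Q ω) := by
  classical
  rename_i mOm hProb
  have hn0 : (n : ℝ) ≠ 0 := by
    have h : 0 < n := lt_of_lt_of_le (by norm_num) hn
    exact_mod_cast h.ne'
  -- measurability of the various maps
  have hSumMeas : ∀ p : Fin n ⊕ Fin n, Measurable (Sum.elim X X' p) := by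
    rintro (i | i)
    exacts [hXmeas i, hX'meas i]
  have hXvmeas : Measurable (fun ω (i : Fin n) => X i ω) :=
    measurable_pi_lambda _ hXmeas
  have hJmeas : Measurable (fun ω (p : Fin n ⊕ Fin n) => Sum.elim X X' p ω) :=
    measurable_pi_lambda _ hSumMeas
  -- L² and mean facts
  have hL2 : ∀ p : Fin n ⊕ Fin n, MemLp (Sum.elim X X' p) 2 P :=
    fun p => (hid p).symm.memLp_snd hX0L2
  have hXL2 : ∀ i, MemLp (X i) 2 P := fun i => hL2 (Sum.inl i)
  have hX'L2 : ∀ i, MemLp (X' i) 2 P := fun i => hL2 (Sum.inr i)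
  have hX'mean : ∀ i, ∫ ω, X' i ω ∂P = 0 := fun i =>
    ((hid (Sum.inr i)).integral_eq).trans hX0cent
  set S : Fin n → Ω → ℝ := fun k ω => ∑ j, f k j * X j ω with hSdef
  have hSL2 : ∀ k, MemLp (S k) 2 P := by
    intro k
    have h := memLp_finsetSum' (p := 2) (μ := P) Finset.univ
      (f := fun j ω => f k j * X j ω) (fun j _ => (hXL2 j).const_mul (f k j))
    have heq : (∑ j : Fin n, (fun (j : Fin n) ω => f k j * X j ω) j) = S k := by
      funext ω; simp [hSdef, Finset.sum_apply]
    rwa [heq] at h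
  -- indicator of {I = k}
  set s : Fin n → Set Ω := fun k => I ⁻¹' {k} with hsdef
  have hsk : ∀ k, MeasurableSet (s k) := fun k => hImeas (measurableSet_singleton k)
  set ind : Fin n → Ω → ℝ := fun k => Set.indicator (s k) (fun _ => (1:ℝ)) with hinddef
  have hindInt : ∀ k, Integrable (ind k) P := fun k =>
    (integrable_const (1:ℝ)).indicator (hsk k)
  have hindIntegral : ∀ k, ∫ ω, ind k ω ∂P = (n : ℝ)⁻¹ := by
    intro k
    rw [hinddef]
    rw [integral_indicator_const (1:ℝ) (hsk k)]
    rw [hsdef]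
    simp only [smul_eq_mul, mul_one]
    rw [measureReal_def, hIunif k, ENNReal.toReal_inv]
    norm_num
  -- the two pieces
  set A : Fin n → Ω → ℝ := fun k => (fun ω => X k ω * S k ω) * ind k with hAdef
  set B : Fin n → Ω → ℝ := fun k => S k * ((X' k) * ind k) with hBdef
  have hAeq : ∀ k, A k = Set.indicator (s k) (fun ω => X k ω * S k ω) := by
    intro k; funext ω
    by_cases h : ω ∈ s k <;>
      simp [hAdef, hinddef, Set.indicator_of_mem, Set.indicator_of_notMem, h]
  have hBeq : ∀ k, B k = Set.indicator (s k) (fun ω => S k ω * X' k ω) := by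
    intro k; funext ω
    by_cases h : ω ∈ s k <;>
      simp [hBdef, hinddef, Set.indicator_of_mem, Set.indicator_of_notMem, h]
  have hAint : ∀ k, Integrable (A k) P := by
    intro k; rw [hAeq k]
    exact (aux_int_mul (hXL2 k) (hSL2 k)).indicator (hsk k)
  have hBint : ∀ k, Integrable (B k) P := by
    intro k; rw [hBeq k]
    exact (aux_int_mul (hSL2 k) (hX'L2 k)).indicator (hsk k)
  have hX'indInt : ∀ k, Integrable ((X' k) * ind k) P := by
    intro k
    have h : (X' k) * ind k = Set.indicator (s k) (X' k) := by
      funext ω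
      by_cases hm : ω ∈ s k <;>
        simp [hinddef, Set.indicator_of_mem, Set.indicator_of_notMem, hm]
    rw [h]
    exact ((hX'L2 k).integrable one_le_two).indicator (hsk k)
  have hABint : ∀ k, Integrable (A k - B k) P := fun k => (hAint k).sub (hBint k)
  -- pointwise identity : Q - Q' = ∑ k (A k - B k)
  have hpt : (fun ω => Q ω - Q' ω) = ∑ k, (A k - B k) := by
    funext ω
    have h1 : Q ω - Q' ω = (X (I ω) ω - X' (I ω) ω) * S (I ω) ω := by
      rw [hQ ω, hQ' ω]
      exact aux_key f hfsym hfdiag (fun i => X i ω) (fun i => X' i ω) (I ω)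
    have hterm : ∀ k, A k ω - B k ω
        = (if I ω = k then (1:ℝ) else 0) * ((X k ω - X' k ω) * S k ω) := by
      intro k
      have hik : ω ∈ s k ↔ I ω = k := by simp [hsdef]
      by_cases h : I ω = k
      · simp only [hAdef, hBdef, hinddef, Pi.mul_apply,
          Set.indicator_of_mem (hik.mpr h), if_pos h]
        ring
      · simp only [hAdef, hBdef, hinddef, Pi.mul_apply,
          Set.indicator_of_notMem (fun hc => h (hik.mp hc)), if_neg h]
        ring
    have h2 : (∑ k, (A k - B k)) ω = ∑ k, (A k ω - B k ω) := by
      simp [Finset.sum_apply]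
    rw [h2, Finset.sum_congr rfl fun k _ => hterm k]
    simp only [ite_mul, one_mul, zero_mul]
    rw [Finset.sum_ite_eq]
    simp [h1]
  -- integrability and measurability of Q, Q'
  have hφmeas : Measurable (fun v : Fin n → ℝ =>
      ∑ p ∈ Finset.univ.filter (fun p : Fin n × Fin n => p.1 < p.2),
        f p.1 p.2 * v p.1 * v p.2) := by
    apply Finset.measurable_sum
    intro p _
    exact ((measurable_const.mul (measurable_pi_apply p.1)).mul (measurable_pi_apply p.2))
  have hQcomp : Q = (fun v : Fin n → ℝ =>
      ∑ p ∈ Finset.univ.filter (fun p : Fin n × Fin n => p.1 < p.2),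
        f p.1 p.2 * v p.1 * v p.2) ∘ (fun ω (i : Fin n) => X i ω) := by
    funext ω; exact hQ ω
  have hQint : Integrable Q P := by
    rw [hQcomp]
    apply integrable_finset_sum
    intro p _
    have h := (aux_int_mul (hXL2 p.1) (hXL2 p.2)).const_mul (f p.1 p.2)
    simpa [Function.comp, mul_assoc] using h
  have hDint : Integrable (fun ω => Q ω - Q' ω) P := by
    rw [hpt]
    have h := integrable_finset_sum (μ := P) Finset.univ
      (fun k (_ : k ∈ Finset.univ) => hABint k)
    have heq : (∑ k, (A k - B k)) = fun a => ∑ i ∈ Finset.univ, (A i - B i) a := by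
      funext a; simp [Finset.sum_apply]
    rw [heq]; exact h
  have hQ'eq : Q' = Q - (fun ω => Q ω - Q' ω) := by
    funext ω; simp
  -- measurability with respect to the sub-σ-algebras
  have hXmX : ∀ k, Measurable[MeasurableSpace.comap (fun ω (i : Fin n) => X i ω)
      inferInstance] (X k) := by
    intro k
    have hbase : Measurable[MeasurableSpace.comap (fun ω (i : Fin n) => X i ω)
        inferInstance] (fun ω (i : Fin n) => X i ω) := Measurable.of_comap_le le_rfl
    exact (measurable_pi_apply k).comp hbase
  have hSmX : ∀ k, Measurable[MeasurableSpace.comap (fun ω (i : Fin n) => X i ω)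
      inferInstance] (S k) := by
    intro k
    exact Finset.measurable_sum _ (fun j _ => (measurable_const.mul (hXmX j)))
  have hX'mJ : ∀ k, Measurable[MeasurableSpace.comap
      (fun ω (p : Fin n ⊕ Fin n) => Sum.elim X X' p ω) inferInstance] (X' k) := by
    intro k
    have hbase : Measurable[MeasurableSpace.comap
        (fun ω (p : Fin n ⊕ Fin n) => Sum.elim X X' p ω) inferInstance]
        (fun ω (p : Fin n ⊕ Fin n) => Sum.elim X X' p ω) := Measurable.of_comap_le le_rfl
    exact (measurable_pi_apply (Sum.inr k)).comp hbase
  have hskI : ∀ k, MeasurableSet[MeasurableSpace.comap I inferInstance] (s k) :=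
    fun k => ⟨{k}, measurableSet_singleton k, rfl⟩
  have hindSM : ∀ k, StronglyMeasurable[MeasurableSpace.comap I inferInstance] (ind k) :=
    fun k => stronglyMeasurable_const.indicator (hskI k)
  -- ordering of σ-algebras
  have hmXle : MeasurableSpace.comap (fun ω (i : Fin n) => X i ω) inferInstance ≤ mOm :=
    hXvmeas.comap_le
  have hmJle : MeasurableSpace.comap (fun ω (p : Fin n ⊕ Fin n) => Sum.elim X X' p ω)
      inferInstance ≤ mOm := hJmeas.comap_le
  have hmXJ : MeasurableSpace.comap (fun ω (i : Fin n) => X i ω) inferInstance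
      ≤ MeasurableSpace.comap (fun ω (p : Fin n ⊕ Fin n) => Sum.elim X X' p ω)
        inferInstance := by
    have hfeq : (fun ω (i : Fin n) => X i ω)
        = (fun (g : Fin n ⊕ Fin n → ℝ) (i : Fin n) => g (Sum.inl i))
          ∘ (fun ω (p : Fin n ⊕ Fin n) => Sum.elim X X' p ω) := rfl
    rw [hfeq, ← MeasurableSpace.comap_comp]
    exact MeasurableSpace.comap_mono
      (measurable_pi_lambda _ fun i => measurable_pi_apply (Sum.inl i)).comap_le
  -- independence facts
  have hI_J : Indep (MeasurableSpace.comap I inferInstance)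
      (MeasurableSpace.comap (fun ω (p : Fin n ⊕ Fin n) => Sum.elim X X' p ω)
        inferInstance) P :=
    (IndepFun_iff_Indep _ _ _).mp hIindep
  have hI_X : Indep (MeasurableSpace.comap I inferInstance)
      (MeasurableSpace.comap (fun ω (i : Fin n) => X i ω) inferInstance) P := by
    have h1 : IndepFun I (fun ω (i : Fin n) => X i ω) P := by
      have h := hIindep.comp (φ := id)
        (ψ := fun (g : Fin n ⊕ Fin n → ℝ) (i : Fin n) => g (Sum.inl i))
        measurable_id (measurable_pi_lambda _ fun i => measurable_pi_apply (Sum.inl i))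
      exact h
    exact (IndepFun_iff_Indep _ _ _).mp h1
  have hX'k_X : ∀ k, Indep (MeasurableSpace.comap (X' k) inferInstance)
      (MeasurableSpace.comap (fun ω (i : Fin n) => X i ω) inferInstance) P := by
    intro k
    have h1 := hiid.indepFun_finset {Sum.inr k} (Finset.univ.image Sum.inl)
      (by simp) hSumMeas
    have h2 := h1.comp
      (φ := fun g : (({Sum.inr k} : Finset (Fin n ⊕ Fin n)) : Type _) → ℝ =>
        g ⟨Sum.inr k, Finset.mem_singleton_self _⟩)
      (ψ := fun (g : ((Finset.univ.image Sum.inl : Finset (Fin n ⊕ Fin n)) : Type _) → ℝ)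
        (i : Fin n) => g ⟨Sum.inl i, by simp⟩)
      (_mγ := inferInstance) (_mγ' := inferInstance)
      (measurable_pi_apply _) (measurable_pi_lambda _ fun i => measurable_pi_apply _)
    exact (IndepFun_iff_Indep _ _ _).mp h2
  -- now abbreviate the σ-algebras
  set mX := MeasurableSpace.comap (fun ω (i : Fin n) => X i ω) inferInstance with hmXdef
  set mJ := MeasurableSpace.comap
      (fun ω (p : Fin n ⊕ Fin n) => Sum.elim X X' p ω) inferInstance with hmJdef
  -- conditional expectations of the indicator
  have hcondI_X : ∀ k, P[ind k|mX] =ᵐ[P] fun _ => (n : ℝ)⁻¹ := by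
    intro k
    have h := condExp_indep_eq (μ := P) hImeas.comap_le hmXle (hindSM k) hI_X
    rw [hindIntegral k] at h
    exact h
  have hcondI_J : ∀ k, P[ind k|mJ] =ᵐ[P] fun _ => (n : ℝ)⁻¹ := by
    intro k
    have h := condExp_indep_eq (μ := P) hImeas.comap_le hmJle (hindSM k) hI_J
    rw [hindIntegral k] at h
    exact h
  have hcondX'_X : ∀ k, P[X' k|mX] =ᵐ[P] fun _ => (0 : ℝ) := by
    intro k
    have hsm : StronglyMeasurable[MeasurableSpace.comap (X' k) inferInstance] (X' k) :=
      (Measurable.of_comap_le le_rfl).stronglyMeasurable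
    have h := condExp_indep_eq (μ := P) (hX'meas k).comap_le hmXle hsm (hX'k_X k)
    rw [hX'mean k] at h
    exact h
  -- conditional expectation of A k
  have hA : ∀ k, P[A k|mX] =ᵐ[P] fun ω => (n : ℝ)⁻¹ * (X k ω * S k ω) := by
    intro k
    have hmul : P[A k|mX] =ᵐ[P] (fun ω => X k ω * S k ω) * P[ind k|mX] :=
      condExp_mul_of_stronglyMeasurable_left (μ := P) (m := mX)
        ((hXmX k).stronglyMeasurable.mul (hSmX k).stronglyMeasurable)
        (hAint k) (hindInt k)
    refine hmul.trans ?_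
    filter_upwards [hcondI_X k] with ω hω
    simp only [Pi.mul_apply, hω]
    ring
  -- conditional expectation of B k
  have hB : ∀ k, P[B k|mX] =ᵐ[P] fun _ => (0 : ℝ) := by
    intro k
    have hstep1 : P[(X' k) * ind k|mJ] =ᵐ[P] fun ω => (n : ℝ)⁻¹ * X' k ω := by
      have hmul := condExp_mul_of_stronglyMeasurable_left (μ := P) (m := mJ)
        (hX'mJ k).stronglyMeasurable (hX'indInt k) (hindInt k)
      refine hmul.trans ?_
      filter_upwards [hcondI_J k] with ω hω
      simp only [Pi.mul_apply, hω]
      ring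
    have hstep2 : P[(X' k) * ind k|mX] =ᵐ[P] fun _ => (0 : ℝ) := by
      have htower : P[(X' k) * ind k|mX] =ᵐ[P] P[P[(X' k) * ind k|mJ]|mX] :=
        (condExp_condExp_of_le hmXJ hmJle).symm
      refine htower.trans ?_
      refine (condExp_congr_ae hstep1).trans ?_
      have hsmul : P[fun ω => (n : ℝ)⁻¹ * X' k ω|mX]
          =ᵐ[P] (n : ℝ)⁻¹ • P[X' k|mX] := by
        have h := condExp_smul (μ := P) (m := mX) ((n : ℝ)⁻¹) (X' k)
        exact h
      refine hsmul.trans ?_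
      filter_upwards [hcondX'_X k] with ω hω
      simp [hω]
    have hmul : P[B k|mX] =ᵐ[P] S k * P[(X' k) * ind k|mX] :=
      condExp_mul_of_stronglyMeasurable_left (μ := P) (m := mX)
        (hSmX k).stronglyMeasurable (hBint k) (hX'indInt k)
    refine hmul.trans ?_
    filter_upwards [hstep2] with ω hω
    simp [hω]
  -- Part 1
  have hpart1 : P[(fun ω => Q ω - Q' ω)|mX] =ᵐ[P] fun ω => (2 / n : ℝ) * Q ω := by
    rw [hpt]
    have hsum := condExp_finsetSum (μ := P) (m := mX) (s := Finset.univ)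
      (f := fun k => A k - B k) (fun k _ => hABint k)
    refine hsum.trans ?_
    have hk : ∀ k : Fin n, P[A k - B k|mX]
        =ᵐ[P] fun ω => (n : ℝ)⁻¹ * (X k ω * S k ω) := by
      intro k
      refine (condExp_sub (hAint k) (hBint k) _).trans ?_
      filter_upwards [hA k, hB k] with ω hωA hωB
      simp only [Pi.sub_apply, hωA, hωB]
      ring
    have hall : ∀ᵐ ω ∂P, ∀ k : Fin n, (P[A k - B k|mX]) ω
        = (n : ℝ)⁻¹ * (X k ω * S k ω) := ae_all_iff.mpr hk
    filter_upwards [hall] with ω hω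
    have happ : (∑ k, P[A k - B k|mX]) ω = ∑ k, (P[A k - B k|mX]) ω := by
      simp [Finset.sum_apply]
    rw [happ, Finset.sum_congr rfl fun k _ => hω k, ← Finset.mul_sum]
    have hSsum : ∑ k, X k ω * S k ω = 2 * Q ω := by
      rw [hQ ω]; exact aux_double_count f hfsym hfdiag (fun i => X i ω)
    rw [hSsum]
    field_simp
  refine ⟨hpart1, ?_⟩
  -- Part 2
  have hmQX : MeasurableSpace.comap Q inferInstance ≤ mX := by
    rw [hmXdef, hQcomp, ← MeasurableSpace.comap_comp]
    exact MeasurableSpace.comap_mono hφmeas.comap_le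
  set mQ := MeasurableSpace.comap Q inferInstance with hmQdef
  have hmQ : mQ ≤ mOm := hmQX.trans hmXle
  have hQmQ : StronglyMeasurable[mQ] Q :=
    (Measurable.of_comap_le le_rfl).stronglyMeasurable
  have hcondQ : P[Q|mQ] = Q := condExp_of_stronglyMeasurable hmQ hQmQ hQint
  have hcondD : P[(fun ω => Q ω - Q' ω)|mQ] =ᵐ[P] fun ω => (2 / n : ℝ) * Q ω := by
    have htower : P[(fun ω => Q ω - Q' ω)|mQ]
        =ᵐ[P] P[P[(fun ω => Q ω - Q' ω)|mX]|mQ] := (condExp_condExp_of_le hmQX hmXle).symm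
    refine htower.trans ?_
    refine (condExp_congr_ae hpart1).trans ?_
    have hsmul : P[fun ω => (2 / n : ℝ) * Q ω|mQ] =ᵐ[P] (2 / n : ℝ) • P[Q|mQ] := by
      have h := condExp_smul (μ := P) (m := mQ) ((2 / n : ℝ)) Q
      exact h
    refine hsmul.trans ?_
    rw [hcondQ]
    filter_upwards with ω
    simp
  calc P[Q'|mQ] = P[Q - (fun ω => Q ω - Q' ω)|mQ] := by rw [← hQ'eq]
    _ =ᵐ[P] fun ω => (1 - 2 / n : ℝ) * Q ω := by
        refine (condExp_sub hQint hDint _).trans ?_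
        filter_upwards [hcondD] with ω hω
        rw [Pi.sub_apply, hcondQ, hω]
        ring
end
end

section
/- Let d ≥ 2, n ≥ 1, and let f : {1,…,n}^d → ℝ be symmetric under permutations of its arguments and vanishing on diagonals. Then ‖f ⌢_{d−1} f‖ ≥ (1/d)·τ(f), where τ(f) = max_{1≤i≤n} Inf_i(f). Moreover, if d = 2, then ‖f ⌢_1 f − f‖ ≥ (1/2)·τ(f). -/
open MeasureTheory ProbabilityTheory Filter
open scoped BigOperators NNReal ENNReal Topology

noncomputable section

/-- The contraction `f ⌢_q g`, as a function of the two remaining blocks of variables. -/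
def contraction (n d p q : ℕ) (f : (Fin d → Fin n) → ℝ) (g : (Fin p → Fin n) → ℝ)
    (t : Fin (d - q) → Fin n) (s : Fin (p - q) → Fin n) : ℝ :=
  ∑ i : Fin q → Fin n,
    f (fun l =>
      if hl : (l : ℕ) < d - q then t ⟨(l : ℕ), hl⟩
      else i ⟨(l : ℕ) - (d - q), by have := l.isLt; omega⟩) *
    g (fun l =>
      if hl : (l : ℕ) < q then i ⟨q - 1 - (l : ℕ), by omega⟩
      else s ⟨(l : ℕ) - q, by have := l.isLt; omega⟩)

/-- The `L²` norm `‖f ⌢_q g‖` of the contraction. -/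
def contrNorm (n d p q : ℕ) (f : (Fin d → Fin n) → ℝ) (g : (Fin p → Fin n) → ℝ) : ℝ :=
  Real.sqrt (∑ t : Fin (d - q) → Fin n, ∑ s : Fin (p - q) → Fin n,
    contraction n d p q f g t s ^ 2)

/-- The star contraction `f ⋆_r^{r-1} g`, as a function of the two remaining blocks of
variables and of the repeated variable `γ`. -/
def starContraction (n d p r : ℕ) (f : (Fin d → Fin n) → ℝ) (g : (Fin p → Fin n) → ℝ)
    (t : Fin (d - r) → Fin n) (γ : Fin n) (s : Fin (p - r) → Fin n) : ℝ :=
  ∑ i : Fin (r - 1) → Fin n,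
    f (fun l =>
      if h1 : (l : ℕ) < d - r then t ⟨(l : ℕ), h1⟩
      else if h2 : (l : ℕ) = d - r then γ
      else i ⟨(l : ℕ) - (d - r) - 1, by have := l.isLt; omega⟩) *
    g (fun l =>
      if h1 : (l : ℕ) < r - 1 then i ⟨r - 1 - 1 - (l : ℕ), by omega⟩
      else if h2 : (l : ℕ) = r - 1 then γ
      else s ⟨(l : ℕ) - r, by have := l.isLt; omega⟩)

/-- The `L²` norm `‖f ⋆_r^{r-1} g‖` of the star contraction. -/
def starNorm (n d p r : ℕ) (f : (Fin d → Fin n) → ℝ) (g : (Fin p → Fin n) → ℝ) : ℝ :=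
  Real.sqrt (∑ t : Fin (d - r) → Fin n, ∑ γ : Fin n, ∑ s : Fin (p - r) → Fin n,
    starContraction n d p r f g t γ s ^ 2)

/-- The `j`-th influence `Inf_j(f) = ∑_{l=1}^d ∑ f(…,j at position l,…)²`. -/
def influenceGen (n d : ℕ) (f : (Fin d → Fin n) → ℝ) (j : Fin n) : ℝ :=
  ∑ l : Fin d, ∑ i ∈ Finset.univ.filter (fun i : Fin d → Fin n => i l = j), f i ^ 2

/-- `τ(f)`, the maximal influence. -/
def tauGen (n d : ℕ) (f : (Fin d → Fin n) → ℝ) : ℝ :=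
  ⨆ j : Fin n, influenceGen n d f j

def Fv (n d : ℕ) (j : Fin n) (i : Fin (d-1) → Fin n) : Fin d → Fin n :=
  fun l => if h : (l:ℕ) < 1 then j else i ⟨(l:ℕ) - 1, by have := l.isLt; omega⟩

lemma keyA (n d : ℕ) (hd : 2 ≤ d) (f : (Fin d → Fin n) → ℝ)
    (hsym : ∀ (σ : Equiv.Perm (Fin d)) (i : Fin d → Fin n), f (i ∘ σ) = f i) (j : Fin n) :
    contraction n d d (d-1) f f (fun _ => j) (fun _ => j)
      = ∑ i : Fin (d-1) → Fin n, f (Fv n d j i) ^ 2 := by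
  have hσinv : Function.Involutive (fun l : Fin d => (⟨d - 1 - (l:ℕ), by omega⟩ : Fin d)) := by
    intro l; have := l.isLt; apply Fin.ext; simp; omega
  set σ : Equiv.Perm (Fin d) := Function.Involutive.toPerm _ hσinv with hσ
  unfold contraction
  refine Finset.sum_congr rfl fun i _ => ?_
  have hA : (fun l : Fin d =>
      if hl : (l:ℕ) < d - (d-1) then (fun _ : Fin (d-(d-1)) => j) ⟨(l:ℕ), hl⟩
      else i ⟨(l:ℕ) - (d - (d-1)), by have := l.isLt; omega⟩)
      = Fv n d j i := by
    funext l
    by_cases h : (l:ℕ) < 1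
    · rw [dif_pos (by omega : (l:ℕ) < d - (d-1))]
      simp only [Fv]; rw [dif_pos h]
    · rw [dif_neg (by omega : ¬ (l:ℕ) < d - (d-1))]
      simp only [Fv]; rw [dif_neg h]
      exact congrArg i (Fin.ext (by simp; omega))
  have hB : (fun l : Fin d =>
      if hl : (l:ℕ) < d - 1 then i ⟨d - 1 - 1 - (l:ℕ), by omega⟩
      else (fun _ : Fin (d-(d-1)) => j) ⟨(l:ℕ) - (d-1), by have := l.isLt; omega⟩)
      = (Fv n d j i) ∘ σ := by
    funext l
    have hl := l.isLt
    have hσl : ((σ l : Fin d) : ℕ) = d - 1 - (l:ℕ) := by rw [hσ]; simp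
    by_cases h : (l:ℕ) < d - 1
    · rw [dif_pos h]
      simp only [Function.comp, Fv]
      rw [dif_neg (by omega : ¬ ((σ l : Fin d) : ℕ) < 1)]
      exact congrArg i (Fin.ext (by simp [hσl]; omega))
    · rw [dif_neg h]
      simp only [Function.comp, Fv]
      rw [dif_pos (by omega : ((σ l : Fin d) : ℕ) < 1)]
  rw [hA, hB, hsym σ (Fv n d j i), sq]

lemma keyB (n d : ℕ) (hd : 2 ≤ d) (f : (Fin d → Fin n) → ℝ)
    (hsym : ∀ (σ : Equiv.Perm (Fin d)) (i : Fin d → Fin n), f (i ∘ σ) = f i) (j0 : Fin n) :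
    influenceGen n d f j0 = d * ∑ i : Fin (d-1) → Fin n, f (Fv n d j0 i) ^ 2 := by
  have hz : (0:ℕ) < d := by omega
  set z : Fin d := ⟨0, hz⟩ with hzdef
  have hA0 : ∀ l : Fin d,
      (∑ i ∈ Finset.univ.filter (fun i : Fin d → Fin n => i l = j0), f i ^ 2)
      = ∑ i ∈ Finset.univ.filter (fun i : Fin d → Fin n => i z = j0), f i ^ 2 := by
    intro l
    refine Finset.sum_nbij' (fun a => a ∘ Equiv.swap l z) (fun a => a ∘ Equiv.swap l z)
      ?_ ?_ ?_ ?_ ?_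
    · intro a ha
      simp only [Finset.mem_filter, Finset.mem_univ, true_and] at ha ⊢
      simpa [Function.comp] using ha
    · intro a ha
      simp only [Finset.mem_filter, Finset.mem_univ, true_and] at ha ⊢
      simpa [Function.comp] using ha
    · intro a _; funext k; simp [Function.comp]
    · intro a _; funext k; simp [Function.comp]
    · intro a _
      rw [hsym (Equiv.swap l z) a]
  have htail : ∀ a ∈ Finset.univ.filter (fun i : Fin d → Fin n => i z = j0),
      Fv n d j0 (fun k : Fin (d-1) => a ⟨(k:ℕ)+1, by have := k.isLt; omega⟩) = a := by
    intro a ha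
    simp only [Finset.mem_filter, Finset.mem_univ, true_and] at ha
    funext l
    by_cases h : (l:ℕ) < 1
    · simp only [Fv]; rw [dif_pos h]
      have : l = z := Fin.ext (by simp [hzdef]; omega)
      rw [this, ha]
    · simp only [Fv]; rw [dif_neg h]
      exact congrArg a (Fin.ext (by simp; omega))
  have h2 : (∑ i ∈ Finset.univ.filter (fun i : Fin d → Fin n => i z = j0), f i ^ 2)
      = ∑ i : Fin (d-1) → Fin n, f (Fv n d j0 i) ^ 2 := by
    refine Finset.sum_nbij' (fun a => fun k : Fin (d-1) => a ⟨(k:ℕ)+1, by have := k.isLt; omega⟩)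
      (fun i' => Fv n d j0 i') ?_ ?_ ?_ ?_ ?_
    · intro a _; exact Finset.mem_univ _
    · intro i' _
      simp only [Finset.mem_filter, Finset.mem_univ, true_and, Fv, hzdef]
      rw [dif_pos (by norm_num)]
    · exact htail
    · intro i' _
      funext k
      simp only [Fv]
      rw [dif_neg (by omega : ¬ ((k:ℕ)+1) < 1)]
      exact congrArg i' (Fin.ext (by simp))
    · intro a ha
      rw [htail a ha]
  unfold influenceGen
  rw [Finset.sum_congr rfl (fun l _ => hA0 l), Finset.sum_const, Finset.card_univ,
    Fintype.card_fin, nsmul_eq_mul, h2]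

lemma keyTau (n d : ℕ) (hn : 1 ≤ n) (f : (Fin d → Fin n) → ℝ) :
    ∃ j0 : Fin n, (⨆ j : Fin n, influenceGen n d f j) = influenceGen n d f j0 := by
  have : Nonempty (Fin n) := ⟨⟨0, by omega⟩⟩
  obtain ⟨j0, hj0⟩ := Finite.exists_max (influenceGen n d f)
  refine ⟨j0, le_antisymm (ciSup_le hj0) (le_ciSup (Set.Finite.bddAbove (Set.finite_range _)) j0)⟩

theorem stmt9_aux (n d : ℕ) (hd : 2 ≤ d) (hn : 1 ≤ n)
    (f : (Fin d → Fin n) → ℝ)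
    (hsym : ∀ (σ : Equiv.Perm (Fin d)) (i : Fin d → Fin n), f (i ∘ σ) = f i)
    (hdiag : ∀ i : Fin d → Fin n, ¬ Function.Injective i → f i = 0) :
    (1 / d : ℝ) * (⨆ j : Fin n, influenceGen n d f j) ≤
      Real.sqrt (∑ t : Fin (d - (d-1)) → Fin n, ∑ s : Fin (d - (d-1)) → Fin n,
        contraction n d d (d-1) f f t s ^ 2) ∧
    (d = 2 →
      (1 / 2 : ℝ) * (⨆ j : Fin n, influenceGen n d f j) ≤
        Real.sqrt (∑ t : Fin (d - 1) → Fin n, ∑ s : Fin (d - 1) → Fin n,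
          (contraction n d d 1 f f t s -
            f (fun l =>
              if hl : (l : ℕ) < d - 1 then t ⟨(l : ℕ), hl⟩
              else s ⟨(l : ℕ) - (d - 1), by omega⟩)) ^ 2)) := by
  obtain ⟨j0, hj0⟩ := keyTau n d hn f
  set S0 : ℝ := ∑ i : Fin (d-1) → Fin n, f (Fv n d j0 i) ^ 2 with hS0
  have hSnn : 0 ≤ S0 := Finset.sum_nonneg fun _ _ => sq_nonneg _
  have htau : (⨆ j : Fin n, influenceGen n d f j) = d * S0 := by
    rw [hj0, keyB n d hd f hsym j0]
  have hdpos : (0:ℝ) < (d:ℝ) := by exact_mod_cast (by omega : 0 < d)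
  constructor
  · have hstep : (1/d : ℝ) * (⨆ j : Fin n, influenceGen n d f j) = S0 := by
      rw [htau]; field_simp
    rw [hstep]
    have hc : contraction n d d (d-1) f f (fun _ => j0) (fun _ => j0) = S0 :=
      keyA n d hd f hsym j0
    have h2 : contraction n d d (d-1) f f (fun _ => j0) (fun _ => j0) ^ 2
        ≤ ∑ s : Fin (d-(d-1)) → Fin n, contraction n d d (d-1) f f (fun _ => j0) s ^ 2 :=
      Finset.single_le_sum
        (f := fun s => contraction n d d (d-1) f f (fun _ => j0) s ^ 2)
        (fun s _ => sq_nonneg _) (Finset.mem_univ _)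
    have h1 : (∑ s : Fin (d-(d-1)) → Fin n, contraction n d d (d-1) f f (fun _ => j0) s ^ 2)
        ≤ ∑ t : Fin (d-(d-1)) → Fin n, ∑ s : Fin (d-(d-1)) → Fin n,
            contraction n d d (d-1) f f t s ^ 2 :=
      Finset.single_le_sum
        (f := fun t => ∑ s : Fin (d-(d-1)) → Fin n, contraction n d d (d-1) f f t s ^ 2) (fun t _ => Finset.sum_nonneg fun s _ => sq_nonneg _)
        (Finset.mem_univ _)
    calc S0 = Real.sqrt (S0 ^ 2) := (Real.sqrt_sq hSnn).symm
      _ ≤ _ := Real.sqrt_le_sqrt (by rw [← hc]; linarith)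
  · intro hd2; subst hd2
    set D : (Fin (2-1) → Fin n) → (Fin (2-1) → Fin n) → ℝ := fun t s =>
      contraction n 2 2 1 f f t s -
        f (fun l =>
          if hl : (l : ℕ) < 2 - 1 then t ⟨(l : ℕ), hl⟩
          else s ⟨(l : ℕ) - (2 - 1), by have := l.isLt; omega⟩) with hD
    have hconst : (fun l : Fin 2 =>
        if hl : (l : ℕ) < 2 - 1 then (fun _ : Fin (2-1) => j0) ⟨(l : ℕ), hl⟩
        else (fun _ : Fin (2-1) => j0) ⟨(l : ℕ) - (2 - 1), by have := l.isLt; omega⟩)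
        = fun _ : Fin 2 => j0 := by
      funext l; split <;> rfl
    have hf0 : f (fun _ : Fin 2 => j0) = 0 := by
      apply hdiag
      intro hinj
      have : (0 : Fin 2) = 1 := hinj rfl
      exact absurd this (by decide)
    have hc : D (fun _ => j0) (fun _ => j0) = S0 := by
      rw [hD]
      simp only
      rw [hconst, hf0, sub_zero]
      exact keyA n 2 hd f hsym j0
    have hstep : (1/2 : ℝ) * (⨆ j : Fin n, influenceGen n 2 f j) = S0 := by
      rw [htau]; push_cast; ring
    rw [hstep]
    have h2 : D (fun _ => j0) (fun _ => j0) ^ 2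
        ≤ ∑ s : Fin (2-1) → Fin n, D (fun _ => j0) s ^ 2 :=
      Finset.single_le_sum (f := fun s => D (fun _ => j0) s ^ 2)
        (fun s _ => sq_nonneg _) (Finset.mem_univ _)
    have h1 : (∑ s : Fin (2-1) → Fin n, D (fun _ => j0) s ^ 2)
        ≤ ∑ t : Fin (2-1) → Fin n, ∑ s : Fin (2-1) → Fin n, D t s ^ 2 :=
      Finset.single_le_sum
        (f := fun t => ∑ s : Fin (2-1) → Fin n, D t s ^ 2) (fun t _ => Finset.sum_nonneg fun s _ => sq_nonneg _)
        (Finset.mem_univ _)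
    calc S0 = Real.sqrt (S0 ^ 2) := (Real.sqrt_sq hSnn).symm
      _ ≤ _ := Real.sqrt_le_sqrt (by rw [← hc]; linarith)


theorem stmt9 (n d : ℕ) (hd : 2 ≤ d) (hn : 1 ≤ n)
    (f : (Fin d → Fin n) → ℝ)
    (hsym : ∀ (σ : Equiv.Perm (Fin d)) (i : Fin d → Fin n), f (i ∘ σ) = f i)
    (hdiag : ∀ i : Fin d → Fin n, ¬ Function.Injective i → f i = 0) :
    (1 / d : ℝ) * tauGen n d f ≤ contrNorm n d d (d - 1) f f ∧
    (d = 2 →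
      (1 / 2 : ℝ) * tauGen n d f ≤
        Real.sqrt (∑ t : Fin (d - 1) → Fin n, ∑ s : Fin (d - 1) → Fin n,
          (contraction n d d 1 f f t s -
            f (fun l =>
              if hl : (l : ℕ) < d - 1 then t ⟨(l : ℕ), hl⟩
              else s ⟨(l : ℕ) - (d - 1), by have := l.isLt; omega⟩)) ^ 2)) :=
  stmt9_aux n d hd hn f hsym hdiag
end
end

section
/- Let d ≥ 2, n ≥ 1, and let f : {1,…,n}^d → ℝ be an admissible kernel (mirror symmetric, vanishing on diagonals, with ∑ f² = 1). Then for every q = 1,…,d−1 one has ‖f ⌢_q f‖ ≥ ‖f ⋆_{q+1}^{q} f‖, and moreover ‖f ⌢_{d−1} f‖ ≥ ‖f ⋆_1^0 f‖. -/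
open MeasureTheory ProbabilityTheory Filter
open scoped BigOperators NNReal ENNReal Topology

noncomputable section

private lemma sum_le_sum_inj' {α β : Type*} [Fintype α] [Fintype β] {e : α → β}
    (he : Function.Injective e) (F : β → ℝ) (hF : ∀ b, 0 ≤ F b) :
    ∑ a, F (e a) ≤ ∑ b, F b := by
  classical
  refine le_trans (le_of_eq (Finset.sum_map Finset.univ ⟨e, he⟩ F).symm) ?_
  exact Finset.sum_le_sum_of_subset_of_nonneg (Finset.subset_univ _) (fun b _ _ => hF b)

private def Gfun' (n d : ℕ) (f : (Fin d → Fin n) → ℝ) (x : Fin n)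
    (i : Fin (d - 1) → Fin n) : ℝ :=
  f (fun l => if h : (l : ℕ) = 0 then x else i ⟨(l : ℕ) - 1, by have := l.isLt; omega⟩)

section partAux
variable (n d : ℕ) (hd : 2 ≤ d) (f : (Fin d → Fin n) → ℝ)
    (hmirror : ∀ i : Fin d → Fin n, f (i ∘ Fin.rev) = f i)

include hd hmirror in
private lemma L1' (t : Fin (d - 1) → Fin n) (γ : Fin n) (s : Fin (d - 1) → Fin n) :
    starContraction n d d 1 f f t γ s
      = Gfun' n d f γ (fun m => t (Fin.rev m)) * Gfun' n d f γ s := by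
  unfold starContraction
  haveI : IsEmpty (Fin (1 - 1)) := ⟨fun x => absurd x.isLt (by omega)⟩
  rw [Fintype.sum_subsingleton _ (isEmptyElim : Fin (1 - 1) → Fin n)]
  congr 1
  case e_a =>
    unfold Gfun'
    rw [← hmirror]
    congr 1
    funext l
    simp only [Function.comp_apply, Fin.val_rev]
    have hl := l.isLt
    by_cases h1 : (l : ℕ) = 0
    · rw [dif_neg (by omega : ¬ d - ((l:ℕ) + 1) < d - 1),
        dif_pos (by omega : d - ((l:ℕ) + 1) = d - 1), dif_pos h1]
    · rw [dif_pos (by omega : d - ((l:ℕ) + 1) < d - 1), dif_neg h1]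
      congr 1
      apply Fin.ext
      simp only [Fin.val_mk, Fin.val_rev]
      omega

include hd hmirror in
private lemma L2' (γ : Fin n) :
    contraction n d d (d - 1) f f (fun _ => γ) (fun _ => γ)
      = ∑ i : Fin (d - 1) → Fin n, Gfun' n d f γ i ^ 2 := by
  unfold contraction
  refine Finset.sum_congr rfl fun i _ => ?_
  rw [sq]
  congr 1
  · unfold Gfun'
    congr 1
    funext l
    have hl := l.isLt
    by_cases h1 : (l : ℕ) = 0
    · rw [dif_pos (by omega : (l : ℕ) < d - (d - 1)), dif_pos h1]
    · rw [dif_neg (by omega : ¬ (l : ℕ) < d - (d - 1)), dif_neg h1]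
      congr 1
      apply Fin.ext
      simp only [Fin.val_mk]
      omega
  · unfold Gfun'
    rw [← hmirror]
    congr 1
    funext l
    simp only [Function.comp_apply, Fin.val_rev]
    have hl := l.isLt
    by_cases h1 : (l : ℕ) = 0
    · rw [dif_neg (by omega : ¬ d - ((l:ℕ) + 1) < d - 1), dif_pos h1]
    · rw [dif_pos (by omega : d - ((l:ℕ) + 1) < d - 1), dif_neg h1]
      congr 1
      apply Fin.ext
      simp only [Fin.val_mk]
      omega

include hd hmirror in
private lemma P2' : starNorm n d d 1 f f ≤ contrNorm n d d (d - 1) f f := by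
  unfold starNorm contrNorm
  apply Real.sqrt_le_sqrt
  have hrev : ∀ γ : Fin n,
      (∑ t : Fin (d - 1) → Fin n, Gfun' n d f γ (fun m => t (Fin.rev m)) ^ 2)
      = ∑ i : Fin (d - 1) → Fin n, Gfun' n d f γ i ^ 2 := fun γ =>
    Fintype.sum_bijective (fun (t : Fin (d - 1) → Fin n) => fun m => t (Fin.rev m))
      (Function.Involutive.bijective (fun t => by funext m; simp [Fin.rev_rev]))
      _ _ (fun t => rfl)
  have lhs_eq : (∑ t : Fin (d - 1) → Fin n, ∑ γ : Fin n, ∑ s : Fin (d - 1) → Fin n,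
      starContraction n d d 1 f f t γ s ^ 2)
      = ∑ γ : Fin n, (∑ i : Fin (d - 1) → Fin n, Gfun' n d f γ i ^ 2) ^ 2 := by
    rw [Finset.sum_comm]
    refine Finset.sum_congr rfl fun γ _ => ?_
    calc (∑ t : Fin (d - 1) → Fin n, ∑ s : Fin (d - 1) → Fin n,
          starContraction n d d 1 f f t γ s ^ 2)
        = ∑ t : Fin (d - 1) → Fin n, ∑ s : Fin (d - 1) → Fin n,
            (Gfun' n d f γ (fun m => t (Fin.rev m)) ^ 2) * (Gfun' n d f γ s ^ 2) := by
          refine Finset.sum_congr rfl fun t _ => Finset.sum_congr rfl fun s _ => ?_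
          rw [L1' n d hd f hmirror t γ s, mul_pow]
      _ = (∑ t : Fin (d - 1) → Fin n, Gfun' n d f γ (fun m => t (Fin.rev m)) ^ 2)
            * (∑ s : Fin (d - 1) → Fin n, Gfun' n d f γ s ^ 2) := by
          rw [Finset.sum_mul_sum]
      _ = (∑ i : Fin (d - 1) → Fin n, Gfun' n d f γ i ^ 2) ^ 2 := by rw [hrev γ, sq]
  rw [lhs_eq]
  have he2 : Function.Injective (fun γ : Fin n => ((fun _ => γ, fun _ => γ) :
      (Fin (d - (d - 1)) → Fin n) × (Fin (d - (d - 1)) → Fin n))) := by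
    intro a b h
    exact congrFun (congrArg Prod.fst h) ⟨0, by omega⟩
  refine le_trans (le_of_eq ?_) (le_trans (sum_le_sum_inj' he2
    (fun p : (Fin (d - (d - 1)) → Fin n) × (Fin (d - (d - 1)) → Fin n) =>
      contraction n d d (d - 1) f f p.1 p.2 ^ 2) (fun b => sq_nonneg _)) (le_of_eq ?_))
  · refine Finset.sum_congr rfl fun γ _ => ?_
    rw [← L2' n d hd f hmirror γ]
  · exact Fintype.sum_prod_type
      (f := fun p : (Fin (d - (d - 1)) → Fin n) × (Fin (d - (d - 1)) → Fin n) =>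
        contraction n d d (d - 1) f f p.1 p.2 ^ 2)

set_option maxHeartbeats 1000000 in
include hd in
private lemma P1' (q : ℕ) (hq2 : q ≤ d - 1) :
    starNorm n d d (q + 1) f f ≤ contrNorm n d d q f f := by
  have key : ∀ (t : Fin (d - (q+1)) → Fin n) (γ : Fin n) (s : Fin (d - (q+1)) → Fin n),
      starContraction n d d (q+1) f f t γ s
        = contraction n d d q f f
            (fun m => if h : (m : ℕ) < d - (q+1) then t ⟨m, h⟩ else γ)
            (fun m => if _ : (m : ℕ) = 0 then γ
              else s ⟨(m : ℕ) - 1, by have := m.isLt; omega⟩) := by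
    intro t γ s
    unfold starContraction contraction
    refine Finset.sum_congr rfl fun i _ => ?_
    congr 1
    · congr 1
      funext l
      beta_reduce
      by_cases h1 : (l : ℕ) < d - (q+1)
      · rw [dif_pos h1, dif_pos (by omega : (l:ℕ) < d - q)]
        simp only [Fin.val_mk]
        rw [dif_pos h1]
      · by_cases h2 : (l : ℕ) = d - (q+1)
        · rw [dif_neg h1, dif_pos h2, dif_pos (by omega : (l:ℕ) < d - q)]
          simp only [Fin.val_mk]
          rw [dif_neg h1]
        · rw [dif_neg h1, dif_neg h2, dif_neg (by omega : ¬ (l:ℕ) < d - q)]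
          congr 1
          apply Fin.ext
          simp only [Fin.val_mk]
          omega
    · congr 1
      funext l
      beta_reduce
      by_cases h1 : (l : ℕ) < q
      · rw [dif_pos (show (l:ℕ) < q + 1 - 1 from by omega), dif_pos h1]
        try (congr 1; try (apply Fin.ext; simp only [Fin.val_mk]; omega))
      · by_cases h2 : (l : ℕ) = q
        · rw [dif_neg (show ¬ (l:ℕ) < q + 1 - 1 from by omega),
            dif_pos (show (l:ℕ) = q + 1 - 1 from by omega), dif_neg h1]
          beta_reduce
          rw [dif_pos (show ((⟨(l:ℕ) - q, by have := l.isLt; omega⟩ : Fin (d - q)) : ℕ) = 0 from by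
            simp only [Fin.val_mk]; omega)]
        · rw [dif_neg (show ¬ (l:ℕ) < q + 1 - 1 from by omega),
            dif_neg (show ¬ (l:ℕ) = q + 1 - 1 from by omega), dif_neg h1]
          beta_reduce
          rw [dif_neg (show ¬ ((⟨(l:ℕ) - q, by have := l.isLt; omega⟩ : Fin (d - q)) : ℕ) = 0 from by
            simp only [Fin.val_mk]; omega)]
          try (congr 1; try (apply Fin.ext; simp only [Fin.val_mk]; omega))
  unfold starNorm contrNorm
  apply Real.sqrt_le_sqrt
  set e : ((Fin (d - (q+1)) → Fin n) × Fin n × (Fin (d - (q+1)) → Fin n)) →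
      ((Fin (d - q) → Fin n) × (Fin (d - q) → Fin n)) :=
    fun x => (fun m => if h : (m : ℕ) < d - (q+1) then x.1 ⟨m, h⟩ else x.2.1,
      fun m => if _ : (m : ℕ) = 0 then x.2.1
        else x.2.2 ⟨(m : ℕ) - 1, by have := m.isLt; omega⟩) with he_def
  have he : Function.Injective e := by
    rintro ⟨t1, γ1, s1⟩ ⟨t2, γ2, s2⟩ h
    rw [Prod.ext_iff] at h
    obtain ⟨h1, h2⟩ := h
    simp only [he_def] at h1 h2
    have hγ : γ1 = γ2 := by
      have := congrFun h2 ⟨0, by omega⟩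
      simpa using this
    refine Prod.ext ?_ (Prod.ext hγ ?_) <;> simp only
    · funext m
      have hm : (m : ℕ) < d - (q+1) := m.isLt
      have h3 := congrFun h1 ⟨(m : ℕ), by omega⟩
      simp only [Fin.val_mk] at h3
      simpa [hm] using h3
    · funext m
      have h3 := congrFun h2 ⟨(m : ℕ) + 1, by have := m.isLt; omega⟩
      simp only [Fin.val_mk] at h3
      simpa using h3
  have lhs_eq : (∑ t : Fin (d - (q+1)) → Fin n, ∑ γ : Fin n, ∑ s : Fin (d - (q+1)) → Fin n,
      starContraction n d d (q+1) f f t γ s ^ 2)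
      = ∑ x : (Fin (d - (q+1)) → Fin n) × Fin n × (Fin (d - (q+1)) → Fin n),
          (fun p : (Fin (d - q) → Fin n) × (Fin (d - q) → Fin n) =>
            contraction n d d q f f p.1 p.2 ^ 2) (e x) := by
    rw [Fintype.sum_prod_type]
    refine Finset.sum_congr rfl fun t _ => ?_
    rw [Fintype.sum_prod_type]
    refine Finset.sum_congr rfl fun γ _ => Finset.sum_congr rfl fun s _ => ?_
    rw [key t γ s]
  rw [lhs_eq]
  refine le_trans (sum_le_sum_inj' he
      (fun p : (Fin (d - q) → Fin n) × (Fin (d - q) → Fin n) =>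
        contraction n d d q f f p.1 p.2 ^ 2) (fun b => sq_nonneg _)) (le_of_eq ?_)
  exact Fintype.sum_prod_type
    (f := fun p : (Fin (d - q) → Fin n) × (Fin (d - q) → Fin n) =>
      contraction n d d q f f p.1 p.2 ^ 2)

end partAux

theorem stmt10 (n d : ℕ) (hd : 2 ≤ d) (hn : 1 ≤ n)
    (f : (Fin d → Fin n) → ℝ)
    (hmirror : ∀ i : Fin d → Fin n, f (i ∘ Fin.rev) = f i)
    (hdiag : ∀ i : Fin d → Fin n, ¬ Function.Injective i → f i = 0)
    (hnorm : ∑ i : Fin d → Fin n, f i ^ 2 = 1) :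
    (∀ q : ℕ, 1 ≤ q → q ≤ d - 1 →
      starNorm n d d (q + 1) f f ≤ contrNorm n d d q f f) ∧
    starNorm n d d 1 f f ≤ contrNorm n d d (d - 1) f f :=
  ⟨fun q _ hq2 => P1' n d hd f q hq2, P2' n d hd f hmirror⟩
end
end

section
/- Let d ≥ 2, let h₁,…,h_d ≥ 1 be integers with h_i = h_{d−i+1} for 1 ≤ i ≤ ⌊d/2⌋, and set m = h₁+⋯+h_d. Let f : {1,…,n}^d → ℝ be an admissible kernel (mirror symmetric, vanishing on diagonals, with ∑ f² = 1). Partition {1,…,m} into consecutive blocks B₁,…,B_d with |B_l| = h_l and define the lifted kernel k : {1,…,n}^m → ℝ by: k(j₁,…,j_m) = f(i₁,…,i_d) if for every l = 1,…,d the coordinates of (j₁,…,j_m) indexed by B_l are all equal to a common value i_l, and k(j₁,…,j_m) = 0 otherwise. Then for every r = 1,…,m−1: (i) if r = h₁+⋯+h_q for some 1 ≤ q ≤ d−1, then ‖k ⌢_r k‖ = ‖f ⌢_q f‖; (ii) if r = h₁+⋯+h_{q−1} + t for some 1 ≤ q ≤ d and 1 ≤ t ≤ h_q − 1, then ‖k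 ⌢_r k‖ = ‖f ⋆_q^{q−1} f‖. -/
open MeasureTheory ProbabilityTheory Filter
open scoped BigOperators NNReal ENNReal Topology

noncomputable section

set_option maxHeartbeats 3200000

private lemma sum_comp_eq {α β : Type*} [Fintype α] [Fintype β] [DecidableEq β]
    (e : α → β) (he : Function.Injective e) (F : β → ℝ)
    (h0 : ∀ b : β, (∀ a, e a ≠ b) → F b = 0) :
    ∑ b, F b = ∑ a, F (e a) := by
  classical
  rw [← Finset.sum_image (s := Finset.univ) (g := e) (f := F)
    (fun x _ y _ hxy => he hxy)]
  symm
  apply Finset.sum_subset (Finset.subset_univ _)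
  intro b _ hb
  apply h0
  intro a hab
  exact hb (Finset.mem_image.mpr ⟨a, Finset.mem_univ a, hab⟩)

private lemma mem_iff_lt_card {m : ℕ} (S : Finset (Fin m))
    (hS : ∀ a b : Fin m, a ≤ b → b ∈ S → a ∈ S) (l : Fin m) :
    l ∈ S ↔ (l : ℕ) < S.card := by
  constructor
  · intro hl
    by_contra hc
    have hsub : Finset.Iic l ⊆ S := fun x hx => hS x l (Finset.mem_Iic.mp hx) hl
    have h1 := Finset.card_le_card hsub
    rw [Fin.card_Iic] at h1
    omega
  · intro hl
    by_contra hc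
    have hsub : S ⊆ Finset.Iio l := by
      intro x hx
      rw [Finset.mem_Iio]
      by_contra hxl
      exact hc (hS l x (le_of_not_gt hxl) hx)
    have h1 := Finset.card_le_card hsub
    rw [Fin.card_Iio] at h1
    omega
/-- The lifted kernel: `k j = f g` if `j` is constant on the blocks (i.e. factors through
the block map `B` as `j = g ∘ B`), and `0` otherwise. -/
def lifted (n d m : ℕ) (B : Fin m → Fin d) (f : (Fin d → Fin n) → ℝ)
    (j : Fin m → Fin n) : ℝ :=
  if hg : ∃ g : Fin d → Fin n, j = g ∘ B then f (Classical.choose hg) else 0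


private lemma case1 {n d m : ℕ} (hd : 2 ≤ d)
    (B : Fin m → Fin d) (f : (Fin d → Fin n) → ℝ) (k : (Fin m → Fin n) → ℝ)
    (C : ℕ → ℕ)
    (hBlt : ∀ (N : ℕ) (l : Fin m), ((B l : ℕ) < N ↔ (l : ℕ) < C N))
    (hCgap : ∀ N, N < d → C N < C (N + 1))
    (hCmono : Monotone C)
    (hCd : ∀ N, d ≤ N → C N = m)
    (hCpal : ∀ N, N ≤ d → C N + C (d - N) = m)
    (hk1 : ∀ g : Fin d → Fin n, k (fun l => g (B l)) = f g)
    (hkc : ∀ j, k j ≠ 0 → ∀ l l' : Fin m, B l = B l' → j l = j l')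
    (q r : ℕ) (hq1 : 1 ≤ q) (hq2 : q ≤ d - 1) (hr : r = C q) :
    contrNorm n m m r k k = contrNorm n d d q f f := by
  classical
  have hCdm : C d = m := hCd d le_rfl
  have hCleM : ∀ N, C N ≤ m := by
    intro N
    rcases le_or_gt N d with hN | hN
    · have := hCmono hN; omega
    · exact (hCd N hN.le).le
  have hCltm : ∀ N, N < d → C N < m := by
    intro N hN
    have h1 := hCgap N hN
    have h2 := hCleM (N + 1)
    omega
  have hqd : q < d := by omega
  have hrm : r < m := by
    have h1 := hCgap q hqd
    have h2 := hCleM (q + 1)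
    omega
  have hr1 : 1 ≤ r := by
    have h1 : C 0 < C 1 := hCgap 0 (by omega)
    have h2 := hCmono hq1
    omega
  have hpalq := hCpal q hqd.le
  have hmr : m - r = C (d - q) := by omega
  have hm1 : 1 ≤ m := by omega
  have hBval : ∀ l : Fin m, C (B l : ℕ) ≤ (l : ℕ) ∧ (l : ℕ) < C ((B l : ℕ) + 1) := by
    intro l
    have h1 := hBlt (B l : ℕ) l
    have h2 := hBlt ((B l : ℕ) + 1) l
    omega
  have hBof : ∀ (l : Fin m) (N : ℕ), C N ≤ (l : ℕ) → (l : ℕ) < C (N + 1) →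
      ((B l : ℕ)) = N := by
    intro l N h1 h2
    have a := hBlt N l
    have b := hBlt (N + 1) l
    omega
  have hBd : ∀ l : Fin m, (B l : ℕ) < d := fun l => (B l).isLt
  have hBrev : ∀ u : Fin m, ∀ hu : m - 1 - (u : ℕ) < m,
      ((B ⟨m - 1 - (u : ℕ), hu⟩ : Fin d) : ℕ) = d - 1 - (B u : ℕ) := by
    intro u hu
    have hul := u.isLt
    have ha := hBval u
    have hd1 := hBd u
    have p1 := hCpal ((B u : ℕ) + 1) (by omega)
    have p2 := hCpal (B u : ℕ) (by omega)
    have e1 : d - ((B u : ℕ) + 1) = d - 1 - (B u : ℕ) := by omega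
    rw [e1] at p1
    have hle1 := hCleM ((B u : ℕ) + 1)
    refine hBof _ _ ?_ ?_
    · show C (d - 1 - (B u : ℕ)) ≤ m - 1 - (u : ℕ)
      omega
    · show m - 1 - (u : ℕ) < C (d - 1 - (B u : ℕ) + 1)
      have e2 : d - 1 - (B u : ℕ) + 1 = d - (B u : ℕ) := by omega
      rw [e2]
      omega
  -- the three reindexing maps
  let eT : (Fin (d - q) → Fin n) → (Fin (m - r) → Fin n) := fun t' l =>
    t' ⟨((B ⟨(l : ℕ), by have := l.isLt; omega⟩ : Fin d) : ℕ),
      (hBlt (d - q) ⟨(l : ℕ), by have := l.isLt; omega⟩).mpr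
        (by simp only [Fin.val_mk]; have := l.isLt; omega)⟩
  let eS : (Fin (d - q) → Fin n) → (Fin (m - r) → Fin n) := fun s' l =>
    s' ⟨((B ⟨(l : ℕ) + r, by have := l.isLt; omega⟩ : Fin d) : ℕ) - q, by
      have h1 := hBd ⟨(l : ℕ) + r, by have := l.isLt; omega⟩
      omega⟩
  let eI : (Fin q → Fin n) → (Fin r → Fin n) := fun i' l =>
    i' ⟨((B ⟨(l : ℕ) + (m - r), by have := l.isLt; omega⟩ : Fin d) : ℕ) - (d - q), by
      have h1 := hBd ⟨(l : ℕ) + (m - r), by have := l.isLt; omega⟩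
      omega⟩
  -- sections / injectivity
  have hsecT : ∀ t' : Fin (d - q) → Fin n,
      (fun p : Fin (d - q) => eT t' ⟨C (p : ℕ), by
        have h1 := hCgap (p : ℕ) (by have := p.isLt; omega)
        have h2 : C ((p : ℕ) + 1) ≤ C (d - q) := hCmono (by have := p.isLt; omega)
        omega⟩) = t' := by
    intro t'
    funext p
    refine congrArg t' (Fin.ext ?_)
    simp only [Fin.val_mk]
    refine hBof _ _ ?_ ?_
    · exact le_rfl
    · exact hCgap (p : ℕ) (by have := p.isLt; omega)
  have hTinj : Function.Injective eT := by
    intro a b hab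
    rw [← hsecT a, ← hsecT b, hab]
  have hsecS : ∀ s' : Fin (d - q) → Fin n,
      (fun p : Fin (d - q) => eS s' ⟨C ((p : ℕ) + q) - r, by
        have h1 := hCltm ((p : ℕ) + q) (by have := p.isLt; omega)
        have h3 : C q ≤ C ((p : ℕ) + q) := hCmono (by omega)
        omega⟩) = s' := by
    intro s'
    funext p
    refine congrArg s' (Fin.ext ?_)
    simp only [Fin.val_mk]
    have hple := p.isLt
    have hb : (B ⟨C ((p : ℕ) + q) - r + r, by
          have h1 := hCltm ((p : ℕ) + q) (by omega)
          omega⟩ : Fin d)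
        = B ⟨C ((p : ℕ) + q), hCltm ((p : ℕ) + q) (by omega)⟩ := by
      refine congrArg B (Fin.ext ?_)
      simp only [Fin.val_mk]
      have h3 : C q ≤ C ((p : ℕ) + q) := hCmono (by omega)
      omega
    rw [hb]
    have hv := hBof ⟨C ((p : ℕ) + q), hCltm ((p : ℕ) + q) (by omega)⟩ ((p : ℕ) + q)
      le_rfl (hCgap _ (by omega))
    omega
  have hSinj : Function.Injective eS := by
    intro a b hab
    rw [← hsecS a, ← hsecS b, hab]
  have hsecI : ∀ i' : Fin q → Fin n,
      (fun p : Fin q => eI i' ⟨C ((p : ℕ) + (d - q)) - (m - r), by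
        have h1 := hCltm ((p : ℕ) + (d - q)) (by have := p.isLt; omega)
        have h3 : C (d - q) ≤ C ((p : ℕ) + (d - q)) := hCmono (by omega)
        omega⟩) = i' := by
    intro i'
    funext p
    refine congrArg i' (Fin.ext ?_)
    simp only [Fin.val_mk]
    have hple := p.isLt
    have hb : (B ⟨C ((p : ℕ) + (d - q)) - (m - r) + (m - r), by
          have h1 := hCltm ((p : ℕ) + (d - q)) (by omega)
          omega⟩ : Fin d)
        = B ⟨C ((p : ℕ) + (d - q)), hCltm ((p : ℕ) + (d - q)) (by omega)⟩ := by
      refine congrArg B (Fin.ext ?_)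
      simp only [Fin.val_mk]
      have h3 : C (d - q) ≤ C ((p : ℕ) + (d - q)) := hCmono (by omega)
      omega
    rw [hb]
    have hv := hBof ⟨C ((p : ℕ) + (d - q)), hCltm ((p : ℕ) + (d - q)) (by omega)⟩
      ((p : ℕ) + (d - q)) le_rfl (hCgap _ (by omega))
    omega
  have hIinj : Function.Injective eI := by
    intro a b hab
    rw [← hsecI a, ← hsecI b, hab]
  -- recovery lemmas: if a factor of the contraction is nonzero, the outer variables are
  -- in the range of the reindexing maps
  have recT : ∀ (t : Fin (m - r) → Fin n) (i : Fin r → Fin n),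
      k (fun l : Fin m => if hl : (l : ℕ) < m - r then t ⟨(l : ℕ), hl⟩
        else i ⟨(l : ℕ) - (m - r), by have := l.isLt; omega⟩) ≠ 0 →
      ∃ t' : Fin (d - q) → Fin n, eT t' = t := by
    intro t i hk0
    refine ⟨fun p => t ⟨C (p : ℕ), by
        have h1 := hCgap (p : ℕ) (by have := p.isLt; omega)
        have h2 : C ((p : ℕ) + 1) ≤ C (d - q) := hCmono (by have := p.isLt; omega)
        omega⟩, ?_⟩
    funext l
    have hlr := l.isLt
    have pfA : (l : ℕ) < m := by omega
    have hvlt : ((B ⟨(l : ℕ), pfA⟩ : Fin d) : ℕ) < d - q := by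
      have := hBlt (d - q) ⟨(l : ℕ), pfA⟩
      simp only [Fin.val_mk] at this
      omega
    have hBd2 := hBd ⟨(l : ℕ), pfA⟩
    have hBv2 := hBval ⟨(l : ℕ), pfA⟩
    simp only [Fin.val_mk] at hBv2
    have pfB : C ((B ⟨(l : ℕ), pfA⟩ : Fin d) : ℕ) < m := hCltm _ hBd2
    have hBB : B ⟨(l : ℕ), pfA⟩ = B ⟨C ((B ⟨(l : ℕ), pfA⟩ : Fin d) : ℕ), pfB⟩ := by
      refine Fin.ext ?_
      exact (hBof _ _ le_rfl (hCgap _ hBd2)).symm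
    have heq := hkc _ hk0 ⟨(l : ℕ), pfA⟩ ⟨C ((B ⟨(l : ℕ), pfA⟩ : Fin d) : ℕ), pfB⟩ hBB
    have hCfpos : C ((B ⟨(l : ℕ), pfA⟩ : Fin d) : ℕ) < m - r := by
      have h2 : C (((B ⟨(l : ℕ), pfA⟩ : Fin d) : ℕ) + 1) ≤ C (d - q) := hCmono (by omega)
      have h3 := hCgap ((B ⟨(l : ℕ), pfA⟩ : Fin d) : ℕ) hBd2
      omega
    have hv1 : (fun l : Fin m => if hl : (l : ℕ) < m - r then t ⟨(l : ℕ), hl⟩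
        else i ⟨(l : ℕ) - (m - r), by have := l.isLt; omega⟩) ⟨(l : ℕ), pfA⟩
        = t ⟨(l : ℕ), by omega⟩ := by
      refine (dif_pos (by simp only [Fin.val_mk]; omega)).trans ?_
      refine congrArg t (Fin.ext ?_)
      simp only [Fin.val_mk]
    have hv2 : (fun l : Fin m => if hl : (l : ℕ) < m - r then t ⟨(l : ℕ), hl⟩
        else i ⟨(l : ℕ) - (m - r), by have := l.isLt; omega⟩)
          ⟨C ((B ⟨(l : ℕ), pfA⟩ : Fin d) : ℕ), pfB⟩
        = t ⟨C ((B ⟨(l : ℕ), pfA⟩ : Fin d) : ℕ), hCfpos⟩ := by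
      refine (dif_pos (by simp only [Fin.val_mk]; omega)).trans ?_
      refine congrArg t (Fin.ext ?_)
      simp only [Fin.val_mk]
    refine Eq.trans (congrArg t (Fin.ext ?_))
      (hv2.symm.trans (heq.symm.trans (hv1.trans (congrArg t (Fin.ext ?_)))))
    · simp only [Fin.val_mk]
    · simp only [Fin.val_mk]
  have recI : ∀ (t : Fin (m - r) → Fin n) (i : Fin r → Fin n),
      k (fun l : Fin m => if hl : (l : ℕ) < m - r then t ⟨(l : ℕ), hl⟩
        else i ⟨(l : ℕ) - (m - r), by have := l.isLt; omega⟩) ≠ 0 →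
      ∃ i' : Fin q → Fin n, eI i' = i := by
    intro t i hk0
    refine ⟨fun p => i ⟨C ((p : ℕ) + (d - q)) - (m - r), by
        have h1 := hCltm ((p : ℕ) + (d - q)) (by have := p.isLt; omega)
        have h2 : C (d - q) ≤ C ((p : ℕ) + (d - q)) := hCmono (by omega)
        omega⟩, ?_⟩
    funext l
    have hlr := l.isLt
    have pfA : (l : ℕ) + (m - r) < m := by omega
    have hge : ¬ ((B ⟨(l : ℕ) + (m - r), pfA⟩ : Fin d) : ℕ) < d - q := by
      have := hBlt (d - q) ⟨(l : ℕ) + (m - r), pfA⟩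
      simp only [Fin.val_mk] at this
      omega
    have hBd2 := hBd ⟨(l : ℕ) + (m - r), pfA⟩
    have hBv2 := hBval ⟨(l : ℕ) + (m - r), pfA⟩
    simp only [Fin.val_mk] at hBv2
    have pfB : C ((B ⟨(l : ℕ) + (m - r), pfA⟩ : Fin d) : ℕ) < m := hCltm _ hBd2
    have hCge : m - r ≤ C ((B ⟨(l : ℕ) + (m - r), pfA⟩ : Fin d) : ℕ) := by
      have h2 : C (d - q) ≤ C ((B ⟨(l : ℕ) + (m - r), pfA⟩ : Fin d) : ℕ) :=
        hCmono (by omega)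
      omega
    have hBB : B ⟨(l : ℕ) + (m - r), pfA⟩
        = B ⟨C ((B ⟨(l : ℕ) + (m - r), pfA⟩ : Fin d) : ℕ), pfB⟩ := by
      refine Fin.ext ?_
      exact (hBof _ _ le_rfl (hCgap _ hBd2)).symm
    have heq := hkc _ hk0 ⟨(l : ℕ) + (m - r), pfA⟩
      ⟨C ((B ⟨(l : ℕ) + (m - r), pfA⟩ : Fin d) : ℕ), pfB⟩ hBB
    have hv1 : (fun l : Fin m => if hl : (l : ℕ) < m - r then t ⟨(l : ℕ), hl⟩
        else i ⟨(l : ℕ) - (m - r), by have := l.isLt; omega⟩) ⟨(l : ℕ) + (m - r), pfA⟩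
        = i ⟨(l : ℕ), by omega⟩ := by
      refine (dif_neg (by simp only [Fin.val_mk]; omega)).trans ?_
      refine congrArg i (Fin.ext ?_)
      simp only [Fin.val_mk]
      omega
    have hv2 : (fun l : Fin m => if hl : (l : ℕ) < m - r then t ⟨(l : ℕ), hl⟩
        else i ⟨(l : ℕ) - (m - r), by have := l.isLt; omega⟩)
          ⟨C ((B ⟨(l : ℕ) + (m - r), pfA⟩ : Fin d) : ℕ), pfB⟩
        = i ⟨C ((B ⟨(l : ℕ) + (m - r), pfA⟩ : Fin d) : ℕ) - (m - r), by omega⟩ := by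
      refine (dif_neg (by simp only [Fin.val_mk]; omega)).trans ?_
      refine congrArg i (Fin.ext ?_)
      simp only [Fin.val_mk]
    refine Eq.trans (congrArg i (Fin.ext ?_))
      (hv2.symm.trans (heq.symm.trans (hv1.trans (congrArg i (Fin.ext ?_)))))
    · simp only [Fin.val_mk]
      rw [show ((B ⟨(l : ℕ) + (m - r), pfA⟩ : Fin d) : ℕ) - (d - q) + (d - q)
          = ((B ⟨(l : ℕ) + (m - r), pfA⟩ : Fin d) : ℕ) from by omega]
    · simp only [Fin.val_mk]
  have recS : ∀ (i : Fin r → Fin n) (s : Fin (m - r) → Fin n),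
      k (fun l : Fin m => if hl : (l : ℕ) < r then i ⟨r - 1 - (l : ℕ), by omega⟩
        else s ⟨(l : ℕ) - r, by have := l.isLt; omega⟩) ≠ 0 →
      ∃ s' : Fin (d - q) → Fin n, eS s' = s := by
    intro i s hk0
    refine ⟨fun p => s ⟨C ((p : ℕ) + q) - r, by
        have h1 := hCltm ((p : ℕ) + q) (by have := p.isLt; omega)
        have h2 : C q ≤ C ((p : ℕ) + q) := hCmono (by omega)
        omega⟩, ?_⟩
    funext l
    have hlr := l.isLt
    have pfA : (l : ℕ) + r < m := by omega
    have hge : ¬ ((B ⟨(l : ℕ) + r, pfA⟩ : Fin d) : ℕ) < q := by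
      have := hBlt q ⟨(l : ℕ) + r, pfA⟩
      simp only [Fin.val_mk] at this
      omega
    have hBd2 := hBd ⟨(l : ℕ) + r, pfA⟩
    have hBv2 := hBval ⟨(l : ℕ) + r, pfA⟩
    simp only [Fin.val_mk] at hBv2
    have pfB : C ((B ⟨(l : ℕ) + r, pfA⟩ : Fin d) : ℕ) < m := hCltm _ hBd2
    have hCge : r ≤ C ((B ⟨(l : ℕ) + r, pfA⟩ : Fin d) : ℕ) := by
      have h2 : C q ≤ C ((B ⟨(l : ℕ) + r, pfA⟩ : Fin d) : ℕ) := hCmono (by omega)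
      omega
    have hBB : B ⟨(l : ℕ) + r, pfA⟩
        = B ⟨C ((B ⟨(l : ℕ) + r, pfA⟩ : Fin d) : ℕ), pfB⟩ := by
      refine Fin.ext ?_
      exact (hBof _ _ le_rfl (hCgap _ hBd2)).symm
    have heq := hkc _ hk0 ⟨(l : ℕ) + r, pfA⟩
      ⟨C ((B ⟨(l : ℕ) + r, pfA⟩ : Fin d) : ℕ), pfB⟩ hBB
    have hv1 : (fun l : Fin m => if hl : (l : ℕ) < r then i ⟨r - 1 - (l : ℕ), by omega⟩
        else s ⟨(l : ℕ) - r, by have := l.isLt; omega⟩) ⟨(l : ℕ) + r, pfA⟩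
        = s ⟨(l : ℕ), by omega⟩ := by
      refine (dif_neg (by simp only [Fin.val_mk]; omega)).trans ?_
      refine congrArg s (Fin.ext ?_)
      simp only [Fin.val_mk]
      omega
    have hv2 : (fun l : Fin m => if hl : (l : ℕ) < r then i ⟨r - 1 - (l : ℕ), by omega⟩
        else s ⟨(l : ℕ) - r, by have := l.isLt; omega⟩)
          ⟨C ((B ⟨(l : ℕ) + r, pfA⟩ : Fin d) : ℕ), pfB⟩
        = s ⟨C ((B ⟨(l : ℕ) + r, pfA⟩ : Fin d) : ℕ) - r, by omega⟩ := by
      refine (dif_neg (by simp only [Fin.val_mk]; omega)).trans ?_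
      refine congrArg s (Fin.ext ?_)
      simp only [Fin.val_mk]
    refine Eq.trans (congrArg s (Fin.ext ?_))
      (hv2.symm.trans (heq.symm.trans (hv1.trans (congrArg s (Fin.ext ?_)))))
    · simp only [Fin.val_mk]
      rw [show ((B ⟨(l : ℕ) + r, pfA⟩ : Fin d) : ℕ) - q + q
          = ((B ⟨(l : ℕ) + r, pfA⟩ : Fin d) : ℕ) from by omega]
    · simp only [Fin.val_mk]
  -- assemble
  unfold contrNorm
  refine congrArg Real.sqrt ?_
  refine (sum_comp_eq eT hTinj _ ?_).trans ?_
  · intro b hb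
    refine Finset.sum_eq_zero fun s _ => ?_
    have hc : contraction n m m r k k b s = 0 := by
      unfold contraction
      refine Finset.sum_eq_zero fun i _ => ?_
      rcases eq_or_ne (k (fun l : Fin m => if hl : (l : ℕ) < m - r then b ⟨(l : ℕ), hl⟩
        else i ⟨(l : ℕ) - (m - r), by have := l.isLt; omega⟩)) 0 with h0 | h0
      · exact mul_eq_zero_of_left h0 _
      · obtain ⟨t', ht'⟩ := recT b i h0
        exact absurd ht' (hb t')
    rw [hc]
    norm_num
  refine Finset.sum_congr rfl fun t' _ => ?_
  refine (sum_comp_eq eS hSinj _ ?_).trans ?_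
  · intro b hb
    have hc : contraction n m m r k k (eT t') b = 0 := by
      unfold contraction
      refine Finset.sum_eq_zero fun i _ => ?_
      rcases eq_or_ne (k (fun l : Fin m => if hl : (l : ℕ) < r then i ⟨r - 1 - (l : ℕ), by omega⟩
        else b ⟨(l : ℕ) - r, by have := l.isLt; omega⟩)) 0 with h0 | h0
      · exact mul_eq_zero_of_right _ h0
      · obtain ⟨s', hs'⟩ := recS i b h0
        exact absurd hs' (hb s')
    rw [hc]
    norm_num
  refine Finset.sum_congr rfl fun s' _ => ?_
  congr 1
  unfold contraction
  refine (sum_comp_eq eI hIinj _ ?_).trans ?_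
  · intro i hi
    rcases eq_or_ne (k (fun l : Fin m => if hl : (l : ℕ) < m - r then eT t' ⟨(l : ℕ), hl⟩
      else i ⟨(l : ℕ) - (m - r), by have := l.isLt; omega⟩)) 0 with h0 | h0
    · exact mul_eq_zero_of_left h0 _
    · obtain ⟨i', hi'⟩ := recI (eT t') i h0
      exact absurd hi' (hi i')
  refine Finset.sum_congr rfl fun i' _ => ?_
  have E1 : (fun l : Fin m => if hl : (l : ℕ) < m - r then eT t' ⟨(l : ℕ), hl⟩
        else eI i' ⟨(l : ℕ) - (m - r), by have := l.isLt; omega⟩)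
      = fun l : Fin m => (fun p : Fin d => if hp : (p : ℕ) < d - q then t' ⟨(p : ℕ), hp⟩
        else i' ⟨(p : ℕ) - (d - q), by have := p.isLt; omega⟩) (B l) := by
    funext l
    have hlm := l.isLt
    by_cases hl : (l : ℕ) < m - r
    · have hBl : ((B l : ℕ)) < d - q := (hBlt _ l).mpr (by omega)
      refine (dif_pos hl).trans (Eq.trans ?_ (dif_pos hBl).symm)
      rfl
    · have hBl : ¬ ((B l : ℕ)) < d - q := by
        have := hBlt (d - q) l
        omega
      have hbridge : (B ⟨(l : ℕ) - (m - r) + (m - r), by omega⟩ : Fin d) = B l := by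
        refine congrArg B (Fin.ext ?_)
        simp only [Fin.val_mk]
        omega
      refine (dif_neg hl).trans (Eq.trans ?_ (dif_neg hBl).symm)
      refine congrArg i' (Fin.ext ?_)
      simp only [Fin.val_mk]
      rw [hbridge]
  have E2 : (fun l : Fin m => if hl : (l : ℕ) < r then eI i' ⟨r - 1 - (l : ℕ), by omega⟩
        else eS s' ⟨(l : ℕ) - r, by have := l.isLt; omega⟩)
      = fun l : Fin m => (fun p : Fin d => if hp : (p : ℕ) < q then i' ⟨q - 1 - (p : ℕ), by omega⟩
        else s' ⟨(p : ℕ) - q, by have := p.isLt; omega⟩) (B l) := by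
    funext l
    have hlm := l.isLt
    by_cases hl : (l : ℕ) < r
    · have hBl : ((B l : ℕ)) < q := (hBlt _ l).mpr (by omega)
      refine (dif_pos hl).trans (Eq.trans ?_ (dif_pos hBl).symm)
      refine congrArg i' (Fin.ext ?_)
      have hb1 : (B ⟨r - 1 - (l : ℕ) + (m - r), by omega⟩ : Fin d)
          = B ⟨m - 1 - (l : ℕ), by omega⟩ :=
        congrArg B (Fin.ext (by simp only [Fin.val_mk]; omega))
      simp only [Fin.val_mk]
      rw [hb1, hBrev l]
      omega
    · have hBl : ¬ ((B l : ℕ)) < q := by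
        have := hBlt q l
        omega
      have hbridge : (B ⟨(l : ℕ) - r + r, by omega⟩ : Fin d) = B l := by
        refine congrArg B (Fin.ext ?_)
        simp only [Fin.val_mk]
        omega
      refine (dif_neg hl).trans (Eq.trans ?_ (dif_neg hBl).symm)
      refine congrArg s' (Fin.ext ?_)
      simp only [Fin.val_mk]
      rw [hbridge]
  exact congrArg₂ (fun a b : ℝ => a * b)
    ((congrArg k E1).trans (hk1 (fun p : Fin d => if hp : (p : ℕ) < d - q then t' ⟨(p : ℕ), hp⟩
      else i' ⟨(p : ℕ) - (d - q), by have := p.isLt; omega⟩)))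
    ((congrArg k E2).trans (hk1 (fun p : Fin d => if hp : (p : ℕ) < q then i' ⟨q - 1 - (p : ℕ), by omega⟩
      else s' ⟨(p : ℕ) - q, by have := p.isLt; omega⟩)))
private lemma case2 {n d m : ℕ} (hd : 2 ≤ d)
    (B : Fin m → Fin d) (f : (Fin d → Fin n) → ℝ) (k : (Fin m → Fin n) → ℝ)
    (C : ℕ → ℕ)
    (hBlt : ∀ (N : ℕ) (l : Fin m), ((B l : ℕ) < N ↔ (l : ℕ) < C N))
    (hCgap : ∀ N, N < d → C N < C (N + 1))
    (hCmono : Monotone C)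
    (hCd : ∀ N, d ≤ N → C N = m)
    (hCpal : ∀ N, N ≤ d → C N + C (d - N) = m)
    (hk1 : ∀ g : Fin d → Fin n, k (fun l => g (B l)) = f g)
    (hkc : ∀ j, k j ≠ 0 → ∀ l l' : Fin m, B l = B l' → j l = j l')
    (q r : ℕ) (hqd : q < d) (hq1' : C q < r) (hr2 : r < C (q + 1)) :
    contrNorm n m m r k k = starNorm n d d (q + 1) f f := by
  classical
  have hCdm : C d = m := hCd d le_rfl
  have hCleM : ∀ N, C N ≤ m := by
    intro N
    rcases le_or_gt N d with hN | hN
    · have := hCmono hN; omega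
    · exact (hCd N hN.le).le
  have hCltm : ∀ N, N < d → C N < m := by
    intro N hN
    have h1 := hCgap N hN
    have h2 := hCleM (N + 1)
    omega
  have hrm : r < m := by
    have h2 := hCleM (q + 1)
    omega
  have hr1 : 1 ≤ r := by omega
  have pal1 := hCpal (q + 1) (by omega)
  have pal0 := hCpal q (by omega)
  have hm1 : 1 ≤ m := by omega
  have hQd : d - (q + 1) < d := by omega
  have hQltm : C (d - (q + 1)) < m - r := by omega
  have heQ : d - (q + 1) + 1 = d - q := by omega
  have hCQ1 : C (d - (q + 1) + 1) = C (d - q) := by rw [heQ]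
  have hmrtop : m - r < C (d - (q + 1) + 1) := by
    rw [hCQ1]; omega
  have hBval : ∀ l : Fin m, C (B l : ℕ) ≤ (l : ℕ) ∧ (l : ℕ) < C ((B l : ℕ) + 1) := by
    intro l
    have h1 := hBlt (B l : ℕ) l
    have h2 := hBlt ((B l : ℕ) + 1) l
    omega
  have hBof : ∀ (l : Fin m) (N : ℕ), C N ≤ (l : ℕ) → (l : ℕ) < C (N + 1) →
      ((B l : ℕ)) = N := by
    intro l N h1 h2
    have a := hBlt N l
    have b := hBlt (N + 1) l
    omega
  have hBd : ∀ l : Fin m, (B l : ℕ) < d := fun l => (B l).isLt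
  have hBC : ∀ (N : ℕ), N < d → ∀ pf : C N < m, ((B ⟨C N, pf⟩ : Fin d) : ℕ) = N :=
    fun N hN pf => hBof _ _ le_rfl (hCgap N hN)
  have hBrev : ∀ u : Fin m, ∀ hu : m - 1 - (u : ℕ) < m,
      ((B ⟨m - 1 - (u : ℕ), hu⟩ : Fin d) : ℕ) = d - 1 - (B u : ℕ) := by
    intro u hu
    have hul := u.isLt
    have ha := hBval u
    have hd1 := hBd u
    have p1 := hCpal ((B u : ℕ) + 1) (by omega)
    have p2 := hCpal (B u : ℕ) (by omega)
    have e1 : d - ((B u : ℕ) + 1) = d - 1 - (B u : ℕ) := by omega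
    rw [e1] at p1
    have hle1 := hCleM ((B u : ℕ) + 1)
    refine hBof _ _ ?_ ?_
    · show C (d - 1 - (B u : ℕ)) ≤ m - 1 - (u : ℕ)
      omega
    · show m - 1 - (u : ℕ) < C (d - 1 - (B u : ℕ) + 1)
      have e2 : d - 1 - (B u : ℕ) + 1 = d - (B u : ℕ) := by omega
      rw [e2]
      omega
  -- block value of positions in the four segments
  have hBfirst : ∀ pf : (l : Fin (m - r)) → (l : ℕ) < m, ∀ l : Fin (m - r),
      ((B ⟨(l : ℕ), pf l⟩ : Fin d) : ℕ) ≤ d - (q + 1) := by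
    intro pf l
    have h2 := hBlt (d - (q + 1) + 1) ⟨(l : ℕ), pf l⟩
    simp only [Fin.val_mk] at h2
    have := l.isLt
    omega
  -- the reindexing maps
  let eT2 : ((Fin (d - (q + 1)) → Fin n) × Fin n) → (Fin (m - r) → Fin n) := fun tp l =>
    if h : ((B ⟨(l : ℕ), by have := l.isLt; omega⟩ : Fin d) : ℕ) < d - (q + 1) then
      tp.1 ⟨((B ⟨(l : ℕ), by have := l.isLt; omega⟩ : Fin d) : ℕ), h⟩
    else tp.2
  let eS2 : (Fin n × (Fin (d - (q + 1)) → Fin n)) → (Fin (m - r) → Fin n) := fun gs l =>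
    if h : ((B ⟨(l : ℕ) + r, by have := l.isLt; omega⟩ : Fin d) : ℕ) = q then gs.1
    else gs.2 ⟨((B ⟨(l : ℕ) + r, by have := l.isLt; omega⟩ : Fin d) : ℕ) - (q + 1), by
      have h1 := hBd ⟨(l : ℕ) + r, by have := l.isLt; omega⟩
      have h2 := hBlt q ⟨(l : ℕ) + r, by have := l.isLt; omega⟩
      simp only [Fin.val_mk] at h2
      have := l.isLt
      omega⟩
  let eI2 : Fin n → (Fin (q + 1 - 1) → Fin n) → (Fin r → Fin n) := fun γ ii l =>
    if h : ((B ⟨(l : ℕ) + (m - r), by have := l.isLt; omega⟩ : Fin d) : ℕ) = d - (q + 1) then γ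
    else ii ⟨((B ⟨(l : ℕ) + (m - r), by have := l.isLt; omega⟩ : Fin d) : ℕ) - (d - (q + 1)) - 1, by
      have h1 := hBd ⟨(l : ℕ) + (m - r), by have := l.isLt; omega⟩
      have h2 := hBlt (d - (q + 1)) ⟨(l : ℕ) + (m - r), by have := l.isLt; omega⟩
      simp only [Fin.val_mk] at h2
      have := l.isLt
      omega⟩
  -- named position proofs
  have pfT : ∀ p : Fin (d - (q + 1)), C (p : ℕ) < m - r := by
    intro p
    have h1 := hCgap (p : ℕ) (by have := p.isLt; omega)
    have h2 : C ((p : ℕ) + 1) ≤ C (d - (q + 1)) := hCmono (by have := p.isLt; omega)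
    omega
  have pfS : ∀ p : Fin (d - (q + 1)), C ((p : ℕ) + (q + 1)) - r < m - r := by
    intro p
    have h1 := hCltm ((p : ℕ) + (q + 1)) (by have := p.isLt; omega)
    have h2 : C (q + 1) ≤ C ((p : ℕ) + (q + 1)) := hCmono (by omega)
    omega
  have pfI : ∀ p : Fin (q + 1 - 1), C ((p : ℕ) + (d - q)) - (m - r) < r := by
    intro p
    have h1 := hCltm ((p : ℕ) + (d - q)) (by have := p.isLt; omega)
    have h2 : C (d - q) ≤ C ((p : ℕ) + (d - q)) := hCmono (by omega)
    omega
  have hzr : (0 : ℕ) < m - r := by omega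
  -- section values for eT2
  have hvT1 : ∀ tp : (Fin (d - (q + 1)) → Fin n) × Fin n, ∀ p : Fin (d - (q + 1)),
      eT2 tp ⟨C (p : ℕ), pfT p⟩ = tp.1 p := by
    intro tp p
    have hcond : ((B ⟨C (p : ℕ), by have := pfT p; omega⟩ : Fin d) : ℕ) < d - (q + 1) := by
      rw [hBC (p : ℕ) (by have := p.isLt; omega) _]
      exact p.isLt
    refine (dif_pos hcond).trans ?_
    refine congrArg tp.1 (Fin.ext ?_)
    simp only [Fin.val_mk]
    exact hBC _ (by have := p.isLt; omega) _
  have hvT2 : ∀ tp : (Fin (d - (q + 1)) → Fin n) × Fin n,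
      eT2 tp ⟨C (d - (q + 1)), hQltm⟩ = tp.2 := by
    intro tp
    have hcond : ¬ ((B ⟨C (d - (q + 1)), by have := hQltm; omega⟩ : Fin d) : ℕ) < d - (q + 1) := by
      rw [hBC (d - (q + 1)) hQd _]
      omega
    exact dif_neg hcond
  have hT2inj : Function.Injective eT2 := by
    intro a b hab
    have h1 : a.1 = b.1 := by
      funext p
      rw [← hvT1 a p, ← hvT1 b p, hab]
    have h2 : a.2 = b.2 := by
      rw [← hvT2 a, ← hvT2 b, hab]
    exact Prod.ext h1 h2
  -- section values for eS2
  have hvS1 : ∀ gs : Fin n × (Fin (d - (q + 1)) → Fin n),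
      eS2 gs ⟨0, hzr⟩ = gs.1 := by
    intro gs
    have hcond : ((B ⟨(0 : ℕ) + r, by omega⟩ : Fin d) : ℕ) = q := by
      refine hBof _ _ ?_ ?_
      · show C q ≤ 0 + r; omega
      · show 0 + r < C (q + 1); omega
    exact dif_pos hcond
  have hvS2 : ∀ gs : Fin n × (Fin (d - (q + 1)) → Fin n), ∀ p : Fin (d - (q + 1)),
      eS2 gs ⟨C ((p : ℕ) + (q + 1)) - r, pfS p⟩ = gs.2 p := by
    intro gs p
    have hple := p.isLt
    have hCpr : C (q + 1) ≤ C ((p : ℕ) + (q + 1)) := hCmono (by omega)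
    have hbr : (B ⟨C ((p : ℕ) + (q + 1)) - r + r, by have := pfS p; omega⟩ : Fin d)
        = B ⟨C ((p : ℕ) + (q + 1)), hCltm _ (by omega)⟩ := by
      refine congrArg B (Fin.ext ?_)
      simp only [Fin.val_mk]
      omega
    have hval : ((B ⟨C ((p : ℕ) + (q + 1)) - r + r, by have := pfS p; omega⟩ : Fin d) : ℕ)
        = (p : ℕ) + (q + 1) := by
      rw [hbr]
      exact hBC _ (by omega) _
    have hcond : ¬ ((B ⟨C ((p : ℕ) + (q + 1)) - r + r, by have := pfS p; omega⟩ : Fin d) : ℕ) = q := by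
      rw [hval]; omega
    refine (dif_neg hcond).trans ?_
    refine congrArg gs.2 (Fin.ext ?_)
    simp only [Fin.val_mk]
    rw [hval]
    omega
  have hS2inj : Function.Injective eS2 := by
    intro a b hab
    have h1 : a.1 = b.1 := by rw [← hvS1 a, ← hvS1 b, hab]
    have h2 : a.2 = b.2 := by
      funext p
      rw [← hvS2 a p, ← hvS2 b p, hab]
    exact Prod.ext h1 h2
  -- section values for eI2
  have hvI : ∀ γ : Fin n, ∀ ii : Fin (q + 1 - 1) → Fin n, ∀ p : Fin (q + 1 - 1),
      eI2 γ ii ⟨C ((p : ℕ) + (d - q)) - (m - r), pfI p⟩ = ii p := by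
    intro γ ii p
    have hple := p.isLt
    have hCpr : C (d - q) ≤ C ((p : ℕ) + (d - q)) := hCmono (by omega)
    have hCdq : m - r < C (d - q) := by omega
    have hbr : (B ⟨C ((p : ℕ) + (d - q)) - (m - r) + (m - r), by have := pfI p; omega⟩ : Fin d)
        = B ⟨C ((p : ℕ) + (d - q)), hCltm _ (by omega)⟩ := by
      refine congrArg B (Fin.ext ?_)
      simp only [Fin.val_mk]
      omega
    have hval : ((B ⟨C ((p : ℕ) + (d - q)) - (m - r) + (m - r), by have := pfI p; omega⟩ : Fin d) : ℕ)
        = (p : ℕ) + (d - q) := by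
      rw [hbr]
      exact hBC _ (by omega) _
    have hcond : ¬ ((B ⟨C ((p : ℕ) + (d - q)) - (m - r) + (m - r), by have := pfI p; omega⟩ : Fin d) : ℕ)
        = d - (q + 1) := by
      rw [hval]; omega
    refine (dif_neg hcond).trans ?_
    refine congrArg ii (Fin.ext ?_)
    simp only [Fin.val_mk]
    rw [hval]
    omega
  have hI2inj : ∀ γ : Fin n, Function.Injective (eI2 γ) := by
    intro γ a b hab
    funext p
    rw [← hvI γ a p, ← hvI γ b p, hab]
  -- recovery lemmas
  have rec2T : ∀ (t : Fin (m - r) → Fin n) (i : Fin r → Fin n),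
      k (fun l : Fin m => if hl : (l : ℕ) < m - r then t ⟨(l : ℕ), hl⟩
        else i ⟨(l : ℕ) - (m - r), by have := l.isLt; omega⟩) ≠ 0 →
      ∃ tp : (Fin (d - (q + 1)) → Fin n) × Fin n, eT2 tp = t := by
    intro t i hk0
    refine ⟨(fun p => t ⟨C (p : ℕ), pfT p⟩, t ⟨C (d - (q + 1)), hQltm⟩), ?_⟩
    funext l
    have hlr := l.isLt
    have pfA : (l : ℕ) < m := by omega
    have hBle : ((B ⟨(l : ℕ), pfA⟩ : Fin d) : ℕ) ≤ d - (q + 1) := by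
      have h2 := hBlt (d - (q + 1) + 1) ⟨(l : ℕ), pfA⟩
      simp only [Fin.val_mk] at h2
      omega
    have hv1 : (fun l : Fin m => if hl : (l : ℕ) < m - r then t ⟨(l : ℕ), hl⟩
        else i ⟨(l : ℕ) - (m - r), by have := l.isLt; omega⟩) ⟨(l : ℕ), pfA⟩
        = t ⟨(l : ℕ), by omega⟩ := by
      refine (dif_pos (by simp only [Fin.val_mk]; omega)).trans ?_
      exact congrArg t (Fin.ext (by simp only [Fin.val_mk]))
    by_cases hv : ((B ⟨(l : ℕ), pfA⟩ : Fin d) : ℕ) < d - (q + 1)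
    · have hBd2 : ((B ⟨(l : ℕ), pfA⟩ : Fin d) : ℕ) < d := hBd _
      have hBv2 := hBval ⟨(l : ℕ), pfA⟩
      simp only [Fin.val_mk] at hBv2
      have pfB : C ((B ⟨(l : ℕ), pfA⟩ : Fin d) : ℕ) < m := hCltm _ hBd2
      have hCfpos : C ((B ⟨(l : ℕ), pfA⟩ : Fin d) : ℕ) < m - r := by
        have h2 : C (((B ⟨(l : ℕ), pfA⟩ : Fin d) : ℕ) + 1) ≤ C (d - (q + 1)) :=
          hCmono (by omega)
        omega
      have hBB : B ⟨(l : ℕ), pfA⟩ = B ⟨C ((B ⟨(l : ℕ), pfA⟩ : Fin d) : ℕ), pfB⟩ :=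
        Fin.ext (hBC _ hBd2 pfB).symm
      have heq := hkc _ hk0 ⟨(l : ℕ), pfA⟩ ⟨C ((B ⟨(l : ℕ), pfA⟩ : Fin d) : ℕ), pfB⟩ hBB
      have hv2 : (fun l : Fin m => if hl : (l : ℕ) < m - r then t ⟨(l : ℕ), hl⟩
          else i ⟨(l : ℕ) - (m - r), by have := l.isLt; omega⟩)
            ⟨C ((B ⟨(l : ℕ), pfA⟩ : Fin d) : ℕ), pfB⟩
          = t ⟨C ((B ⟨(l : ℕ), pfA⟩ : Fin d) : ℕ), hCfpos⟩ := by
        refine (dif_pos (by simp only [Fin.val_mk]; omega)).trans ?_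
        exact congrArg t (Fin.ext (by simp only [Fin.val_mk]))
      refine (dif_pos hv).trans ?_
      refine Eq.trans (congrArg t (Fin.ext ?_))
        (hv2.symm.trans (heq.symm.trans (hv1.trans (congrArg t (Fin.ext ?_)))))
      · simp only [Fin.val_mk]
      · simp only [Fin.val_mk]
    · have hveq : ((B ⟨(l : ℕ), pfA⟩ : Fin d) : ℕ) = d - (q + 1) := by omega
      have pfB : C (d - (q + 1)) < m := hCltm _ hQd
      have hBB : B ⟨(l : ℕ), pfA⟩ = B ⟨C (d - (q + 1)), pfB⟩ :=
        Fin.ext (by rw [hBC _ hQd pfB, hveq])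
      have heq := hkc _ hk0 ⟨(l : ℕ), pfA⟩ ⟨C (d - (q + 1)), pfB⟩ hBB
      have hv2 : (fun l : Fin m => if hl : (l : ℕ) < m - r then t ⟨(l : ℕ), hl⟩
          else i ⟨(l : ℕ) - (m - r), by have := l.isLt; omega⟩) ⟨C (d - (q + 1)), pfB⟩
          = t ⟨C (d - (q + 1)), hQltm⟩ := by
        refine (dif_pos (by simp only [Fin.val_mk]; omega)).trans ?_
        exact congrArg t (Fin.ext (by simp only [Fin.val_mk]))
      refine (dif_neg hv).trans ?_
      exact hv2.symm.trans (heq.symm.trans (hv1.trans (congrArg t (Fin.ext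
        (by simp only [Fin.val_mk])))))
  have rec2S : ∀ (i : Fin r → Fin n) (s : Fin (m - r) → Fin n),
      k (fun l : Fin m => if hl : (l : ℕ) < r then i ⟨r - 1 - (l : ℕ), by omega⟩
        else s ⟨(l : ℕ) - r, by have := l.isLt; omega⟩) ≠ 0 →
      ∃ gs : Fin n × (Fin (d - (q + 1)) → Fin n), eS2 gs = s := by
    intro i s hk0
    refine ⟨(s ⟨0, hzr⟩, fun p => s ⟨C ((p : ℕ) + (q + 1)) - r, pfS p⟩), ?_⟩
    funext l
    have hlr := l.isLt
    have pfA : (l : ℕ) + r < m := by omega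
    have hBge : ¬ ((B ⟨(l : ℕ) + r, pfA⟩ : Fin d) : ℕ) < q := by
      have h2 := hBlt q ⟨(l : ℕ) + r, pfA⟩
      simp only [Fin.val_mk] at h2
      omega
    have hv1 : (fun l : Fin m => if hl : (l : ℕ) < r then i ⟨r - 1 - (l : ℕ), by omega⟩
        else s ⟨(l : ℕ) - r, by have := l.isLt; omega⟩) ⟨(l : ℕ) + r, pfA⟩
        = s ⟨(l : ℕ), by omega⟩ := by
      refine (dif_neg (by simp only [Fin.val_mk]; omega)).trans ?_
      exact congrArg s (Fin.ext (by simp only [Fin.val_mk]; omega))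
    by_cases hv : ((B ⟨(l : ℕ) + r, pfA⟩ : Fin d) : ℕ) = q
    · have pf0m : (0 : ℕ) + r < m := by omega
      have h0B : ((B ⟨(0 : ℕ) + r, pf0m⟩ : Fin d) : ℕ) = q := by
        refine hBof _ _ ?_ ?_
        · show C q ≤ 0 + r; omega
        · show 0 + r < C (q + 1); omega
      have hBB : B ⟨(0 : ℕ) + r, pf0m⟩ = B ⟨(l : ℕ) + r, pfA⟩ :=
        Fin.ext (by rw [h0B, hv])
      have heq := hkc _ hk0 ⟨(0 : ℕ) + r, pf0m⟩ ⟨(l : ℕ) + r, pfA⟩ hBB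
      have hv2 : (fun l : Fin m => if hl : (l : ℕ) < r then i ⟨r - 1 - (l : ℕ), by omega⟩
          else s ⟨(l : ℕ) - r, by have := l.isLt; omega⟩) ⟨(0 : ℕ) + r, pf0m⟩
          = s ⟨0, hzr⟩ := by
        refine (dif_neg (by simp only [Fin.val_mk]; omega)).trans ?_
        exact congrArg s (Fin.ext (by simp only [Fin.val_mk]; omega))
      refine (dif_pos hv).trans ?_
      exact hv2.symm.trans (heq.trans (hv1.trans (congrArg s (Fin.ext
        (by simp only [Fin.val_mk])))))
    · have hBd2 : ((B ⟨(l : ℕ) + r, pfA⟩ : Fin d) : ℕ) < d := hBd _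
      have hBv2 := hBval ⟨(l : ℕ) + r, pfA⟩
      simp only [Fin.val_mk] at hBv2
      have pfB : C ((B ⟨(l : ℕ) + r, pfA⟩ : Fin d) : ℕ) < m := hCltm _ hBd2
      have hCge : r < C ((B ⟨(l : ℕ) + r, pfA⟩ : Fin d) : ℕ) := by
        have h2 : C (q + 1) ≤ C ((B ⟨(l : ℕ) + r, pfA⟩ : Fin d) : ℕ) := hCmono (by omega)
        omega
      have hBB : B ⟨(l : ℕ) + r, pfA⟩ = B ⟨C ((B ⟨(l : ℕ) + r, pfA⟩ : Fin d) : ℕ), pfB⟩ :=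
        Fin.ext (hBC _ hBd2 pfB).symm
      have heq := hkc _ hk0 ⟨(l : ℕ) + r, pfA⟩ ⟨C ((B ⟨(l : ℕ) + r, pfA⟩ : Fin d) : ℕ), pfB⟩ hBB
      have hv2 : (fun l : Fin m => if hl : (l : ℕ) < r then i ⟨r - 1 - (l : ℕ), by omega⟩
          else s ⟨(l : ℕ) - r, by have := l.isLt; omega⟩)
            ⟨C ((B ⟨(l : ℕ) + r, pfA⟩ : Fin d) : ℕ), pfB⟩
          = s ⟨C ((B ⟨(l : ℕ) + r, pfA⟩ : Fin d) : ℕ) - r, by omega⟩ := by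
        refine (dif_neg (by simp only [Fin.val_mk]; omega)).trans ?_
        exact congrArg s (Fin.ext (by simp only [Fin.val_mk]))
      refine (dif_neg hv).trans ?_
      refine Eq.trans (congrArg s (Fin.ext ?_))
        (hv2.symm.trans (heq.symm.trans (hv1.trans (congrArg s (Fin.ext ?_)))))
      · simp only [Fin.val_mk]
        rw [show ((B ⟨(l : ℕ) + r, pfA⟩ : Fin d) : ℕ) - (q + 1) + (q + 1)
            = ((B ⟨(l : ℕ) + r, pfA⟩ : Fin d) : ℕ) from by omega]
      · simp only [Fin.val_mk]
  have rec2I : ∀ (tp : (Fin (d - (q + 1)) → Fin n) × Fin n) (i : Fin r → Fin n),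
      k (fun l : Fin m => if hl : (l : ℕ) < m - r then eT2 tp ⟨(l : ℕ), hl⟩
        else i ⟨(l : ℕ) - (m - r), by have := l.isLt; omega⟩) ≠ 0 →
      ∃ ii : Fin (q + 1 - 1) → Fin n, eI2 tp.2 ii = i := by
    intro tp i hk0
    refine ⟨fun p => i ⟨C ((p : ℕ) + (d - q)) - (m - r), pfI p⟩, ?_⟩
    funext l
    have hlr := l.isLt
    have pfA : (l : ℕ) + (m - r) < m := by omega
    have hBge : ¬ ((B ⟨(l : ℕ) + (m - r), pfA⟩ : Fin d) : ℕ) < d - (q + 1) := by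
      have h2 := hBlt (d - (q + 1)) ⟨(l : ℕ) + (m - r), pfA⟩
      simp only [Fin.val_mk] at h2
      omega
    have hv1 : (fun l : Fin m => if hl : (l : ℕ) < m - r then eT2 tp ⟨(l : ℕ), hl⟩
        else i ⟨(l : ℕ) - (m - r), by have := l.isLt; omega⟩) ⟨(l : ℕ) + (m - r), pfA⟩
        = i ⟨(l : ℕ), by omega⟩ := by
      refine (dif_neg (by simp only [Fin.val_mk]; omega)).trans ?_
      exact congrArg i (Fin.ext (by simp only [Fin.val_mk]; omega))
    by_cases hv : ((B ⟨(l : ℕ) + (m - r), pfA⟩ : Fin d) : ℕ) = d - (q + 1)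
    · have pfB : C (d - (q + 1)) < m := hCltm _ hQd
      have hBB : B ⟨C (d - (q + 1)), pfB⟩ = B ⟨(l : ℕ) + (m - r), pfA⟩ :=
        Fin.ext (by rw [hBC _ hQd pfB, hv])
      have heq := hkc _ hk0 ⟨C (d - (q + 1)), pfB⟩ ⟨(l : ℕ) + (m - r), pfA⟩ hBB
      have hv2 : (fun l : Fin m => if hl : (l : ℕ) < m - r then eT2 tp ⟨(l : ℕ), hl⟩
          else i ⟨(l : ℕ) - (m - r), by have := l.isLt; omega⟩) ⟨C (d - (q + 1)), pfB⟩
          = tp.2 := by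
        refine (dif_pos (by simp only [Fin.val_mk]; omega)).trans ?_
        refine Eq.trans ?_ (hvT2 tp)
        exact congrArg (eT2 tp) (Fin.ext (by simp only [Fin.val_mk]))
      refine (dif_pos hv).trans ?_
      exact hv2.symm.trans (heq.trans (hv1.trans (congrArg i (Fin.ext
        (by simp only [Fin.val_mk])))))
    · have hBd2 : ((B ⟨(l : ℕ) + (m - r), pfA⟩ : Fin d) : ℕ) < d := hBd _
      have hBv2 := hBval ⟨(l : ℕ) + (m - r), pfA⟩
      simp only [Fin.val_mk] at hBv2
      have pfB : C ((B ⟨(l : ℕ) + (m - r), pfA⟩ : Fin d) : ℕ) < m := hCltm _ hBd2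
      have hCge : m - r < C ((B ⟨(l : ℕ) + (m - r), pfA⟩ : Fin d) : ℕ) := by
        have h2 : C (d - q) ≤ C ((B ⟨(l : ℕ) + (m - r), pfA⟩ : Fin d) : ℕ) :=
          hCmono (by omega)
        have h3 : C (d - (q + 1) + 1) ≤ C (d - q) := hCmono (by omega)
        omega
      have hBB : B ⟨(l : ℕ) + (m - r), pfA⟩
          = B ⟨C ((B ⟨(l : ℕ) + (m - r), pfA⟩ : Fin d) : ℕ), pfB⟩ :=
        Fin.ext (hBC _ hBd2 pfB).symm
      have heq := hkc _ hk0 ⟨(l : ℕ) + (m - r), pfA⟩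
        ⟨C ((B ⟨(l : ℕ) + (m - r), pfA⟩ : Fin d) : ℕ), pfB⟩ hBB
      have hv2 : (fun l : Fin m => if hl : (l : ℕ) < m - r then eT2 tp ⟨(l : ℕ), hl⟩
          else i ⟨(l : ℕ) - (m - r), by have := l.isLt; omega⟩)
            ⟨C ((B ⟨(l : ℕ) + (m - r), pfA⟩ : Fin d) : ℕ), pfB⟩
          = i ⟨C ((B ⟨(l : ℕ) + (m - r), pfA⟩ : Fin d) : ℕ) - (m - r), by omega⟩ := by
        refine (dif_neg (by simp only [Fin.val_mk]; omega)).trans ?_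
        exact congrArg i (Fin.ext (by simp only [Fin.val_mk]))
      refine (dif_neg hv).trans ?_
      refine Eq.trans (congrArg i (Fin.ext ?_))
        (hv2.symm.trans (heq.symm.trans (hv1.trans (congrArg i (Fin.ext ?_)))))
      · simp only [Fin.val_mk]
        rw [show ((B ⟨(l : ℕ) + (m - r), pfA⟩ : Fin d) : ℕ) - (d - (q + 1)) - 1 + (d - q)
            = ((B ⟨(l : ℕ) + (m - r), pfA⟩ : Fin d) : ℕ) from by omega]
      · simp only [Fin.val_mk]
  -- the key pointwise computation
  have hkey : ∀ (t' : Fin (d - (q + 1)) → Fin n) (γ γ' : Fin n)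
      (s' : Fin (d - (q + 1)) → Fin n),
      contraction n m m r k k (eT2 (t', γ)) (eS2 (γ', s'))
        = if γ' = γ then starContraction n d d (q + 1) f f t' γ s' else 0 := by
    intro t' γ γ' s'
    by_cases hγ : γ' = γ
    · subst hγ
      rw [if_pos rfl]
      unfold contraction starContraction
      refine (sum_comp_eq (eI2 γ') (hI2inj γ') _ ?_).trans ?_
      · intro i hi
        rcases eq_or_ne (k (fun l : Fin m => if hl : (l : ℕ) < m - r then
            eT2 (t', γ') ⟨(l : ℕ), hl⟩
          else i ⟨(l : ℕ) - (m - r), by have := l.isLt; omega⟩)) 0 with h0 | h0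
        · exact mul_eq_zero_of_left h0 _
        · obtain ⟨ii, hii⟩ := rec2I (t', γ') i h0
          exact absurd hii (hi ii)
      refine Finset.sum_congr rfl fun ii _ => ?_
      have E1 : (fun l : Fin m => if hl : (l : ℕ) < m - r then eT2 (t', γ') ⟨(l : ℕ), hl⟩
            else eI2 γ' ii ⟨(l : ℕ) - (m - r), by have := l.isLt; omega⟩)
          = fun l : Fin m => (fun p : Fin d =>
            if h1 : (p : ℕ) < d - (q + 1) then t' ⟨(p : ℕ), h1⟩
            else if h2 : (p : ℕ) = d - (q + 1) then γ'
            else ii ⟨(p : ℕ) - (d - (q + 1)) - 1, by have := p.isLt; omega⟩) (B l) := by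
        funext l
        have hlm := l.isLt
        by_cases hl : (l : ℕ) < m - r
        · have hBle : ((B l : ℕ)) ≤ d - (q + 1) := by
            have h2 := hBlt (d - (q + 1) + 1) l
            omega
          by_cases hv : ((B l : ℕ)) < d - (q + 1)
          · refine (dif_pos hl).trans (Eq.trans ?_ (dif_pos hv).symm)
            exact dif_pos hv
          · have hveq : ((B l : ℕ)) = d - (q + 1) := by omega
            have hRHS : (fun p : Fin d =>
                if h1 : (p : ℕ) < d - (q + 1) then t' ⟨(p : ℕ), h1⟩
                else if h2 : (p : ℕ) = d - (q + 1) then γ'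
                else ii ⟨(p : ℕ) - (d - (q + 1)) - 1, by have := p.isLt; omega⟩) (B l)
                = γ' := by
              refine (dif_neg hv).trans ?_
              exact dif_pos hveq
            refine (dif_pos hl).trans (Eq.trans ?_ hRHS.symm)
            exact dif_neg hv
        · have hBge : ¬ ((B l : ℕ)) < d - (q + 1) := by
            have h2 := hBlt (d - (q + 1)) l
            omega
          have hbridge : (B ⟨(l : ℕ) - (m - r) + (m - r), by omega⟩ : Fin d) = B l :=
            congrArg B (Fin.ext (by simp only [Fin.val_mk]; omega))
          by_cases hv : ((B l : ℕ)) = d - (q + 1)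
          · have hcond : ((B ⟨(l : ℕ) - (m - r) + (m - r), by omega⟩ : Fin d) : ℕ)
                = d - (q + 1) := by rw [hbridge]; exact hv
            have hRHS : (fun p : Fin d =>
                if h1 : (p : ℕ) < d - (q + 1) then t' ⟨(p : ℕ), h1⟩
                else if h2 : (p : ℕ) = d - (q + 1) then γ'
                else ii ⟨(p : ℕ) - (d - (q + 1)) - 1, by have := p.isLt; omega⟩) (B l)
                = γ' := by
              refine (dif_neg hBge).trans ?_
              exact dif_pos hv
            refine (dif_neg hl).trans (Eq.trans ?_ hRHS.symm)
            exact dif_pos hcond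
          · have hcond : ¬ ((B ⟨(l : ℕ) - (m - r) + (m - r), by omega⟩ : Fin d) : ℕ)
                = d - (q + 1) := by rw [hbridge]; exact hv
            have hRHS : (fun p : Fin d =>
                if h1 : (p : ℕ) < d - (q + 1) then t' ⟨(p : ℕ), h1⟩
                else if h2 : (p : ℕ) = d - (q + 1) then γ'
                else ii ⟨(p : ℕ) - (d - (q + 1)) - 1, by have := p.isLt; omega⟩) (B l)
                = ii ⟨((B l : ℕ)) - (d - (q + 1)) - 1, by have := hBd l; omega⟩ := by
              refine (dif_neg hBge).trans ?_
              exact dif_neg hv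
            refine (dif_neg hl).trans (Eq.trans ?_ hRHS.symm)
            refine (dif_neg hcond).trans ?_
            refine congrArg ii (Fin.ext ?_)
            simp only [Fin.val_mk]
            rw [hbridge]
      have E2 : (fun l : Fin m => if hl : (l : ℕ) < r then eI2 γ' ii ⟨r - 1 - (l : ℕ), by omega⟩
            else eS2 (γ', s') ⟨(l : ℕ) - r, by have := l.isLt; omega⟩)
          = fun l : Fin m => (fun p : Fin d =>
            if h1 : (p : ℕ) < q + 1 - 1 then ii ⟨q + 1 - 1 - 1 - (p : ℕ), by omega⟩
            else if h2 : (p : ℕ) = q + 1 - 1 then γ'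
            else s' ⟨(p : ℕ) - (q + 1), by have := p.isLt; omega⟩) (B l) := by
        funext l
        have hlm := l.isLt
        by_cases hl : (l : ℕ) < r
        · have hBle : ((B l : ℕ)) ≤ q := by
            have h2 := hBlt (q + 1) l
            omega
          have hbridge : (B ⟨r - 1 - (l : ℕ) + (m - r), by omega⟩ : Fin d)
              = B ⟨m - 1 - (l : ℕ), by omega⟩ :=
            congrArg B (Fin.ext (by simp only [Fin.val_mk]; omega))
          have hw : ((B ⟨r - 1 - (l : ℕ) + (m - r), by omega⟩ : Fin d) : ℕ)
              = d - 1 - ((B l : ℕ)) := by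
            rw [hbridge]
            exact hBrev l _
          by_cases hv : ((B l : ℕ)) = q
          · have hcond : ((B ⟨r - 1 - (l : ℕ) + (m - r), by omega⟩ : Fin d) : ℕ)
                = d - (q + 1) := by rw [hw]; omega
            have hRHS : (fun p : Fin d =>
                if h1 : (p : ℕ) < q + 1 - 1 then ii ⟨q + 1 - 1 - 1 - (p : ℕ), by omega⟩
                else if h2 : (p : ℕ) = q + 1 - 1 then γ'
                else s' ⟨(p : ℕ) - (q + 1), by have := p.isLt; omega⟩) (B l) = γ' := by
              refine (dif_neg (by omega)).trans ?_
              exact dif_pos (by omega)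
            refine (dif_pos hl).trans (Eq.trans ?_ hRHS.symm)
            exact dif_pos hcond
          · have hvlt : ((B l : ℕ)) < q := by omega
            have hcond : ¬ ((B ⟨r - 1 - (l : ℕ) + (m - r), by omega⟩ : Fin d) : ℕ)
                = d - (q + 1) := by rw [hw]; omega
            have hRHS : (fun p : Fin d =>
                if h1 : (p : ℕ) < q + 1 - 1 then ii ⟨q + 1 - 1 - 1 - (p : ℕ), by omega⟩
                else if h2 : (p : ℕ) = q + 1 - 1 then γ'
                else s' ⟨(p : ℕ) - (q + 1), by have := p.isLt; omega⟩) (B l)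
                = ii ⟨q + 1 - 1 - 1 - ((B l : ℕ)), by omega⟩ :=
              dif_pos (by omega)
            refine (dif_pos hl).trans (Eq.trans ?_ hRHS.symm)
            refine (dif_neg hcond).trans ?_
            refine congrArg ii (Fin.ext ?_)
            simp only [Fin.val_mk]
            rw [hw]
            omega
        · have hBge : ¬ ((B l : ℕ)) < q := by
            have h2 := hBlt q l
            omega
          have hbridge : (B ⟨(l : ℕ) - r + r, by omega⟩ : Fin d) = B l :=
            congrArg B (Fin.ext (by simp only [Fin.val_mk]; omega))
          by_cases hv : ((B l : ℕ)) = q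
          · have hcond : ((B ⟨(l : ℕ) - r + r, by omega⟩ : Fin d) : ℕ) = q := by
              rw [hbridge]; exact hv
            have hRHS : (fun p : Fin d =>
                if h1 : (p : ℕ) < q + 1 - 1 then ii ⟨q + 1 - 1 - 1 - (p : ℕ), by omega⟩
                else if h2 : (p : ℕ) = q + 1 - 1 then γ'
                else s' ⟨(p : ℕ) - (q + 1), by have := p.isLt; omega⟩) (B l) = γ' := by
              refine (dif_neg (by omega)).trans ?_
              exact dif_pos (by omega)
            refine (dif_neg hl).trans (Eq.trans ?_ hRHS.symm)
            exact dif_pos hcond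
          · have hcond : ¬ ((B ⟨(l : ℕ) - r + r, by omega⟩ : Fin d) : ℕ) = q := by
              rw [hbridge]; exact hv
            have hRHS : (fun p : Fin d =>
                if h1 : (p : ℕ) < q + 1 - 1 then ii ⟨q + 1 - 1 - 1 - (p : ℕ), by omega⟩
                else if h2 : (p : ℕ) = q + 1 - 1 then γ'
                else s' ⟨(p : ℕ) - (q + 1), by have := p.isLt; omega⟩) (B l)
                = s' ⟨((B l : ℕ)) - (q + 1), by have := hBd l; omega⟩ := by
              refine (dif_neg (by omega)).trans ?_
              exact dif_neg (by omega)
            refine (dif_neg hl).trans (Eq.trans ?_ hRHS.symm)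
            refine (dif_neg hcond).trans ?_
            refine congrArg s' (Fin.ext ?_)
            simp only [Fin.val_mk]
            rw [hbridge]
      exact congrArg₂ (fun a b : ℝ => a * b)
        ((congrArg k E1).trans (hk1 (fun p : Fin d =>
          if h1 : (p : ℕ) < d - (q + 1) then t' ⟨(p : ℕ), h1⟩
          else if h2 : (p : ℕ) = d - (q + 1) then γ'
          else ii ⟨(p : ℕ) - (d - (q + 1)) - 1, by have := p.isLt; omega⟩)))
        ((congrArg k E2).trans (hk1 (fun p : Fin d =>
          if h1 : (p : ℕ) < q + 1 - 1 then ii ⟨q + 1 - 1 - 1 - (p : ℕ), by omega⟩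
          else if h2 : (p : ℕ) = q + 1 - 1 then γ'
          else s' ⟨(p : ℕ) - (q + 1), by have := p.isLt; omega⟩)))
    · rw [if_neg hγ]
      unfold contraction
      refine Finset.sum_eq_zero fun i _ => ?_
      rcases eq_or_ne (k (fun l : Fin m => if hl : (l : ℕ) < m - r then
          eT2 (t', γ) ⟨(l : ℕ), hl⟩
        else i ⟨(l : ℕ) - (m - r), by have := l.isLt; omega⟩)) 0 with h0 | h0
      · exact mul_eq_zero_of_left h0 _
      rcases eq_or_ne (k (fun l : Fin m => if hl : (l : ℕ) < r then
          i ⟨r - 1 - (l : ℕ), by omega⟩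
        else eS2 (γ', s') ⟨(l : ℕ) - r, by have := l.isLt; omega⟩)) 0 with h1 | h1
      · exact mul_eq_zero_of_right _ h1
      exfalso
      apply hγ
      have pf0r : (0 : ℕ) < r := by omega
      -- from the first factor : γ = i 0
      have pfB : C (d - (q + 1)) < m := hCltm _ hQd
      have pfC : (0 : ℕ) + (m - r) < m := by omega
      have hBmr : ((B ⟨(0 : ℕ) + (m - r), pfC⟩ : Fin d) : ℕ) = d - (q + 1) := by
        refine hBof _ _ ?_ ?_
        · show C (d - (q + 1)) ≤ 0 + (m - r); omega
        · show 0 + (m - r) < C (d - (q + 1) + 1); omega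
      have hBB1 : B ⟨C (d - (q + 1)), pfB⟩ = B ⟨(0 : ℕ) + (m - r), pfC⟩ :=
        Fin.ext (by rw [hBC _ hQd pfB, hBmr])
      have heq1 := hkc _ h0 ⟨C (d - (q + 1)), pfB⟩ ⟨(0 : ℕ) + (m - r), pfC⟩ hBB1
      have hx1 : (fun l : Fin m => if hl : (l : ℕ) < m - r then eT2 (t', γ) ⟨(l : ℕ), hl⟩
          else i ⟨(l : ℕ) - (m - r), by have := l.isLt; omega⟩) ⟨C (d - (q + 1)), pfB⟩
          = γ := by
        refine (dif_pos (by simp only [Fin.val_mk]; omega)).trans ?_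
        refine Eq.trans ?_ (hvT2 (t', γ))
        exact congrArg (eT2 (t', γ)) (Fin.ext (by simp only [Fin.val_mk]))
      have hx2 : (fun l : Fin m => if hl : (l : ℕ) < m - r then eT2 (t', γ) ⟨(l : ℕ), hl⟩
          else i ⟨(l : ℕ) - (m - r), by have := l.isLt; omega⟩) ⟨(0 : ℕ) + (m - r), pfC⟩
          = i ⟨0, pf0r⟩ := by
        refine (dif_neg (by simp only [Fin.val_mk]; omega)).trans ?_
        exact congrArg i (Fin.ext (by simp only [Fin.val_mk]; omega))
      have hA : γ = i ⟨0, pf0r⟩ := hx1.symm.trans (heq1.trans hx2)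
      -- from the second factor : i 0 = γ'
      have pfD : r - 1 < m := by omega
      have pfE : (0 : ℕ) + r < m := by omega
      have hBr1 : ((B ⟨r - 1, pfD⟩ : Fin d) : ℕ) = q := by
        refine hBof _ _ ?_ ?_
        · show C q ≤ r - 1; omega
        · show r - 1 < C (q + 1); omega
      have hBr2 : ((B ⟨(0 : ℕ) + r, pfE⟩ : Fin d) : ℕ) = q := by
        refine hBof _ _ ?_ ?_
        · show C q ≤ 0 + r; omega
        · show 0 + r < C (q + 1); omega
      have hBB2 : B ⟨r - 1, pfD⟩ = B ⟨(0 : ℕ) + r, pfE⟩ :=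
        Fin.ext (by rw [hBr1, hBr2])
      have heq2 := hkc _ h1 ⟨r - 1, pfD⟩ ⟨(0 : ℕ) + r, pfE⟩ hBB2
      have hy1 : (fun l : Fin m => if hl : (l : ℕ) < r then i ⟨r - 1 - (l : ℕ), by omega⟩
          else eS2 (γ', s') ⟨(l : ℕ) - r, by have := l.isLt; omega⟩) ⟨r - 1, pfD⟩
          = i ⟨0, pf0r⟩ := by
        refine (dif_pos (by simp only [Fin.val_mk]; omega)).trans ?_
        exact congrArg i (Fin.ext (by simp only [Fin.val_mk]; omega))
      have hy2 : (fun l : Fin m => if hl : (l : ℕ) < r then i ⟨r - 1 - (l : ℕ), by omega⟩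
          else eS2 (γ', s') ⟨(l : ℕ) - r, by have := l.isLt; omega⟩) ⟨(0 : ℕ) + r, pfE⟩
          = γ' := by
        refine (dif_neg (by simp only [Fin.val_mk]; omega)).trans ?_
        refine Eq.trans ?_ (hvS1 (γ', s'))
        exact congrArg (eS2 (γ', s')) (Fin.ext (by simp only [Fin.val_mk]; omega))
      have hB2 : i ⟨0, pf0r⟩ = γ' := hy1.symm.trans (heq2.trans hy2)
      exact hB2.symm.trans hA.symm
  -- assemble
  unfold contrNorm starNorm
  refine congrArg Real.sqrt ?_
  refine (sum_comp_eq eT2 hT2inj _ ?_).trans ?_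
  · intro b hb
    refine Finset.sum_eq_zero fun s _ => ?_
    have hc : contraction n m m r k k b s = 0 := by
      unfold contraction
      refine Finset.sum_eq_zero fun i _ => ?_
      rcases eq_or_ne (k (fun l : Fin m => if hl : (l : ℕ) < m - r then b ⟨(l : ℕ), hl⟩
        else i ⟨(l : ℕ) - (m - r), by have := l.isLt; omega⟩)) 0 with h0 | h0
      · exact mul_eq_zero_of_left h0 _
      · obtain ⟨tp, htp⟩ := rec2T b i h0
        exact absurd htp (hb tp)
    rw [hc]
    norm_num
  rw [Fintype.sum_prod_type]
  refine Finset.sum_congr rfl fun t' _ => ?_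
  refine Finset.sum_congr rfl fun γ _ => ?_
  refine (sum_comp_eq eS2 hS2inj _ ?_).trans ?_
  · intro b hb
    have hc : contraction n m m r k k (eT2 (t', γ)) b = 0 := by
      unfold contraction
      refine Finset.sum_eq_zero fun i _ => ?_
      rcases eq_or_ne (k (fun l : Fin m => if hl : (l : ℕ) < r then i ⟨r - 1 - (l : ℕ), by omega⟩
        else b ⟨(l : ℕ) - r, by have := l.isLt; omega⟩)) 0 with h0 | h0
      · exact mul_eq_zero_of_right _ h0
      · obtain ⟨gs, hgs⟩ := rec2S i b h0
        exact absurd hgs (hb gs)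
    rw [hc]
    norm_num
  rw [Fintype.sum_prod_type]
  have step1 : ∀ γ' s', contraction n m m r k k (eT2 (t', γ)) (eS2 (γ', s')) ^ 2
      = if γ' = γ then starContraction n d d (q + 1) f f t' γ s' ^ 2 else 0 := by
    intro γ' s'
    rw [hkey t' γ γ' s']
    by_cases hγ : γ' = γ
    · rw [if_pos hγ, if_pos hγ]
    · rw [if_neg hγ, if_neg hγ]
      norm_num
  have step2 : ∀ γ' : Fin n, (∑ s' : Fin (d - (q + 1)) → Fin n,
      contraction n m m r k k (eT2 (t', γ)) (eS2 (γ', s')) ^ 2)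
      = if γ' = γ then (∑ s' : Fin (d - (q + 1)) → Fin n,
          starContraction n d d (q + 1) f f t' γ s' ^ 2) else 0 := by
    intro γ'
    by_cases hγ : γ' = γ
    · rw [if_pos hγ]
      refine Finset.sum_congr rfl fun s' _ => ?_
      rw [step1 γ' s', if_pos hγ]
    · rw [if_neg hγ]
      refine Finset.sum_eq_zero fun s' _ => ?_
      rw [step1 γ' s', if_neg hγ]
  refine Eq.trans (Finset.sum_congr rfl fun γ' _ => step2 γ') ?_
  rw [Finset.sum_ite_eq' Finset.univ γ]
  simp

theorem stmt11 (n d : ℕ) (hd : 2 ≤ d)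
    (h : Fin d → ℕ) (hpos : ∀ l, 1 ≤ h l)
    (hpal : ∀ l : Fin d, h l = h (Fin.rev l))
    (m : ℕ) (hm : m = ∑ l, h l)
    (f : (Fin d → Fin n) → ℝ)
    (hmirror : ∀ i : Fin d → Fin n, f (i ∘ Fin.rev) = f i)
    (hdiag : ∀ i : Fin d → Fin n, ¬ Function.Injective i → f i = 0)
    (hnorm : ∑ i : Fin d → Fin n, f i ^ 2 = 1)
    -- `B` is the map sending a position in `{1,…,m}` to its (consecutive) block in `{1,…,d}`,
    -- the `l`-th block having `h l` elements
    (B : Fin m → Fin d) (hBmono : Monotone B)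
    (hBcard : ∀ q : Fin d, (Finset.univ.filter fun l => B l = q).card = h q) :
    ∀ r : ℕ, 1 ≤ r → r ≤ m - 1 →
      (∀ q : ℕ, 1 ≤ q → q ≤ d - 1 →
        r = ∑ l ∈ Finset.univ.filter (fun l : Fin d => (l : ℕ) < q), h l →
        contrNorm n m m r (lifted n d m B f) (lifted n d m B f) = contrNorm n d d q f f) ∧
      (∀ q : Fin d, ∀ t : ℕ, 1 ≤ t → t ≤ h q - 1 →
        r = (∑ l ∈ Finset.univ.filter (fun l : Fin d => (l : ℕ) < (q : ℕ)), h l) + t →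
        contrNorm n m m r (lifted n d m B f) (lifted n d m B f) =
          starNorm n d d ((q : ℕ) + 1) f f) := by
  classical
  -- the cumulative block-size function
  set C : ℕ → ℕ := fun N => ∑ p ∈ Finset.univ.filter (fun p : Fin d => (p : ℕ) < N), h p
    with hCdef
  have hCmono : Monotone C := by
    intro a b hab
    apply Finset.sum_le_sum_of_subset
    intro x hx
    simp only [Finset.mem_filter, Finset.mem_univ, true_and] at *
    omega
  have hCd : ∀ N, d ≤ N → C N = m := by
    intro N hN
    have : Finset.univ.filter (fun p : Fin d => (p : ℕ) < N) = Finset.univ := by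
      ext x
      simp only [Finset.mem_filter, Finset.mem_univ, true_and, iff_true]
      exact lt_of_lt_of_le x.isLt hN
    rw [hCdef]
    simp only [this]
    exact hm.symm
  have hCsucc : ∀ p : Fin d, C ((p : ℕ) + 1) = C (p : ℕ) + h p := by
    intro p
    have hins : Finset.univ.filter (fun l : Fin d => (l : ℕ) < (p : ℕ) + 1)
        = insert p (Finset.univ.filter (fun l : Fin d => (l : ℕ) < (p : ℕ))) := by
      ext x
      simp only [Finset.mem_filter, Finset.mem_univ, true_and, Finset.mem_insert]
      rw [Fin.ext_iff]
      omega
    rw [hCdef]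
    simp only [hins]
    rw [Finset.sum_insert (by simp)]
    omega
  have hCgap : ∀ N, N < d → C N < C (N + 1) := by
    intro N hN
    have := hCsucc ⟨N, hN⟩
    have := hpos ⟨N, hN⟩
    simp only at *
    omega
  have hCpal : ∀ N, N ≤ d → C N + C (d - N) = m := by
    intro N hN
    have h1 : C N = ∑ p ∈ Finset.univ.filter (fun p : Fin d => ¬ ((p : ℕ) < d - N)), h p := by
      rw [hCdef]
      refine Finset.sum_nbij' (fun p => Fin.rev p) (fun p => Fin.rev p) ?_ ?_ ?_ ?_ ?_
      · intro a ha
        simp only [Finset.mem_filter, Finset.mem_univ, true_and, Fin.val_rev] at *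
        have := a.isLt
        omega
      · intro a ha
        simp only [Finset.mem_filter, Finset.mem_univ, true_and, Fin.val_rev] at *
        have := a.isLt
        omega
      · intro a _; exact Fin.rev_rev a
      · intro a _; exact Fin.rev_rev a
      · intro a _; exact hpal a
    rw [h1, hCdef]
    rw [add_comm, Finset.sum_filter_add_sum_filter_not]
    exact hm.symm
  have hBlt : ∀ (N : ℕ) (l : Fin m), ((B l : ℕ) < N ↔ (l : ℕ) < C N) := by
    intro N l
    set S : Finset (Fin m) := Finset.univ.filter (fun l => ((B l : ℕ) < N)) with hSdef
    have hdc : ∀ a b : Fin m, a ≤ b → b ∈ S → a ∈ S := by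
      intro a b hab hb
      simp only [hSdef, Finset.mem_filter, Finset.mem_univ, true_and] at *
      have : (B a : ℕ) ≤ (B b : ℕ) := hBmono hab
      omega
    have hcard : S.card = C N := by
      have hun : S = (Finset.univ.filter (fun p : Fin d => (p : ℕ) < N)).biUnion
          (fun p => Finset.univ.filter (fun l => B l = p)) := by
        ext x
        simp only [hSdef, Finset.mem_filter, Finset.mem_univ, true_and, Finset.mem_biUnion]
        constructor
        · intro hx; exact ⟨B x, hx, rfl⟩
        · rintro ⟨p, hp, rfl⟩; exact hp
      rw [hun, Finset.card_biUnion]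
      · rw [hCdef]
        exact Finset.sum_congr rfl fun p _ => hBcard p
      · intro p _ p' _ hpp
        simp only [Finset.disjoint_left, Finset.mem_filter, Finset.mem_univ, true_and]
        rintro l rfl h2
        exact hpp h2
    have hmem := mem_iff_lt_card S hdc l
    rw [hcard] at hmem
    simp only [hSdef, Finset.mem_filter, Finset.mem_univ, true_and] at hmem
    exact hmem
  have hClt : ∀ N, N < d → C N < m := by
    intro N hN
    have h1 := hCgap N hN
    have h2 : C (N + 1) ≤ C d := hCmono (by omega)
    have h3 := hCd d le_rfl
    omega
  have hBfp : ∀ p : Fin d, B ⟨C (p : ℕ), hClt (p : ℕ) p.isLt⟩ = p := by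
    intro p
    have h1 := hBlt (p : ℕ) ⟨C (p : ℕ), hClt (p : ℕ) p.isLt⟩
    have h2 := hBlt ((p : ℕ) + 1) ⟨C (p : ℕ), hClt (p : ℕ) p.isLt⟩
    have h3 := hCgap (p : ℕ) p.isLt
    apply Fin.ext
    simp only at h1 h2
    omega
  have hk1 : ∀ g : Fin d → Fin n, lifted n d m B f (fun l => g (B l)) = f g := by
    intro g
    have hex : ∃ g' : Fin d → Fin n, (fun l => g (B l)) = g' ∘ B := ⟨g, rfl⟩
    rw [lifted, dif_pos hex]
    have spec := Classical.choose_spec hex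
    congr 1
    funext p
    have h2 := congrFun spec ⟨C (p : ℕ), hClt (p : ℕ) p.isLt⟩
    simp only [Function.comp_apply, hBfp p] at h2
    exact h2.symm
  have hkc : ∀ j, lifted n d m B f j ≠ 0 → ∀ l l' : Fin m, B l = B l' → j l = j l' := by
    intro j hj l l' hB
    rcases em (∃ g : Fin d → Fin n, j = g ∘ B) with ⟨g, rfl⟩ | hno
    · show g (B l) = g (B l')
      rw [hB]
    · exact absurd (by rw [lifted, dif_neg hno]) hj
  intro r _ _
  constructor
  · intro q hq1 hq2 hrq
    exact case1 hd B f _ C hBlt hCgap hCmono hCd hCpal hk1 hkc q r hq1 hq2 hrq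
  · intro q t ht1 ht2 hrt
    have hsucc := hCsucc q
    have hhq := hpos q
    have hrC : r = C (q : ℕ) + t := hrt
    refine case2 hd B f _ C hBlt hCgap hCmono hCd hCpal hk1 hkc (q : ℕ) r q.isLt
      (by omega) (by omega)
end
end

section
/- Let n ≥ 1 and 1 ≤ m ≤ n. Let X₀ be a real random variable with finite moments of all orders, set a_j = E[X₀^j] (with a₀ = 1), and let a_{j,k} (j = 2,…,m, k = 0,…,n+1) be real numbers (for instance joint moments a_{j,k} = E[X_j^k] of further random variables X₂,…,X_m). Define the polynomial p_{n,m}(x) = det M(x), where M(x) is the (n+1)×(n+1) matrix whose first row is (1, x, x², …, xⁿ), whose following n−m+1 rows are (a_k, a_{k+1}, …, a_{k+n}) for k = 0,1,…,n−m, and whose last m−1 rows are (a_{j,0}, a_{j,1}, …, a_{j,n}) for j = 2,…,m. Then: (a) E[X₀^k · p_{n,m}(X₀)] = 0 for every k = 0,1,…,n−m; (b) E[X₀^{n−m+1} · p_{n,m}(X₀)] = (−1)^{n−m+1}·det N, where N is the (n+1)×(n+1) matrix with rows (a_k, a_{k+1}, …, a_{k+n}) for k = 0,1,…,n−m+1 followed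 by the rows (a_{j,0}, …, a_{j,n}) for j = 2,…,m; in particular E[X₀^{n−m+1} · p_{n,m}(X₀)] ≠ 0 whenever det N ≠ 0. -/
open MeasureTheory ProbabilityTheory Filter
open scoped BigOperators Topology

noncomputable section

theorem stmt13 {Ω : Type*} [MeasurableSpace Ω] (P : Measure Ω) [IsProbabilityMeasure P]
    (n m : ℕ) (hm : 1 ≤ m) (hmn : m ≤ n)
    (X0 : Ω → ℝ) (hmeas : Measurable X0)
    (hmom : ∀ k : ℕ, Integrable (fun ω => X0 ω ^ k) P)
    (a : ℕ → ℝ) (ha : ∀ k, a k = ∫ ω, X0 ω ^ k ∂P)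
    (b : ℕ → ℕ → ℝ)
    (M : ℝ → Matrix (Fin (n + 1)) (Fin (n + 1)) ℝ)
    (hM : ∀ x, M x = Matrix.of fun (r c : Fin (n + 1)) =>
      if (r : ℕ) = 0 then x ^ (c : ℕ)
      else if (r : ℕ) ≤ n - m + 1 then a ((r : ℕ) - 1 + (c : ℕ))
      else b ((r : ℕ) - (n - m)) (c : ℕ))
    (Nmat : Matrix (Fin (n + 1)) (Fin (n + 1)) ℝ)
    (hN : Nmat = Matrix.of fun (r c : Fin (n + 1)) =>
      if (r : ℕ) ≤ n - m + 1 then a ((r : ℕ) + (c : ℕ))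
      else b ((r : ℕ) - (n - m)) (c : ℕ)) :
    (∀ k : ℕ, k ≤ n - m → ∫ ω, X0 ω ^ k * (M (X0 ω)).det ∂P = 0) ∧
    (∫ ω, X0 ω ^ (n - m + 1) * (M (X0 ω)).det ∂P = (-1 : ℝ) ^ (n - m + 1) * Nmat.det) ∧
    (Nmat.det ≠ 0 → (∫ ω, X0 ω ^ (n - m + 1) * (M (X0 ω)).det ∂P) ≠ 0) := by
  set K := n - m with hKdef
  -- the matrix A k: first row (a_{k}, …, a_{k+n}), other rows as in M
  set A : ℕ → Matrix (Fin (n + 1)) (Fin (n + 1)) ℝ := fun k =>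
    Matrix.of fun (r c : Fin (n + 1)) =>
      if (r : ℕ) = 0 then a (k + (c : ℕ))
      else if (r : ℕ) ≤ K + 1 then a ((r : ℕ) - 1 + (c : ℕ))
      else b ((r : ℕ) - K) (c : ℕ) with hA
  have hrow : ∀ (x : ℝ) (k : ℕ) (r c : Fin (n + 1)), (r : ℕ) ≠ 0 →
      M x r c = A k r c := by
    intro x k r c hr
    rw [hM, hA]
    simp [hr, show r ≠ 0 from fun h => hr (by rw [h]; rfl)]
  have hsub : ∀ (x : ℝ) (k : ℕ) (j : Fin (n + 1)),
      (M x).submatrix Fin.succ j.succAbove = (A k).submatrix Fin.succ j.succAbove := by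
    intro x k j
    ext i c
    exact hrow x k _ _ (by simp)
  -- cofactors
  set B : Fin (n + 1) → ℝ := fun j => ((A 0).submatrix Fin.succ j.succAbove).det with hB
  have hdetM : ∀ x : ℝ, (M x).det =
      ∑ j : Fin (n + 1), (-1 : ℝ) ^ (j : ℕ) * x ^ (j : ℕ) * B j := by
    intro x
    rw [Matrix.det_succ_row_zero]
    refine Finset.sum_congr rfl fun j _ => ?_
    rw [hsub x 0 j, hM]
    simp [hB]
  have hdetA : ∀ k : ℕ, (A k).det =
      ∑ j : Fin (n + 1), (-1 : ℝ) ^ (j : ℕ) * a (k + (j : ℕ)) * B j := by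
    intro k
    rw [Matrix.det_succ_row_zero]
    refine Finset.sum_congr rfl fun j _ => ?_
    have h2 : (A k).submatrix Fin.succ j.succAbove = (A 0).submatrix Fin.succ j.succAbove := by
      ext i c; simp [hA]
    have h0 : A k 0 j = a (k + (j : ℕ)) := by simp [hA]
    rw [h2, h0]
  have hint : ∀ k : ℕ, ∫ ω, X0 ω ^ k * (M (X0 ω)).det ∂P = (A k).det := by
    intro k
    have h1 : (fun ω => X0 ω ^ k * (M (X0 ω)).det) =
        fun ω => ∑ j : Fin (n + 1), (-1 : ℝ) ^ (j : ℕ) * X0 ω ^ (k + (j : ℕ)) * B j := by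
      ext ω
      rw [hdetM, Finset.mul_sum]
      refine Finset.sum_congr rfl fun j _ => ?_
      rw [pow_add]; ring
    rw [h1, integral_finset_sum]
    · rw [hdetA]
      refine Finset.sum_congr rfl fun j _ => ?_
      have : (fun ω => (-1 : ℝ) ^ (j : ℕ) * X0 ω ^ (k + (j : ℕ)) * B j) =
          fun ω => ((-1 : ℝ) ^ (j : ℕ)) * (X0 ω ^ (k + (j : ℕ))) * B j := rfl
      rw [this]
      rw [MeasureTheory.integral_mul_const, MeasureTheory.integral_const_mul, ← ha]
    · intro j _
      exact (((hmom (k + (j : ℕ))).const_mul _).mul_const _)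
  have part1 : ∀ k : ℕ, k ≤ n - m → ∫ ω, X0 ω ^ k * (M (X0 ω)).det ∂P = 0 := by
    intro k hk
    rw [hint k]
    have hk1 : k + 1 < n + 1 := by omega
    refine Matrix.det_zero_of_row_eq (i := (0 : Fin (n + 1))) (j := ⟨k + 1, hk1⟩) ?_ ?_
    · intro h
      have := congrArg Fin.val h
      simp at this
    · funext c
      show A k 0 c = A k ⟨k + 1, hk1⟩ c
      have h1 : ((⟨k + 1, hk1⟩ : Fin (n + 1)) : ℕ) = k + 1 := rfl
      simp only [hA, Matrix.of_apply, h1, Fin.val_zero]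
      rw [if_pos trivial, if_neg (Nat.succ_ne_zero k), if_pos (by omega)]
      norm_num
  -- part 2
  have hκ : K + 1 < n + 1 := by omega
  set κ : Fin (n + 1) := ⟨K + 1, hκ⟩ with hκdef
  have hperm : Nmat = (A (K + 1)).submatrix (Fin.cycleRange κ) id := by
    ext r c
    rcases lt_trichotomy r κ with h | h | h
    · have := Fin.cycleRange_of_lt h
      rw [Matrix.submatrix_apply, this, hN, hA, id_eq]
      have hval : ((r + 1 : Fin (n + 1)) : ℕ) = (r : ℕ) + 1 := by
        rw [Fin.val_add_one_of_lt]
        exact lt_of_lt_of_le h (Fin.le_last κ)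
      simp only [Matrix.of_apply, hval]
      have hr : (r : ℕ) < K + 1 := h
      rw [if_pos (by omega : (r : ℕ) ≤ K + 1), if_neg (by omega), if_pos (by omega)]
      simp
    · have := Fin.cycleRange_of_eq h
      rw [Matrix.submatrix_apply, this, hN, hA, id_eq]
      have hrv : (r : ℕ) = K + 1 := by rw [h]
      simp only [Matrix.of_apply, Fin.val_zero, hrv]
      simp
    · have := Fin.cycleRange_of_gt h
      rw [Matrix.submatrix_apply, this, hN, hA, id_eq]
      have hr : K + 1 < (r : ℕ) := h
      simp only [Matrix.of_apply]
      rw [if_neg (by omega), if_neg (by omega), if_neg (by omega)]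
  have hsign : ((Equiv.Perm.sign (Fin.cycleRange κ) : ℤ) : ℝ) = (-1 : ℝ) ^ (K + 1) := by
    rw [Fin.sign_cycleRange]
    push_cast [hκdef]
    norm_num
  have hdetN : Nmat.det = (-1 : ℝ) ^ (K + 1) * (A (K + 1)).det := by
    rw [hperm, Matrix.det_permute, hsign]
  have part2 : ∫ ω, X0 ω ^ (n - m + 1) * (M (X0 ω)).det ∂P
      = (-1 : ℝ) ^ (n - m + 1) * Nmat.det := by
    rw [hint (n - m + 1)]
    have : (A (n - m + 1)).det = (A (K + 1)).det := by rw [hKdef]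
    rw [this, hdetN, ← mul_assoc, ← pow_add, hKdef]
    have : (-1 : ℝ) ^ (n - m + 1 + (n - m + 1)) = 1 := by
      rw [← two_mul, pow_mul]; norm_num
    rw [this, one_mul]
  refine ⟨part1, part2, ?_⟩
  intro hNe
  rw [part2]
  intro h
  rcases mul_eq_zero.mp h with h1 | h1
  · exact absurd h1 (by positivity)
  · exact hNe h1
end
end

section
/- Let n ≥ 1 and 1 ≤ m ≤ n. Let X₀, X₁, …, X_n be independent real random variables with finite moments of all orders, such that X₀, X₁, …, X_{n−m+1} are identically distributed. Then for every k = 0, 1, …, n−m: E[X₀^k · Δ(X₁,…,X_{n−m+1}) · Δ(X₀, X₁, …, X_n)] = 0. Equivalently, the polynomial p_{n,m}(x) := E[Δ(X₁,…,X_{n−m+1}) · Δ(x, X₁, …, X_n)] (a polynomial in x of degree at most n) satisfies E[X₀^k · p_{n,m}(X₀)] = 0 for every k = 0,…,n−m. -/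
open MeasureTheory ProbabilityTheory Filter
open scoped BigOperators Topology

noncomputable section

/-- The Vandermonde product `Δ(y₀,…,y_{k-1}) = ∏_{i<j} (y_j − y_i)`. -/
def vdm {R : Type*} [CommRing R] {k : ℕ} (y : Fin k → R) : R :=
  ∏ p ∈ Finset.univ.filter (fun p : Fin k × Fin k => p.1 < p.2), (y p.2 - y p.1)

lemma vdm_eq_det {R : Type*} [CommRing R] {k : ℕ} (y : Fin k → R) :
    vdm y = (Matrix.vandermonde y).det := by
  rw [Matrix.det_vandermonde, vdm, ← Finset.univ_product_univ, Finset.prod_filter,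
    Finset.prod_product]
  refine Finset.prod_congr rfl fun i _ => ?_
  rw [← Finset.prod_filter]
  refine Finset.prod_congr ?_ fun j _ => rfl
  ext j
  simp [Finset.mem_Ioi]

lemma vdm_map {R S : Type*} [CommRing R] [CommRing S] (φ : R →+* S) {k : ℕ} (y : Fin k → R) :
    φ (vdm y) = vdm (fun i => φ (y i)) := by
  rw [vdm, vdm, map_prod]
  exact Finset.prod_congr rfl fun p _ => by rw [map_sub]

lemma vdm_comp_perm {R : Type*} [CommRing R] {k : ℕ} (y : Fin k → R) (σ : Equiv.Perm (Fin k)) :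
    vdm (y ∘ σ) = ((Equiv.Perm.sign σ : ℤ) : R) * vdm y := by
  rw [vdm_eq_det, vdm_eq_det]
  have : Matrix.vandermonde (y ∘ σ) = (Matrix.vandermonde y).submatrix σ id := by
    ext i j; simp [Matrix.vandermonde]
  rw [this, Matrix.det_permute]

lemma alg {N : ℕ} (k : ℕ) (hk : k < N) (y : Fin (N + 1) → ℝ) :
    ∑ σ : Equiv.Perm (Fin (N + 1)),
      ((Equiv.Perm.sign σ : ℤ) : ℝ) * (y (σ 0) ^ k * vdm (fun l : Fin N => y (σ l.succ))) = 0 := by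
  classical
  set e : Fin (N + 1) → ℕ := Fin.cons k Fin.val with he
  set F : Equiv.Perm (Fin (N + 1)) → ℝ :=
    fun ρ => ((Equiv.Perm.sign ρ : ℤ) : ℝ) * ∏ i, y (ρ i) ^ e i with hF
  have hterm : ∀ σ : Equiv.Perm (Fin (N + 1)),
      ((Equiv.Perm.sign σ : ℤ) : ℝ) * (y (σ 0) ^ k * vdm (fun l : Fin N => y (σ l.succ)))
      = ∑ τ : Equiv.Perm (Fin N), F (σ * Equiv.Perm.decomposeFin.symm (0, τ)) := by
    intro σ
    rw [vdm_eq_det, Matrix.det_apply', Finset.mul_sum, Finset.mul_sum]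
    refine Finset.sum_congr rfl fun τ _ => ?_
    have h0 : (σ * Equiv.Perm.decomposeFin.symm (0, τ)) 0 = σ 0 := by
      simp [Equiv.Perm.mul_apply]
    have hs : ∀ j : Fin N, (σ * Equiv.Perm.decomposeFin.symm (0, τ)) j.succ = σ (τ j).succ := by
      intro j
      simp [Equiv.Perm.mul_apply, Equiv.Perm.decomposeFin_symm_apply_succ, Equiv.swap_self]
    have hsign : ((Equiv.Perm.sign (σ * Equiv.Perm.decomposeFin.symm (0, τ)) : ℤ) : ℝ)
        = ((Equiv.Perm.sign σ : ℤ) : ℝ) * ((Equiv.Perm.sign τ : ℤ) : ℝ) := by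
      rw [map_mul]
      push_cast
      simp
    rw [hF]
    simp only [Fin.prod_univ_succ, h0, hs, he, Fin.cons_zero, Fin.cons_succ]
    simp only [Matrix.vandermonde_apply]
    rw [hsign]
    ring
  rw [Finset.sum_congr rfl (fun σ _ => hterm σ)]
  rw [Finset.sum_comm]
  have hinner : ∀ τ : Equiv.Perm (Fin N),
      ∑ σ : Equiv.Perm (Fin (N + 1)), F (σ * Equiv.Perm.decomposeFin.symm (0, τ))
      = ∑ ρ : Equiv.Perm (Fin (N + 1)), F ρ := by
    intro τ
    exact Fintype.sum_equiv (Equiv.mulRight (Equiv.Perm.decomposeFin.symm (0, τ))) _ _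
      (fun σ => rfl)
  rw [Finset.sum_congr rfl (fun τ _ => hinner τ)]
  have hdet : ∑ ρ : Equiv.Perm (Fin (N + 1)), F ρ
      = (Matrix.of fun a b : Fin (N + 1) => y a ^ e b).det := by
    rw [Matrix.det_apply']
    rfl
  have hzero : (Matrix.of fun a b : Fin (N + 1) => y a ^ e b).det = 0 := by
    refine Matrix.det_zero_of_column_eq (i := 0) (j := ⟨k + 1, by omega⟩) ?_ ?_
    · exact Fin.ne_of_val_ne (by simp)
    · intro a
      have h1 : e 0 = k := rfl
      have h2 : e ⟨k + 1, by omega⟩ = k := by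
        have : (⟨k + 1, by omega⟩ : Fin (N + 1)) = Fin.succ ⟨k, hk⟩ := rfl
        rw [this, he, Fin.cons_succ]
      simp [h1, h2]
  rw [hdet, hzero]
  simp

def emb {a b : ℕ} (h : a ≤ b) : Fin a ≃ {i : Fin b // (i : ℕ) < a} where
  toFun l := ⟨⟨l, lt_of_lt_of_le l.isLt h⟩, l.isLt⟩
  invFun i := ⟨(i.1 : ℕ), i.2⟩
  left_inv l := rfl
  right_inv i := by ext; rfl

def pext {a b : ℕ} (h : a ≤ b) (σ : Equiv.Perm (Fin a)) : Equiv.Perm (Fin b) :=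
  σ.extendDomain (emb h)

lemma pext_apply_lt {a b : ℕ} (h : a ≤ b) (σ : Equiv.Perm (Fin a)) (l : Fin a) :
    pext h σ ⟨(l : ℕ), lt_of_lt_of_le l.isLt h⟩ = ⟨(σ l : ℕ), lt_of_lt_of_le (σ l).isLt h⟩ := by
  rw [pext, Equiv.Perm.extendDomain_apply_subtype σ (emb h) (b := ⟨(l : ℕ), _⟩) l.isLt]
  rfl

lemma pext_sign {a b : ℕ} (h : a ≤ b) (σ : Equiv.Perm (Fin a)) :
    Equiv.Perm.sign (pext h σ) = Equiv.Perm.sign σ :=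
  Equiv.Perm.sign_extendDomain σ (emb h)

lemma point {n q : ℕ} (hq : q + 1 ≤ n + 1) (k : ℕ) (hk : k < q) (z : Fin (n + 1) → ℝ)
    (f : (Fin (n + 1) → ℝ) → ℝ)
    (hf : ∀ w, f w = w 0 ^ k *
      vdm (fun l : Fin q => w ⟨(l : ℕ) + 1, by have := l.isLt; omega⟩) * vdm w) :
    ∑ σ : Equiv.Perm (Fin (q + 1)), f (z ∘ (pext hq σ)) = 0 := by
  classical
  set y : Fin (q + 1) → ℝ := fun l => z ⟨(l : ℕ), lt_of_lt_of_le l.isLt hq⟩ with hy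
  have key : ∀ σ : Equiv.Perm (Fin (q + 1)), f (z ∘ (pext hq σ)) =
      (((Equiv.Perm.sign σ : ℤ) : ℝ) * (y (σ 0) ^ k *
        vdm (fun l : Fin q => y (σ l.succ)))) * vdm z := by
    intro σ
    rw [hf]
    have h0 : (z ∘ (pext hq σ)) 0 = y (σ 0) := by
      have : (0 : Fin (n + 1)) = ⟨((0 : Fin (q + 1)) : ℕ), lt_of_lt_of_le (0 : Fin (q+1)).isLt hq⟩ := by
        ext; simp
      rw [Function.comp_apply, this, pext_apply_lt]
    have h1 : ∀ l : Fin q, (z ∘ (pext hq σ)) ⟨(l : ℕ) + 1, by have := l.isLt; omega⟩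
        = y (σ l.succ) := by
      intro l
      have : (⟨(l : ℕ) + 1, by have := l.isLt; omega⟩ : Fin (n + 1))
          = ⟨((l.succ : Fin (q + 1)) : ℕ), lt_of_lt_of_le (l.succ : Fin (q+1)).isLt hq⟩ := rfl
      rw [Function.comp_apply, this, pext_apply_lt]
    have h2 : vdm (z ∘ (pext hq σ)) = ((Equiv.Perm.sign σ : ℤ) : ℝ) * vdm z := by
      rw [vdm_comp_perm z (pext hq σ), pext_sign]
    rw [h0, h2]
    have h1' : (fun l : Fin q => (z ∘ (pext hq σ)) ⟨(l : ℕ) + 1, by have := l.isLt; omega⟩)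
        = fun l : Fin q => y (σ l.succ) := funext h1
    rw [h1']
    ring
  rw [Finset.sum_congr rfl (fun σ _ => key σ), ← Finset.sum_mul, alg k hk y, zero_mul]

lemma map_pi_of_indep {Ω : Type*} [MeasurableSpace Ω] (P : Measure Ω) [IsProbabilityMeasure P]
    {N : ℕ} (Y : Fin N → Ω → ℝ) (hY : ∀ i, Measurable (Y i))
    (h : iIndepFun Y P) :
    P.map (fun ω i => Y i ω) = Measure.pi (fun i => P.map (Y i)) := by
  haveI : ∀ i, IsProbabilityMeasure (P.map (Y i)) :=
    fun i => Measure.isProbabilityMeasure_map (hY i).aemeasurable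
  refine (Measure.pi_eq (μ := fun i => P.map (Y i)) fun s hs => ?_).symm
  rw [Measure.map_apply (measurable_pi_lambda _ hY) (MeasurableSet.univ_pi hs)]
  have hpre : (fun ω i => Y i ω) ⁻¹' Set.pi Set.univ s = ⋂ i ∈ Finset.univ, Y i ⁻¹' s i := by
    ext ω; simp [Set.mem_pi]
  rw [hpre, h.measure_inter_preimage_eq_mul Finset.univ (fun i _ => hs i)]
  exact Finset.prod_congr rfl fun i _ =>
    (Measure.map_apply (hY i) (hs i)).symm

lemma integrable_pi_prod : ∀ (N : ℕ) (ν : Fin N → Measure ℝ),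
    (∀ i, IsProbabilityMeasure (ν i)) → ∀ (g : Fin N → ℝ → ℝ),
    (∀ i, Integrable (g i) (ν i)) →
    Integrable (fun z : Fin N → ℝ => ∏ i, g i (z i)) (Measure.pi ν) := by
  intro N
  induction N with
  | zero =>
      intro ν hν g hg
      haveI := hν
      simpa using (integrable_const (1 : ℝ) : Integrable _ (Measure.pi ν))
  | succ N ih =>
      intro ν hν g hg
      haveI := hν
      have mp := (measurePreserving_piFinSuccAbove ν 0).symm
      rw [← mp.integrable_comp_emb (MeasurableEquiv.measurableEmbedding _)]
      simp_rw [MeasurableEquiv.piFinSuccAbove_symm_apply, Fin.insertNthEquiv,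
        Fin.prod_univ_succ, Fin.insertNth_zero]
      simp only [Fin.zero_succAbove, Function.comp_def, Fin.cons_zero, Fin.cons_succ,
        Equiv.coe_fn_mk]
      exact Integrable.mul_prod (hg 0)
        (ih (fun i => ν i.succ) (fun i => inferInstance) (fun i => g i.succ) (fun i => hg _))

lemma integrable_eval {N : ℕ} (ν : Fin N → Measure ℝ) [inst : ∀ i, IsProbabilityMeasure (ν i)]
    (hmom : ∀ i (k : ℕ), Integrable (fun t : ℝ => t ^ k) (ν i)) (F : MvPolynomial (Fin N) ℝ) :
    Integrable (fun z => MvPolynomial.eval z F) (Measure.pi ν) := by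
  classical
  have hrw : (fun z => MvPolynomial.eval z F)
      = fun z : Fin N → ℝ => ∑ d ∈ F.support, MvPolynomial.coeff d F * ∏ i, z i ^ d i := by
    funext z
    rw [MvPolynomial.eval_eq']
  rw [hrw]
  exact integrable_finset_sum _ (fun d _ => ((integrable_pi_prod N ν inst
    (fun i t => t ^ d i) (fun i => hmom i (d i))).const_mul _))

lemma vdm_measurable {k : ℕ} : Measurable (fun z : Fin k → ℝ => vdm z) := by
  rw [show (fun z : Fin k → ℝ => vdm z) = fun z => ∏ p ∈ Finset.univ.filter
      (fun p : Fin k × Fin k => p.1 < p.2), (z p.2 - z p.1) from rfl]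
  exact Finset.measurable_prod _ fun p _ => (measurable_pi_apply _).sub (measurable_pi_apply _)

set_option maxHeartbeats 1000000 in
theorem stmt14 {Ω : Type*} [MeasurableSpace Ω] (P : Measure Ω) [IsProbabilityMeasure P]
    (n m : ℕ) (hm : 1 ≤ m) (hmn : m ≤ n)
    (X : Fin (n + 1) → Ω → ℝ) (hmeas : ∀ i, Measurable (X i))
    (hindep : iIndepFun X P)
    (hmom : ∀ i (k : ℕ), Integrable (fun ω => X i ω ^ k) P)
    (hid : ∀ i : Fin (n + 1), (i : ℕ) ≤ n - m + 1 → IdentDistrib (X i) (X 0) P P)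
    (p : ℝ → ℝ)
    (hp : ∀ x, p x = ∫ ω,
        vdm (fun l : Fin (n - m + 1) => X ⟨(l : ℕ) + 1, by have := l.isLt; omega⟩ ω) *
          vdm (Fin.cons x (fun l : Fin n => X l.succ ω)) ∂P) :
    (∀ k : ℕ, k ≤ n - m →
      ∫ ω, X 0 ω ^ k *
          vdm (fun l : Fin (n - m + 1) => X ⟨(l : ℕ) + 1, by have := l.isLt; omega⟩ ω) *
          vdm (fun l : Fin (n + 1) => X l ω) ∂P = 0) ∧
    (∀ k : ℕ, k ≤ n - m → ∫ ω, X 0 ω ^ k * p (X 0 ω) ∂P = 0) := by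
  classical
  have hq1 : n - m + 1 + 1 ≤ n + 1 := by omega
  set ν : Fin (n + 1) → Measure ℝ := fun i => P.map (X i) with hνdef
  haveI hprob : ∀ i, IsProbabilityMeasure (ν i) :=
    fun i => Measure.isProbabilityMeasure_map (hmeas i).aemeasurable
  have hν : ∀ i : Fin (n + 1), (i : ℕ) ≤ n - m + 1 → ν i = ν 0 := fun i hi => (hid i hi).map_eq
  have hmomν : ∀ i (k : ℕ), Integrable (fun t : ℝ => t ^ k) (ν i) := by
    intro i k
    have hg : AEStronglyMeasurable (fun t : ℝ => t ^ k) (P.map (X i)) :=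
      (measurable_id.pow_const k).aestronglyMeasurable
    exact (integrable_map_measure hg (hmeas i).aemeasurable).mpr (hmom i k)
  have hT : Measurable (fun ω (i : Fin (n + 1)) => X i ω) := measurable_pi_lambda _ hmeas
  have hmap : P.map (fun ω i => X i ω) = Measure.pi ν := map_pi_of_indep P X hmeas hindep
  set f : ℕ → (Fin (n + 1) → ℝ) → ℝ := fun k z =>
    z 0 ^ k * vdm (fun l : Fin (n - m + 1) => z ⟨(l : ℕ) + 1, by have := l.isLt; omega⟩) * vdm z
    with hfdef
  have hfm : ∀ k, Measurable (f k) := by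
    intro k
    refine Measurable.mul (Measurable.mul ?_ ?_) vdm_measurable
    · exact (measurable_pi_apply 0).pow_const k
    · exact vdm_measurable.comp (measurable_pi_lambda
        (fun (z : Fin (n + 1) → ℝ) (l : Fin (n - m + 1)) =>
          z ⟨(l : ℕ) + 1, by have := l.isLt; omega⟩)
        (fun l => measurable_pi_apply _))
  have hfint : ∀ k, Integrable (f k) (Measure.pi ν) := by
    intro k
    have heq : f k = fun z => MvPolynomial.eval z
        ((MvPolynomial.X 0) ^ k *
          vdm (fun l : Fin (n - m + 1) =>
            (MvPolynomial.X ⟨(l : ℕ) + 1, by have := l.isLt; omega⟩ :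
              MvPolynomial (Fin (n + 1)) ℝ)) *
          vdm (fun i : Fin (n + 1) => (MvPolynomial.X i : MvPolynomial (Fin (n + 1)) ℝ))) := by
      funext z
      rw [map_mul, map_mul, map_pow, MvPolynomial.eval_X,
        vdm_map (MvPolynomial.eval z), vdm_map (MvPolynomial.eval z)]
      simp only [MvPolynomial.eval_X, hfdef]
    rw [heq]
    exact integrable_eval ν hmomν _
  have main : ∀ k : ℕ, k ≤ n - m → ∫ z, f k z ∂(Measure.pi ν) = 0 := by
    intro k hk
    have hkq : k < n - m + 1 := by omega
    have hνπ : ∀ σ : Equiv.Perm (Fin (n - m + 1 + 1)),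
        (fun i => ν ((pext hq1 σ) i)) = ν := by
      intro σ; funext i
      by_cases hi : (i : ℕ) < n - m + 1 + 1
      · have h1 : (((pext hq1 σ) i : Fin (n + 1)) : ℕ) ≤ n - m + 1 := by
          have h2 : (((pext hq1 σ) i : Fin (n + 1)) : ℕ) < n - m + 1 + 1 := by
            rw [pext, Equiv.Perm.extendDomain_apply_subtype σ (emb hq1) hi]
            exact (σ ((emb hq1).symm ⟨i, hi⟩)).isLt
          omega
        rw [hν _ h1, hν i (by omega)]
      · rw [pext, Equiv.Perm.extendDomain_apply_not_subtype σ (emb hq1) hi]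
    have hpres : ∀ σ : Equiv.Perm (Fin (n - m + 1 + 1)), MeasurePreserving
        (MeasurableEquiv.piCongrLeft (fun _ : Fin (n + 1) => ℝ) (pext hq1 σ))
        (Measure.pi ν) (Measure.pi ν) := by
      intro σ
      have h0 := measurePreserving_piCongrLeft (μ := ν) (pext hq1 σ)
      rwa [hνπ σ] at h0
    have hcompeq : ∀ (σ : Equiv.Perm (Fin (n - m + 1 + 1))) (z : Fin (n + 1) → ℝ),
        (MeasurableEquiv.piCongrLeft (fun _ : Fin (n + 1) => ℝ) (pext hq1 σ)) z
          = z ∘ ⇑(pext hq1 σ⁻¹) := by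
      intro σ z
      funext i
      have : i = (pext hq1 σ) ((pext hq1 σ).symm i) := ((pext hq1 σ).apply_symm_apply i).symm
      rw [MeasurableEquiv.coe_piCongrLeft, this, Equiv.piCongrLeft_apply_apply]
      have hsymm : (pext hq1 σ).symm = pext hq1 σ⁻¹ := by
        rw [pext, pext, ← Equiv.Perm.extendDomain_inv]; rfl
      rw [Function.comp_apply, ← hsymm]
      rw [← this]
    have hzero : ∀ z : Fin (n + 1) → ℝ,
        ∑ σ : Equiv.Perm (Fin (n - m + 1 + 1)),
          f k ((MeasurableEquiv.piCongrLeft (fun _ : Fin (n + 1) => ℝ) (pext hq1 σ)) z) = 0 := by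
      intro z
      have h1 : ∀ σ : Equiv.Perm (Fin (n - m + 1 + 1)),
          f k ((MeasurableEquiv.piCongrLeft (fun _ : Fin (n + 1) => ℝ) (pext hq1 σ)) z)
            = f k (z ∘ ⇑(pext hq1 σ⁻¹)) := fun σ => by rw [hcompeq σ z]
      rw [Finset.sum_congr rfl (fun σ _ => h1 σ)]
      have h2 := Fintype.sum_equiv (Equiv.inv (Equiv.Perm (Fin (n - m + 1 + 1))))
        (fun σ => f k (z ∘ ⇑(pext hq1 σ⁻¹))) (fun σ => f k (z ∘ ⇑(pext hq1 σ)))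
        (fun σ => rfl)
      rw [h2]
      exact point hq1 k hkq z (f k) (fun w => rfl)
    have hintσ : ∀ σ : Equiv.Perm (Fin (n - m + 1 + 1)), Integrable
        (fun z => f k ((MeasurableEquiv.piCongrLeft (fun _ : Fin (n + 1) => ℝ) (pext hq1 σ)) z))
        (Measure.pi ν) := by
      intro σ
      exact ((hpres σ).integrable_comp_emb (MeasurableEquiv.measurableEmbedding _)).mpr (hfint k)
    have hsum2 : ∑ σ : Equiv.Perm (Fin (n - m + 1 + 1)), ∫ z,
        f k ((MeasurableEquiv.piCongrLeft (fun _ : Fin (n + 1) => ℝ) (pext hq1 σ)) z)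
          ∂(Measure.pi ν) = 0 := by
      rw [← integral_finset_sum _ (fun σ _ => hintσ σ)]
      have : (fun z => ∑ σ : Equiv.Perm (Fin (n - m + 1 + 1)),
          f k ((MeasurableEquiv.piCongrLeft (fun _ : Fin (n + 1) => ℝ) (pext hq1 σ)) z))
          = fun _ => (0 : ℝ) := funext hzero
      rw [this, integral_zero]
    have hsum3 : ∀ σ : Equiv.Perm (Fin (n - m + 1 + 1)), ∫ z,
        f k ((MeasurableEquiv.piCongrLeft (fun _ : Fin (n + 1) => ℝ) (pext hq1 σ)) z)
          ∂(Measure.pi ν) = ∫ z, f k z ∂(Measure.pi ν) :=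
      fun σ => (hpres σ).integral_comp (MeasurableEquiv.measurableEmbedding _) _
    rw [Finset.sum_congr rfl (fun σ _ => hsum3 σ), Finset.sum_const, Finset.card_univ,
      nsmul_eq_mul] at hsum2
    rcases mul_eq_zero.mp hsum2 with h | h
    · exact absurd h (by
        exact_mod_cast Fintype.card_ne_zero)
    · exact h
  constructor
  · intro k hk
    have h1 : ∫ ω, X 0 ω ^ k *
        vdm (fun l : Fin (n - m + 1) => X ⟨(l : ℕ) + 1, by have := l.isLt; omega⟩ ω) *
        vdm (fun l : Fin (n + 1) => X l ω) ∂P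
        = ∫ z, f k z ∂(P.map (fun ω i => X i ω)) := by
      rw [integral_map hT.aemeasurable (hfm k).aestronglyMeasurable]
    rw [h1, hmap]
    exact main k hk
  · intro k hk
    set ν' : Fin n → Measure ℝ := fun l => ν l.succ with hν'def
    haveI : ∀ l, IsProbabilityMeasure (ν' l) := fun l => hprob _
    set T' : Ω → (Fin n → ℝ) := fun ω l => X l.succ ω with hT'def
    have hT' : Measurable T' := measurable_pi_lambda _ (fun l => hmeas _)
    set h : ℝ → (Fin n → ℝ) → ℝ := fun t w =>
      vdm (fun l : Fin (n - m + 1) => w ⟨(l : ℕ), by have := l.isLt; omega⟩) *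
        vdm (Fin.cons t w) with hhdef
    have hH : Measurable (fun tw : ℝ × (Fin n → ℝ) => h tw.1 tw.2) := by
      refine Measurable.mul ?_ ?_
      · exact (vdm_measurable.comp (measurable_pi_lambda
          (fun (w : Fin n → ℝ) (l : Fin (n - m + 1)) =>
            w ⟨(l : ℕ), by have := l.isLt; omega⟩)
          (fun l => measurable_pi_apply _))).comp measurable_snd
      · refine vdm_measurable.comp (measurable_pi_iff.mpr ?_)
        intro i
        refine Fin.cases ?_ ?_ i
        · simpa using measurable_fst
        · intro j
          simpa [Function.comp_def] using (measurable_pi_apply j).comp measurable_snd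
    have htail : Measurable (fun z : Fin (n + 1) → ℝ => fun l : Fin n => z l.succ) :=
      measurable_pi_lambda _ (fun l => measurable_pi_apply _)
    have hmap' : P.map T' = Measure.pi ν' := by
      have hcompT : T' = (fun z : Fin (n + 1) → ℝ => fun l : Fin n => z l.succ) ∘
          (fun ω i => X i ω) := rfl
      rw [hcompT, ← Measure.map_map htail hT, hmap]
      have mp := measurePreserving_piFinSuccAbove ν 0
      have hsnd : (fun z : Fin (n + 1) → ℝ => fun l : Fin n => z l.succ)
          = Prod.snd ∘ (MeasurableEquiv.piFinSuccAbove (fun _ : Fin (n + 1) => ℝ) 0) := rfl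
      rw [hsnd, ← Measure.map_map measurable_snd (MeasurableEquiv.measurable _), mp.map_eq]
      have hνs : (fun j : Fin n => ν ((0 : Fin (n + 1)).succAbove j)) = ν' := rfl
      rw [hνs, Measure.map_snd_prod]
      simp
    have hpA : ∀ t, p t = ∫ w, h t w ∂(Measure.pi ν') := by
      intro t
      have hht : AEStronglyMeasurable (fun w => h t w) (P.map T') :=
        (hH.comp measurable_prodMk_left).aestronglyMeasurable
      rw [hp t, ← hmap', integral_map hT'.aemeasurable hht]
      rfl
    have hpm : Measurable p := by
      have : p = fun t => ∫ w, h t w ∂(Measure.pi ν') := funext hpA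
      rw [this]
      exact (hH.stronglyMeasurable.integral_prod_right').measurable
    set g : ℝ × (Fin n → ℝ) → ℝ := fun tw => tw.1 ^ k * h tw.1 tw.2 with hgdef
    set e := MeasurableEquiv.piFinSuccAbove (fun _ : Fin (n + 1) => ℝ) 0 with hedef
    have mp := measurePreserving_piFinSuccAbove ν 0
    have hge : ∀ z : Fin (n + 1) → ℝ, g (e z) = f k z := by
      intro z
      show (z 0) ^ k * (vdm (fun l : Fin (n - m + 1) =>
          z ⟨(l : ℕ) + 1, by have := l.isLt; omega⟩) *
          vdm (Fin.cons (z 0) (Fin.tail z))) = f k z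
      rw [Fin.cons_self_tail]
      rw [hfdef]
      ring
    have hgcomp : (fun z => g (e z)) = f k := funext hge
    have hGint : Integrable g ((ν 0).prod (Measure.pi ν')) := by
      have h1 := (mp.integrable_comp_emb (MeasurableEquiv.measurableEmbedding _)).mp
        (show Integrable (g ∘ ⇑e) (Measure.pi ν) by
          rw [show (g ∘ ⇑e) = f k from funext hge]
          exact hfint k)
      exact h1
    calc ∫ ω, X 0 ω ^ k * p (X 0 ω) ∂P
        = ∫ t, t ^ k * p t ∂(ν 0) := by
          have hsm : AEStronglyMeasurable (fun t : ℝ => t ^ k * p t) (P.map (X 0)) :=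
            ((measurable_id.pow_const k).mul hpm).aestronglyMeasurable
          rw [show ν 0 = P.map (X 0) from rfl, integral_map (hmeas 0).aemeasurable hsm]
      _ = ∫ t, ∫ w, t ^ k * h t w ∂(Measure.pi ν') ∂(ν 0) := by
          refine integral_congr_ae (Filter.EventuallyEq.of_eq (funext fun t => ?_))
          rw [hpA t, ← integral_const_mul]
      _ = ∫ tw : ℝ × (Fin n → ℝ), tw.1 ^ k * h tw.1 tw.2 ∂((ν 0).prod (Measure.pi ν')) :=
          integral_integral hGint
      _ = ∫ z, f k z ∂(Measure.pi ν) := by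
          have mp2 : MeasurePreserving (⇑e) (Measure.pi ν) ((ν 0).prod (Measure.pi ν')) := mp
          show (∫ tw : ℝ × (Fin n → ℝ), g tw ∂((ν 0).prod (Measure.pi ν'))) = _
          rw [← mp2.integral_comp' (g := g)]
          exact integral_congr_ae (Filter.EventuallyEq.of_eq (funext hge))
      _ = 0 := main k hk
end
end

section
/- Let d ≥ 0 and let n, m ∈ ℕ^{d+1} be multi-indices with 0 < m and m ≤ n componentwise. Set s = s(n) − 1 and r = s(n−m) − 1, and fix enumerations {k ∈ ℕ^{d+1} : 0 ≤ k ≤ n} = {k₀ = 0, k₁, …, k_s = n} and {h ∈ ℕ^{d+1} : 0 ≤ h ≤ n−m} = {h₀ = 0, h₁, …, h_r = n−m}. Let X₀ be an ℝ^{d+1}-valued random vector with finite joint moments of all orders, set a_k = E[X₀^k] for each multi-index k, and let a_{j,k} be real numbers for j = 2,…,s−r and multi-indices k (for instance joint moments of further random vectors). Define p_{n,m}(x), for x ∈ ℝ^{d+1}, as the determinant of the (s+1)×(s+1) matrix whose first row is (1, x^{k₁}, x^{k₂}, …, x^{k_s}), whose next r+1 rows are (a_{h_i}, a_{k₁+h_i},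 a_{k₂+h_i}, …, a_{k_s+h_i}) for i = 0, 1, …, r, and whose last s−r−1 rows are (a_{j,k₀}, a_{j,k₁}, …, a_{j,k_s}) for j = 2,…,s−r. Then E[X₀^k · p_{n,m}(X₀)] = 0 for every multi-index k with 0 ≤ k ≤ n − m. -/
open MeasureTheory ProbabilityTheory Filter
open scoped BigOperators Topology

noncomputable section

/-- `s(n) = ∏_j (n_j + 1)`, the number of multi-indices `k` with `0 ≤ k ≤ n`. -/
def sCard (d : ℕ) (n : Fin (d + 1) → ℕ) : ℕ := ∏ j, (n j + 1)

theorem stmt15 {Ω : Type*} [MeasurableSpace Ω] (P : Measure Ω) [IsProbabilityMeasure P]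
    (d : ℕ) (n m : Fin (d + 1) → ℕ) (hm0 : m ≠ 0) (hmn : m ≤ n)
    (X0 : Ω → Fin (d + 1) → ℝ) (hmeas : Measurable X0)
    (hmom : ∀ k : Fin (d + 1) → ℕ, Integrable (fun ω => ∏ j, X0 ω j ^ k j) P)
    (a : (Fin (d + 1) → ℕ) → ℝ) (ha : ∀ k, a k = ∫ ω, ∏ j, X0 ω j ^ k j ∂P)
    (b : ℕ → (Fin (d + 1) → ℕ) → ℝ)
    (hs : 0 < sCard d n) (hr : 0 < sCard d (n - m))
    -- an enumeration `k₀ = 0, k₁, …, k_s = n` of the multi-indices `≤ n`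
    (K : Fin (sCard d n) → Fin (d + 1) → ℕ)
    (hK1 : ∀ i, K i ≤ n) (hK2 : Function.Injective K)
    (hK3 : ∀ k : Fin (d + 1) → ℕ, k ≤ n → ∃ i, K i = k)
    (hK0 : K ⟨0, hs⟩ = 0) (hKlast : K ⟨sCard d n - 1, by omega⟩ = n)
    -- an enumeration `h₀ = 0, h₁, …, h_r = n − m` of the multi-indices `≤ n − m`
    (H : Fin (sCard d (n - m)) → Fin (d + 1) → ℕ)
    (hH1 : ∀ i, H i ≤ n - m) (hH2 : Function.Injective H)
    (hH3 : ∀ k : Fin (d + 1) → ℕ, k ≤ n - m → ∃ i, H i = k)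
    (hH0 : H ⟨0, hr⟩ = 0) (hHlast : H ⟨sCard d (n - m) - 1, by omega⟩ = n - m)
    -- the matrix `M(x)`: first row `(1, x^{k₁}, …, x^{k_s})`, then the rows
    -- `(a_{k_c + h_i})_c` for `i = 0,…,r`, then the rows `(b_{j, k_c})_c` for `j = 2,…,s−r`
    (M : (Fin (d + 1) → ℝ) → Matrix (Fin (sCard d n)) (Fin (sCard d n)) ℝ)
    (hM : ∀ x, M x = Matrix.of fun (r' c : Fin (sCard d n)) =>
      if h0 : (r' : ℕ) = 0 then ∏ j, x j ^ K c j
      else if hle : (r' : ℕ) ≤ sCard d (n - m) then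
        a (K c + H ⟨(r' : ℕ) - 1, by omega⟩)
      else b ((r' : ℕ) - sCard d (n - m) + 1) (K c)) :
    ∀ k : Fin (d + 1) → ℕ, k ≤ n - m →
      ∫ ω, (∏ j, X0 ω j ^ k j) * (M (X0 ω)).det ∂P = 0 := by
  classical
  intro k hk
  haveI : NeZero (sCard d n) := ⟨hs.ne'⟩
  obtain ⟨i0, hi0⟩ := hH3 k hk
  -- r < s
  have hrs : sCard d (n - m) < sCard d n := by
    obtain ⟨j0, hj0⟩ : ∃ j, m j ≠ 0 := by
      by_contra h; push_neg at h; exact hm0 (funext fun j => h j)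
    have h1 : ∀ j, (n - m) j = n j - m j := fun _ => rfl
    have hstrict : (n - m) j0 + 1 < n j0 + 1 := by
      have a1 : m j0 ≤ n j0 := hmn j0
      rw [h1 j0]; omega
    exact Finset.prod_lt_prod (f := fun j => (n - m) j + 1) (g := fun j => n j + 1)
      (fun j _ => by positivity)
      (fun j _ => by
        show (n - m) j + 1 ≤ n j + 1
        have a1 : m j ≤ n j := hmn j
        rw [h1 j]; omega)
      ⟨j0, Finset.mem_univ _, hstrict⟩
  have hval0 : ((0 : Fin (sCard d n)) : ℕ) = 0 := Fin.val_zero _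
  -- the constant matrix A (the integrated matrix)
  set A : Matrix (Fin (sCard d n)) (Fin (sCard d n)) ℝ :=
    Matrix.of fun r' c =>
      if (r' : ℕ) = 0 then a (k + K c)
      else (M 0) r' c with hA
  have hAne : ∀ (r' : Fin (sCard d n)), (r' : ℕ) ≠ 0 → ∀ x c, M x r' c = A r' c := by
    intro r' h x c
    rw [hA]
    simp only [Matrix.of_apply, if_neg h, hM]
    simp only [Matrix.of_apply, dif_neg h]
  have hA0 : ∀ c, A 0 c = a (k + K c) := by
    intro c
    simp [hA, hval0]
  -- pointwise Leibniz expansion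
  have key : ∀ x : Fin (d + 1) → ℝ, (∏ j, x j ^ k j) * (M x).det
      = ∑ σ : Equiv.Perm (Fin (sCard d n)), (Equiv.Perm.sign σ : ℝ) *
          ((∏ j, x j ^ ((k + K (σ⁻¹ 0)) j)) *
            ∏ i ∈ Finset.univ.erase (σ⁻¹ 0), A (σ i) i) := by
    intro x
    rw [Matrix.det_apply, Finset.mul_sum]
    refine Finset.sum_congr rfl fun σ _ => ?_
    have hσ0 : σ (σ⁻¹ 0) = 0 := Equiv.apply_symm_apply σ 0
    rw [← Finset.mul_prod_erase Finset.univ _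
      (Finset.mem_univ (σ⁻¹ (0 : Fin (sCard d n))))]
    have h1 : M x (σ (σ⁻¹ 0)) (σ⁻¹ 0) = ∏ j, x j ^ K (σ⁻¹ 0) j := by
      rw [hσ0, hM]
      simp [hval0]
    have h2 : ∀ i ∈ Finset.univ.erase (σ⁻¹ (0 : Fin (sCard d n))),
        M x (σ i) i = A (σ i) i := by
      intro i hi
      have hne : σ i ≠ 0 := by
        intro h
        exact (Finset.mem_erase.1 hi).1 (σ.injective (by rw [h, hσ0]))
      exact hAne _ (fun hv => hne (Fin.ext (by rw [hv, hval0]))) x i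
    have h3 : ∏ j, x j ^ ((k + K (σ⁻¹ (0 : Fin (sCard d n)))) j)
        = (∏ j, x j ^ k j) * ∏ j, x j ^ K (σ⁻¹ 0) j := by
      rw [← Finset.prod_mul_distrib]
      exact Finset.prod_congr rfl fun j _ => by rw [Pi.add_apply, pow_add]
    rw [h1, Finset.prod_congr rfl h2, Units.smul_def, zsmul_eq_mul, h3]
    ring
  -- integrate
  have hintA : ∫ ω, (∏ j, X0 ω j ^ k j) * (M (X0 ω)).det ∂P = A.det := by
    simp_rw [key]
    rw [integral_finset_sum _ (fun σ _ =>
      (((hmom (k + K (σ⁻¹ 0))).mul_const _).const_mul _))]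
    rw [Matrix.det_apply]
    refine Finset.sum_congr rfl fun σ _ => ?_
    rw [integral_const_mul, integral_mul_const, ← ha]
    have hσ0 : σ (σ⁻¹ 0) = 0 := Equiv.apply_symm_apply σ 0
    rw [← Finset.mul_prod_erase Finset.univ _
      (Finset.mem_univ (σ⁻¹ (0 : Fin (sCard d n)))), hσ0, hA0, Units.smul_def, zsmul_eq_mul]
  rw [hintA]
  -- A has two equal rows: row 0 and row i0+1
  have hi0lt : (i0 : ℕ) + 1 < sCard d n := by
    have := i0.isLt; omega
  refine Matrix.det_zero_of_row_eq (i := 0) (j := ⟨(i0 : ℕ) + 1, hi0lt⟩) ?_ ?_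
  · intro h
    have : (0 : ℕ) = (i0 : ℕ) + 1 := by
      rw [← hval0]; exact congrArg Fin.val h
    omega
  · funext c
    rw [hA0]
    have h1 : ((⟨(i0 : ℕ) + 1, hi0lt⟩ : Fin (sCard d n)) : ℕ) ≠ 0 := by simp
    have h2 : ((⟨(i0 : ℕ) + 1, hi0lt⟩ : Fin (sCard d n)) : ℕ) ≤ sCard d (n - m) :=
      i0.isLt
    rw [hA]
    simp only [Matrix.of_apply, if_neg h1, hM, dif_neg h1, dif_pos h2]
    have h3 : (⟨((⟨(i0 : ℕ) + 1, hi0lt⟩ : Fin (sCard d n)) : ℕ) - 1, by omega⟩ :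
        Fin (sCard d (n - m))) = i0 := by
      apply Fin.ext; simp
    rw [h3, hi0, add_comm]
end
end

section
/- Let X₁,…,X_N be i.i.d. real random variables with finite moments of all orders, and set a_j = E[X₁^j]. Suppose there exist ζ₁,…,ζ_n, c₁,…,c_n ∈ ℂ such that a_j = ∑_{i=1}^n c_i·ζ_i^j for every j = 0, 1, …, 2n−1. Then for every integer k ≥ 1 with 2k(N−1) ≤ 2n−1: E[Δ(X₁,…,X_N)^{2k}] = ∑_{(i₁,…,i_N) ∈ {1,…,n}^N} c_{i₁}·c_{i₂}⋯c_{i_N} · Δ(ζ_{i₁}, ζ_{i₂}, …, ζ_{i_N})^{2k}. -/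
open MeasureTheory ProbabilityTheory Filter
open scoped BigOperators Topology

noncomputable section

lemma aux_eval {R : Type*} [CommRing R] {N kk : ℕ} (f : Fin N → R) :
    MvPolynomial.eval f (∏ p ∈ Finset.univ.filter (fun p : Fin N × Fin N => p.1 < p.2),
      (MvPolynomial.X p.2 - MvPolynomial.X p.1) ^ kk) = vdm f ^ kk := by
  rw [map_prod]
  simp only [map_pow, map_sub, MvPolynomial.eval_X]
  rw [Finset.prod_pow, vdm]

lemma aux_map {N kk : ℕ} :
    MvPolynomial.map (algebraMap ℝ ℂ)
      (∏ p ∈ Finset.univ.filter (fun p : Fin N × Fin N => p.1 < p.2),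
        (MvPolynomial.X p.2 - MvPolynomial.X p.1) ^ kk)
      = ∏ p ∈ Finset.univ.filter (fun p : Fin N × Fin N => p.1 < p.2),
        (MvPolynomial.X p.2 - MvPolynomial.X p.1) ^ kk := by
  rw [map_prod]
  simp only [map_pow, map_sub, MvPolynomial.map_X]

/-- Expectation of a product of independent integrable random variables. -/
lemma aux_indep_prod {Ω : Type*} [MeasurableSpace Ω] (P : Measure Ω) [IsProbabilityMeasure P]
    {ι : Type*} (Y : ι → Ω → ℝ)
    (hmeas : ∀ i, Measurable (Y i))
    (hindep : iIndepFun Y P)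
    (hint : ∀ i, Integrable (Y i) P) (s : Finset ι) :
    Integrable (fun ω => ∏ i ∈ s, Y i ω) P ∧
      ∫ ω, ∏ i ∈ s, Y i ω ∂P = ∏ i ∈ s, ∫ ω, Y i ω ∂P := by
  classical
  induction s using Finset.induction with
  | empty => simp
  | @insert a s ha ih =>
    have hsa : IndepFun (fun ω => ∏ i ∈ s, Y i ω) (Y a) P := by
      have := hindep.indepFun_finsetProd_of_notMem hmeas ha
      simpa [Finset.prod_fn] using this
    have hint' : Integrable ((fun ω => ∏ i ∈ s, Y i ω) * Y a) P :=
      hsa.integrable_mul ih.1 (hint a)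
    constructor
    · have : (fun ω => ∏ i ∈ insert a s, Y i ω)
          = (fun ω => ∏ i ∈ s, Y i ω) * Y a := by
        funext ω
        simp [Finset.prod_insert ha, mul_comm]
      rw [this]; exact hint'
    · have hmul := hsa.integral_fun_mul_eq_mul_integral ih.1.aestronglyMeasurable (hint a).aestronglyMeasurable
      calc ∫ ω, ∏ i ∈ insert a s, Y i ω ∂P
          = ∫ ω, (∏ i ∈ s, Y i ω) * Y a ω ∂P := by
            congr 1; funext ω; simp [Finset.prod_insert ha, mul_comm]
        _ = (∫ ω, ∏ i ∈ s, Y i ω ∂P) * ∫ ω, Y a ω ∂P := hmul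
        _ = ∏ i ∈ insert a s, ∫ ω, Y i ω ∂P := by
            rw [Finset.prod_insert ha, ih.2, mul_comm]

/-- counting pairs touching a given index -/
lemma aux_card_pairs {N : ℕ} (i : Fin N) :
    (((Finset.univ.filter (fun p : Fin N × Fin N => p.1 < p.2)).filter
      (fun p => p.1 = i ∨ p.2 = i)).card) = N - 1 := by
  classical
  have hset : ((Finset.univ.filter (fun p : Fin N × Fin N => p.1 < p.2)).filter
      (fun p => p.1 = i ∨ p.2 = i))
      = ((Finset.Iio i).image fun a => (a, i)) ∪ ((Finset.Ioi i).image fun b => (i, b)) := by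
    ext p
    simp only [Finset.mem_filter, Finset.mem_univ, true_and, Finset.mem_union,
      Finset.mem_image, Finset.mem_Iio, Finset.mem_Ioi]
    constructor
    · rintro ⟨hlt, h | h⟩
      · right; exact ⟨p.2, by simpa [h] using hlt, by simp [← h]⟩
      · left; exact ⟨p.1, by simpa [h] using hlt, by simp [← h]⟩
    · rintro (⟨a, hai, rfl⟩ | ⟨b, hib, rfl⟩)
      · exact ⟨hai, Or.inr rfl⟩
      · exact ⟨hib, Or.inl rfl⟩
  rw [hset, Finset.card_union_of_disjoint, Finset.card_image_of_injective,
    Finset.card_image_of_injective, Fin.card_Iio, Fin.card_Ioi]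
  · have := i.isLt; omega
  · intro x y h; simpa using h
  · intro x y h; simpa using h
  · simp only [Finset.disjoint_left, Finset.mem_image, Finset.mem_Iio, Finset.mem_Ioi]
    rintro p ⟨a, hai, rfl⟩ ⟨b, hib, h⟩
    simp only [Prod.mk.injEq] at h
    exact absurd (h.1 ▸ hai) (lt_irrefl i)

theorem stmt17 {Ω : Type*} [MeasurableSpace Ω] (P : Measure Ω) [IsProbabilityMeasure P]
    (N n : ℕ) (hN : 1 ≤ N) (hn : 1 ≤ n)
    (X : Fin N → Ω → ℝ) (hmeas : ∀ i, Measurable (X i))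
    (hindep : iIndepFun X P)
    (hid : ∀ i, IdentDistrib (X i) (X ⟨0, hN⟩) P P)
    (hmom : ∀ j : ℕ, Integrable (fun ω => X ⟨0, hN⟩ ω ^ j) P)
    (ζ c : Fin n → ℂ)
    (ha : ∀ j : ℕ, j ≤ 2 * n - 1 →
      ((∫ ω, X ⟨0, hN⟩ ω ^ j ∂P : ℝ) : ℂ) = ∑ i, c i * ζ i ^ j) :
    ∀ k : ℕ, 1 ≤ k → 2 * k * (N - 1) ≤ 2 * n - 1 →
      ((∫ ω, (vdm fun i => X i ω) ^ (2 * k) ∂P : ℝ) : ℂ) =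
        ∑ idx : Fin N → Fin n,
          (∏ j, c (idx j)) * (vdm fun j => ζ (idx j)) ^ (2 * k) := by
  classical
  intro k hk hkn
  set S : Finset (Fin N × Fin N) :=
    Finset.univ.filter (fun p : Fin N × Fin N => p.1 < p.2) with hS
  set QR : MvPolynomial (Fin N) ℝ :=
    ∏ p ∈ S, (MvPolynomial.X p.2 - MvPolynomial.X p.1) ^ (2 * k) with hQR
  -- degree bound
  have hdeg : ∀ m ∈ QR.support, ∀ i : Fin N, m i ≤ 2 * n - 1 := by
    intro m hm i
    have h1 : m i ≤ MvPolynomial.degreeOf i QR := MvPolynomial.monomial_le_degreeOf i hm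
    have h2 : MvPolynomial.degreeOf i QR ≤
        ∑ p ∈ S, MvPolynomial.degreeOf i
          ((MvPolynomial.X p.2 - MvPolynomial.X p.1 : MvPolynomial (Fin N) ℝ) ^ (2 * k)) := by
      rw [hQR]; exact MvPolynomial.degreeOf_prod_le i S _
    have h3 : ∀ p ∈ S, MvPolynomial.degreeOf i
        ((MvPolynomial.X p.2 - MvPolynomial.X p.1 : MvPolynomial (Fin N) ℝ) ^ (2 * k))
        ≤ if p.1 = i ∨ p.2 = i then 2 * k else 0 := by
      intro p hpS
      have hps : p.1 ≠ p.2 := ne_of_lt (by simpa [hS] using hpS)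
      refine le_trans (MvPolynomial.degreeOf_pow_le i _ _) ?_
      have h4 : MvPolynomial.degreeOf i
          (MvPolynomial.X p.2 - MvPolynomial.X p.1 : MvPolynomial (Fin N) ℝ)
          ≤ if p.1 = i ∨ p.2 = i then 1 else 0 := by
        refine le_trans (MvPolynomial.degreeOf_sub_le i _ _) ?_
        rw [MvPolynomial.degreeOf_X, MvPolynomial.degreeOf_X, max_le_iff]
        constructor <;> split_ifs <;> simp_all
      by_cases hp : p.1 = i ∨ p.2 = i
      · simp only [hp, if_true] at h4 ⊢
        calc 2 * k * MvPolynomial.degreeOf i _ ≤ 2 * k * 1 :=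
          Nat.mul_le_mul_left _ h4
        _ = 2 * k := by ring
      · simp only [hp, if_false] at h4 ⊢
        simp [Nat.le_zero.mp h4]
    have h5 : ∑ p ∈ S, MvPolynomial.degreeOf i
        ((MvPolynomial.X p.2 - MvPolynomial.X p.1 : MvPolynomial (Fin N) ℝ) ^ (2 * k))
        ≤ 2 * k * (N - 1) := by
      calc ∑ p ∈ S, MvPolynomial.degreeOf i _
          ≤ ∑ p ∈ S, (if p.1 = i ∨ p.2 = i then 2 * k else 0) := Finset.sum_le_sum h3
        _ = ∑ p ∈ S.filter (fun p => p.1 = i ∨ p.2 = i), 2 * k :=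
            (Finset.sum_filter _ _).symm
        _ = (S.filter (fun p => p.1 = i ∨ p.2 = i)).card * (2 * k) := by
            rw [Finset.sum_const, smul_eq_mul]
        _ = (N - 1) * (2 * k) := by rw [hS, aux_card_pairs]
        _ = 2 * k * (N - 1) := by ring
    exact le_trans h1 (le_trans h2 (le_trans h5 hkn))
  -- moments
  set a : ℕ → ℝ := fun j => ∫ ω, X ⟨0, hN⟩ ω ^ j ∂P with haa
  -- for each monomial, independence/integrability facts
  have hfact : ∀ m : Fin N →₀ ℕ,
      Integrable (fun ω => ∏ i, X i ω ^ m i) P ∧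
        ∫ ω, ∏ i, X i ω ^ m i ∂P = ∏ i, a (m i) := by
    intro m
    have hidm : ∀ i, IdentDistrib (fun ω => X i ω ^ m i) (fun ω => X ⟨0, hN⟩ ω ^ m i) P P :=
      fun i => (hid i).comp (measurable_id.pow_const (m i))
    have h := aux_indep_prod P (fun i ω => X i ω ^ m i)
      (fun i => (hmeas i).pow_const (m i))
      (hindep.comp (fun i x => x ^ m i) (fun i => measurable_id.pow_const (m i)))
      (fun i => (hidm i).integrable_iff.mpr (hmom (m i))) Finset.univ
    refine ⟨h.1, h.2.trans ?_⟩
    exact Finset.prod_congr rfl fun i _ => (hidm i).integral_eq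
  -- compute the left-hand side (real integral)
  have hL : ∫ ω, (vdm fun i => X i ω) ^ (2 * k) ∂P
      = ∑ m ∈ QR.support, QR.coeff m * ∏ i, a (m i) := by
    have h1 : ∀ ω : Ω, (vdm fun i => X i ω) ^ (2 * k)
        = ∑ m ∈ QR.support, QR.coeff m * ∏ i, X i ω ^ m i := by
      intro ω
      rw [← aux_eval (kk := 2 * k) (fun i => X i ω), ← hS, ← hQR, MvPolynomial.eval_eq']
    simp_rw [h1]
    rw [integral_finset_sum _ (fun m _ => ((hfact m).1.const_mul _))]
    refine Finset.sum_congr rfl fun m _ => ?_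
    rw [integral_const_mul, (hfact m).2]
  rw [hL]
  push_cast
  -- substitute the moment identity
  have hsub : ∀ m ∈ QR.support, ∀ i : Fin N,
      ((a (m i) : ℝ) : ℂ) = ∑ j, c j * ζ j ^ (m i) :=
    fun m hm i => ha (m i) (hdeg m hm i)
  -- now everything is algebra over ℂ
  have hRHS : ∀ idx : Fin N → Fin n,
      (vdm fun j => ζ (idx j)) ^ (2 * k)
        = ∑ m ∈ QR.support, ((QR.coeff m : ℝ) : ℂ) * ∏ i, ζ (idx i) ^ m i := by
    intro idx
    rw [← aux_eval (kk := 2 * k) (fun j => ζ (idx j)), ← aux_map (N := N) (kk := 2 * k),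
      ← hS, ← hQR, MvPolynomial.eval_eq',
      MvPolynomial.support_map_of_injective _ (algebraMap ℝ ℂ).injective]
    refine Finset.sum_congr rfl fun m _ => ?_
    rw [MvPolynomial.coeff_map, Complex.coe_algebraMap]
  calc (∑ m ∈ QR.support, ((QR.coeff m : ℝ) : ℂ) * ∏ i, ((a (m i) : ℝ) : ℂ))
      = ∑ m ∈ QR.support, ((QR.coeff m : ℝ) : ℂ) *
          ∑ idx : Fin N → Fin n, ∏ i, (c (idx i) * ζ (idx i) ^ m i) := by
        refine Finset.sum_congr rfl fun m hm => ?_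
        congr 1
        calc (∏ i, ((a (m i) : ℝ) : ℂ)) = ∏ i, ∑ j, c j * ζ j ^ m i :=
              Finset.prod_congr rfl fun i _ => hsub m hm i
          _ = ∑ idx ∈ Fintype.piFinset (fun _ : Fin N => (Finset.univ : Finset (Fin n))),
                ∏ i, c (idx i) * ζ (idx i) ^ m i := Finset.prod_univ_sum _ _
          _ = ∑ idx : Fin N → Fin n, ∏ i, (c (idx i) * ζ (idx i) ^ m i) := by
              rw [Fintype.piFinset_univ]
    _ = ∑ idx : Fin N → Fin n, (∏ j, c (idx j)) *
          ∑ m ∈ QR.support, ((QR.coeff m : ℝ) : ℂ) * ∏ i, ζ (idx i) ^ m i := by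
        simp_rw [Finset.mul_sum, Finset.prod_mul_distrib]
        rw [Finset.sum_comm]
        refine Finset.sum_congr rfl fun idx _ => ?_
        refine Finset.sum_congr rfl fun m _ => ?_
        ring
    _ = ∑ idx : Fin N → Fin n,
          (∏ j, c (idx j)) * (vdm fun j => ζ (idx j)) ^ (2 * k) := by
        refine Finset.sum_congr rfl fun idx _ => ?_
        rw [hRHS idx]
end
end

section
/- Let X be a real random variable with finite moments of all orders, let n ≥ 1, and let p be a real polynomial of degree exactly n such that E[X^k · p(X)] = 0 for every k = 0, 1, …, n−1. Suppose p has n pairwise distinct real roots r₁, …, r_n. Then there exist unique real numbers c₁, …, c_n such that, for every x ∈ ℝ, E[(X − x)^{2n−1}] = ∑_{j=1}^n c_j · (r_j − x)^{2n−1}. -/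
open MeasureTheory ProbabilityTheory Filter
open scoped BigOperators Topology

noncomputable section

/-- Integrability of polynomial evaluations. -/
lemma aux_int_eval {Ω : Type*} [MeasurableSpace Ω] (P : Measure Ω)
    (X : Ω → ℝ) (hmom : ∀ k : ℕ, Integrable (fun ω => X ω ^ k) P)
    (f : Polynomial ℝ) : Integrable (fun ω => f.eval (X ω)) P := by
  have h : (fun ω => f.eval (X ω)) =
      fun ω => ∑ i ∈ Finset.range (f.natDegree + 1), f.coeff i * X ω ^ i := by
    funext ω; rw [Polynomial.eval_eq_sum_range]
  rw [h]
  exact integrable_finset_sum _ fun i _ => (hmom i).const_mul _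

/-- Integral of a polynomial evaluation in terms of moments. -/
lemma aux_integral_eval {Ω : Type*} [MeasurableSpace Ω] (P : Measure Ω)
    (X : Ω → ℝ) (hmom : ∀ k : ℕ, Integrable (fun ω => X ω ^ k) P)
    (f : Polynomial ℝ) : ∫ ω, f.eval (X ω) ∂P
      = ∑ i ∈ Finset.range (f.natDegree + 1), f.coeff i * ∫ ω, X ω ^ i ∂P := by
  have h : (fun ω => f.eval (X ω)) =
      fun ω => ∑ i ∈ Finset.range (f.natDegree + 1), f.coeff i * X ω ^ i := by
    funext ω; rw [Polynomial.eval_eq_sum_range]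
  rw [h, integral_finset_sum _ fun i _ => (hmom i).const_mul _]
  simp [integral_const_mul]

theorem stmt18 {Ω : Type*} [MeasurableSpace Ω] (P : Measure Ω) [IsProbabilityMeasure P]
    (X : Ω → ℝ) (hmeas : Measurable X)
    (hmom : ∀ k : ℕ, Integrable (fun ω => X ω ^ k) P)
    (n : ℕ) (hn : 1 ≤ n)
    (p : Polynomial ℝ) (hdeg : p.natDegree = n)
    (horth : ∀ k : ℕ, k < n → ∫ ω, X ω ^ k * p.eval (X ω) ∂P = 0)
    (r : Fin n → ℝ) (hrinj : Function.Injective r)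
    (hroot : ∀ j, p.eval (r j) = 0) :
    ∃! cvec : Fin n → ℝ, ∀ x : ℝ,
      ∫ ω, (X ω - x) ^ (2 * n - 1) ∂P = ∑ j, cvec j * (r j - x) ^ (2 * n - 1) := by
  classical
  set N := 2 * n - 1 with hNdef
  have hNn : n ≤ N := by omega
  set μ : ℕ → ℝ := fun m => ∫ ω, X ω ^ m ∂P with hμ
  -- the Vandermonde matrix
  set V : Matrix (Fin n) (Fin n) ℝ := (Matrix.vandermonde r).transpose with hV
  have hVapp : ∀ i j, V i j = r j ^ (i : ℕ) := fun i j => rfl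
  have hdetV : V.det ≠ 0 := by
    rw [hV, Matrix.det_transpose, Matrix.det_vandermonde]
    refine Finset.prod_ne_zero_iff.2 fun i _ => Finset.prod_ne_zero_iff.2 fun j hj => ?_
    have hij : i < j := Finset.mem_Ioi.1 hj
    exact sub_ne_zero.2 fun h => absurd (hrinj h) (Fin.ne_of_gt hij)
  have hVunit : IsUnit V.det := isUnit_iff_ne_zero.mpr hdetV
  -- the quadrature weights
  set cvec : Fin n → ℝ := V⁻¹.mulVec (fun i : Fin n => μ i.1) with hc
  have hVc : ∀ i : Fin n, ∑ j, cvec j * r j ^ (i : ℕ) = μ (i : ℕ) := by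
    intro i
    have h1 : V.mulVec cvec = fun i : Fin n => μ i.1 := by
      rw [hc, Matrix.mulVec_mulVec, Matrix.mul_nonsing_inv V hVunit, Matrix.one_mulVec]
    have := congrFun h1 i
    rw [Matrix.mulVec, dotProduct] at this
    rw [← this]
    exact Finset.sum_congr rfl fun j _ => by rw [hVapp]; ring
  -- normalize p to be monic
  have hp0 : p ≠ 0 := fun h => by simp [h] at hdeg; omega
  have hlc : p.leadingCoeff ≠ 0 := Polynomial.leadingCoeff_ne_zero.2 hp0
  set q : Polynomial ℝ := p * Polynomial.C p.leadingCoeff⁻¹ with hq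
  have hqmonic : q.Monic := Polynomial.monic_mul_leadingCoeff_inv hp0
  have hqdeg : q.natDegree = n := by
    rw [hq, Polynomial.natDegree_mul_C (inv_ne_zero hlc), hdeg]
  have hqroot : ∀ j, q.eval (r j) = 0 := fun j => by
    simp [hq, hroot j]
  have hqorth : ∀ k : ℕ, k < n → ∫ ω, X ω ^ k * q.eval (X ω) ∂P = 0 := by
    intro k hk
    have h1 : (fun ω => X ω ^ k * q.eval (X ω))
        = fun ω => p.leadingCoeff⁻¹ * (X ω ^ k * p.eval (X ω)) := by
      funext ω; simp [hq]; ring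
    rw [h1, integral_const_mul, horth k hk, mul_zero]
  -- orthogonality against all lower-degree polynomials
  have horthpoly : ∀ f : Polynomial ℝ, f.natDegree < n →
      ∫ ω, f.eval (X ω) * q.eval (X ω) ∂P = 0 := by
    intro f hf
    have h1 : (fun ω => f.eval (X ω) * q.eval (X ω))
        = fun ω => ∑ i ∈ Finset.range (f.natDegree + 1),
            f.coeff i * (X ω ^ i * q.eval (X ω)) := by
      funext ω
      rw [Polynomial.eval_eq_sum_range (x := X ω), Finset.sum_mul]
      exact Finset.sum_congr rfl fun i _ => by ring
    have hint : ∀ i : ℕ, Integrable (fun ω => X ω ^ i * q.eval (X ω)) P := by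
      intro i
      have : (fun ω => X ω ^ i * q.eval (X ω))
          = fun ω => ((Polynomial.X ^ i * q : Polynomial ℝ)).eval (X ω) := by
        funext ω; simp
      rw [this]; exact aux_int_eval P X hmom _
    rw [h1, integral_finset_sum _ fun i _ => ((hint i).const_mul _)]
    refine Finset.sum_eq_zero fun i hi => ?_
    rw [integral_const_mul, hqorth i (lt_of_le_of_lt (Finset.mem_range_succ_iff.1 hi) hf),
      mul_zero]
  -- moment matching up to degree N
  have hmomeq : ∀ m : ℕ, m ≤ N → ∑ j, cvec j * r j ^ m = μ m := by
    intro m hm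
    by_cases hmn : m < n
    · exact hVc ⟨m, hmn⟩
    · push_neg at hmn
      set s : Polynomial ℝ := (Polynomial.X : Polynomial ℝ) ^ m %ₘ q with hs
      set d : Polynomial ℝ := (Polynomial.X : Polynomial ℝ) ^ m /ₘ q with hd
      have hdecomp : (Polynomial.X : Polynomial ℝ) ^ m = s + q * d :=
        (Polynomial.modByMonic_add_div _ q).symm
      have hsdeg : s.natDegree < n := by
        have h1 : s.degree < q.degree := Polynomial.degree_modByMonic_lt _ hqmonic
        have h2 : q.degree = (n : ℕ∞) := by
          rw [Polynomial.degree_eq_natDegree hqmonic.ne_zero, hqdeg]; rfl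
        by_cases hs0 : s = 0
        · rw [hs0]; simp only [Polynomial.natDegree_zero]; omega
        · have := Polynomial.natDegree_lt_natDegree hs0 h1
          rwa [hqdeg] at this
      have hddeg : d.natDegree < n := by
        rw [hd, Polynomial.natDegree_divByMonic _ hqmonic, Polynomial.natDegree_X_pow, hqdeg]
        omega
      -- ∫ s.eval = ∑_j cvec j * s.eval (r j)
      have hsint : ∫ ω, s.eval (X ω) ∂P = ∑ j, cvec j * s.eval (r j) := by
        rw [aux_integral_eval P X hmom]
        have h1 : ∀ i ∈ Finset.range (s.natDegree + 1),
            s.coeff i * ∫ ω, X ω ^ i ∂P = ∑ j, cvec j * (s.coeff i * r j ^ i) := by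
          intro i hi
          have hin : i < n := lt_of_le_of_lt (Finset.mem_range_succ_iff.1 hi) hsdeg
          rw [show (∫ ω, X ω ^ i ∂P) = μ i from rfl, ← hVc ⟨i, hin⟩, Finset.mul_sum]
          exact Finset.sum_congr rfl fun j _ => by ring
        rw [Finset.sum_congr rfl h1, Finset.sum_comm]
        refine Finset.sum_congr rfl fun j _ => ?_
        rw [Polynomial.eval_eq_sum_range, Finset.mul_sum]
      have hμm : μ m = ∫ ω, s.eval (X ω) ∂P := by
        have hintdq : Integrable (fun ω => d.eval (X ω) * q.eval (X ω)) P := by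
          have h2 : (fun ω => d.eval (X ω) * q.eval (X ω))
              = fun ω => (d * q).eval (X ω) := by funext ω; simp
          rw [h2]; exact aux_int_eval P X hmom _
        have h1 : (fun ω => X ω ^ m)
            = fun ω => s.eval (X ω) + d.eval (X ω) * q.eval (X ω) := by
          funext ω
          have := congrArg (Polynomial.eval (X ω)) hdecomp
          simpa [mul_comm] using this
        calc μ m = ∫ ω, (s.eval (X ω) + d.eval (X ω) * q.eval (X ω)) ∂P := by
              show (∫ ω, X ω ^ m ∂P) = _
              rw [h1]
          _ = ∫ ω, s.eval (X ω) ∂P := by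
              rw [integral_add (aux_int_eval P X hmom s) hintdq, horthpoly d hddeg, add_zero]
      have hrj : ∀ j, r j ^ m = s.eval (r j) := by
        intro j
        have := congrArg (Polynomial.eval (r j)) hdecomp
        simpa [hqroot j] using this
      calc ∑ j, cvec j * r j ^ m = ∑ j, cvec j * s.eval (r j) :=
            Finset.sum_congr rfl fun j _ => by rw [hrj j]
        _ = μ m := by rw [← hsint, hμm]
  -- the quadrature identity
  have hquad : ∀ x : ℝ,
      ∫ ω, (X ω - x) ^ N ∂P = ∑ j, cvec j * (r j - x) ^ N := by
    intro x
    have hexp : ∀ a : ℝ, (a - x) ^ N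
        = ∑ m ∈ Finset.range (N + 1),
            ((-1 : ℝ) ^ (m + N) * x ^ (N - m) * (N.choose m : ℝ)) * a ^ m := by
      intro a
      rw [sub_pow]
      exact Finset.sum_congr rfl fun m _ => by ring
    calc ∫ ω, (X ω - x) ^ N ∂P
        = ∫ ω, ∑ m ∈ Finset.range (N + 1),
            ((-1 : ℝ) ^ (m + N) * x ^ (N - m) * (N.choose m : ℝ)) * X ω ^ m ∂P := by
          simp only [hexp]
      _ = ∑ m ∈ Finset.range (N + 1),
            ((-1 : ℝ) ^ (m + N) * x ^ (N - m) * (N.choose m : ℝ)) * μ m := by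
          rw [integral_finset_sum _ fun m _ => (hmom m).const_mul _]
          simp [integral_const_mul, hμ]
      _ = ∑ m ∈ Finset.range (N + 1), ∑ j,
            cvec j * ((-1 : ℝ) ^ (m + N) * x ^ (N - m) * (N.choose m : ℝ) * r j ^ m) := by
          refine Finset.sum_congr rfl fun m hm => ?_
          rw [← hmomeq m (Finset.mem_range_succ_iff.1 hm), Finset.mul_sum]
          exact Finset.sum_congr rfl fun j _ => by ring
      _ = ∑ j, cvec j * (r j - x) ^ N := by
          rw [Finset.sum_comm]
          refine Finset.sum_congr rfl fun j _ => ?_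
          rw [hexp (r j), Finset.mul_sum]
  refine ⟨cvec, hquad, ?_⟩
  -- uniqueness
  intro c' hc'
  have hdiff : ∀ x : ℝ, ∑ j, (c' j - cvec j) * (r j - x) ^ N = 0 := by
    intro x
    have := (hc' x).symm.trans (hquad x)
    rw [← sub_eq_zero] at this
    rw [← this, ← Finset.sum_sub_distrib]
    exact Finset.sum_congr rfl fun j _ => by ring
  set dv : Fin n → ℝ := fun j => c' j - cvec j with hdv
  -- polynomial identity
  set g : Polynomial ℝ := ∑ j, Polynomial.C (dv j) * (Polynomial.X - Polynomial.C (r j)) ^ N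
    with hg
  have hg0 : g = 0 := by
    apply Polynomial.funext
    intro x
    rw [hg]
    simp only [Polynomial.eval_finset_sum, Polynomial.eval_mul, Polynomial.eval_pow,
      Polynomial.eval_sub, Polynomial.eval_X, Polynomial.eval_C, Polynomial.eval_zero]
    have h1 : ∀ j : Fin n, dv j * (x - r j) ^ N = (-1 : ℝ) ^ N * (dv j * (r j - x) ^ N) := by
      intro j
      rw [show x - r j = -(r j - x) by ring, neg_pow]
      ring
    rw [Finset.sum_congr rfl fun j _ => h1 j, ← Finset.mul_sum, hdiff x, mul_zero]
  have hmom0 : ∀ i : Fin n, ∑ j, dv j * r j ^ (i : ℕ) = 0 := by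
    intro i
    have hiN : (i : ℕ) ≤ N := le_trans (le_of_lt i.isLt) hNn
    have h1 := congrArg (fun f => Polynomial.coeff f (N - (i : ℕ))) hg0
    simp only [Polynomial.coeff_zero, hg, Polynomial.finset_sum_coeff] at h1
    have h2 : ∀ j : Fin n,
        (Polynomial.C (dv j) * (Polynomial.X - Polynomial.C (r j)) ^ N).coeff (N - (i : ℕ))
          = dv j * ((-(r j)) ^ (i : ℕ) * (N.choose (N - (i : ℕ)) : ℝ)) := by
      intro j
      rw [Polynomial.coeff_C_mul, show Polynomial.X - Polynomial.C (r j)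
        = Polynomial.X + Polynomial.C (-(r j)) by rw [Polynomial.C_neg, sub_eq_add_neg], Polynomial.coeff_X_add_C_pow]
      rw [show N - (N - (i : ℕ)) = (i : ℕ) by omega]
    rw [Finset.sum_congr rfl fun j _ => h2 j] at h1
    have hchoose : (N.choose (N - (i : ℕ)) : ℝ) ≠ 0 :=
      Nat.cast_ne_zero.2 (Nat.choose_pos (by omega)).ne'
    have h4 : ((-1 : ℝ) ^ (i : ℕ) * (N.choose (N - (i : ℕ)) : ℝ))
        * ∑ j, dv j * r j ^ (i : ℕ) = 0 := by
      rw [Finset.mul_sum, ← h1]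
      refine Finset.sum_congr rfl fun j _ => ?_
      rw [neg_pow]
      ring
    have h5 : ((-1 : ℝ) ^ (i : ℕ) * (N.choose (N - (i : ℕ)) : ℝ)) ≠ 0 :=
      mul_ne_zero (pow_ne_zero _ (by norm_num)) hchoose
    exact (mul_eq_zero.1 h4).resolve_left h5
  -- conclude d = 0 via Vandermonde
  have hVd : V.mulVec dv = 0 := by
    funext i
    rw [Matrix.mulVec, dotProduct]
    rw [show (0 : Fin n → ℝ) i = 0 from rfl, ← hmom0 i]
    exact Finset.sum_congr rfl fun j _ => by rw [hVapp]; ring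
  have hd0 : dv = 0 := by
    have : V⁻¹.mulVec (V.mulVec dv) = V⁻¹.mulVec 0 := by rw [hVd]
    rwa [Matrix.mulVec_mulVec, Matrix.nonsing_inv_mul V hVunit, Matrix.one_mulVec,
      Matrix.mulVec_zero] at this
  funext j
  have := congrFun hd0 j
  simp only [hdv, Pi.zero_apply, sub_eq_zero] at this
  exact this
end
end
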